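/- arXiv:2202.01345 — 5 statements merged into one kernel-verified Lean document; each statement's English description precedes it below -/
import Mathlib

section
/- Let m ∈ 𝓜. Then for every integer k with 1 ≤ k ≤ d(m), lim_{x→0+} G^{k+1}_m(x)/G^k_m(x) = 0 (the ratio is well defined for small x > 0 since (−1)^k G^k_m > 0 on (0,1] when m is strictly increasing). -/
open MeasureTheory Filter Topology Set
open scoped ENNReal NNReal

structure MString where
  m : ℝ → ℝ
  strict_mono : StrictMonoOn m (Set.Ioi 0)
  right_cont : ∀ x : ℝ, 0 < x → ContinuousWithinAt m (Set.Ici x) x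
  μ : Measure ℝ
  stieltjes : ∀ a b : ℝ, 0 < a → a ≤ b → μ (Set.Ioc a b) = ENNReal.ofReal (m b - m a)
  int_fin : ∫⁻ x in Set.Ioc (0:ℝ) 1, ENNReal.ofReal x ∂μ < ⊤

namespace MString

noncomputable def F (S : MString) (x : ℝ) : ℝ := ∫ y in Set.Ioc (0:ℝ) x, y ∂S.μ

noncomputable def E (S : MString) (d : ℕ) (lam x : ℝ) : ℝ :=
  (1 / (d.factorial : ℝ)) * (S.F x) ^ d * Real.exp (lam * S.F x)

noncomputable def sBul (f : ℝ → ℝ) (x : ℝ) : ℝ := ∫ y in (0:ℝ)..x, f y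

noncomputable def mBul (S : MString) (f : ℝ → ℝ) (x : ℝ) : ℝ :=
  ∫ y in Set.Ioc (0:ℝ) x, f y ∂S.μ

noncomputable def smIter (S : MString) : ℕ → (ℝ → ℝ) → ℝ → ℝ
  | 0, f => f
  | (k+1), f => sBul (mBul S (smIter S k f))

noncomputable def msIter (S : MString) : ℕ → (ℝ → ℝ) → ℝ → ℝ
  | 0, f => f
  | (k+1), f => mBul S (sBul (msIter S k f))

noncomputable def psi (S : MString) (lam x : ℝ) : ℝ :=
  ∑' k : ℕ, lam ^ k * smIter S k id x

noncomputable def psiPlus (S : MString) (lam x : ℝ) : ℝ :=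
  1 + ∑' k : ℕ, lam ^ (k + 1) * mBul S (smIter S k id) x

noncomputable def g (S : MString) (lam x : ℝ) : ℝ :=
  psi S lam x * ∫ y in Set.Ioi x, (psi S lam y ^ 2)⁻¹

noncomputable def mtilde (S : MString) (x : ℝ) : ℝ := S.m x - S.m 1

noncomputable def jInt (S : MString) (f : ℝ → ℝ) (y : ℝ) : ℝ :=
  if y ≤ 1 then ∫ z in Set.Ioc y 1, f z ∂S.μ else - ∫ z in Set.Ioc 1 y, f z ∂S.μ

noncomputable def G (S : MString) : ℕ → ℝ → ℝ
  | 0 => fun _ => 0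
  | 1 => fun x => ∫ y in (0:ℝ)..x, mtilde S y
  | (k+2) => fun x => - ∫ y in (0:ℝ)..x, jInt S (G S (k+1)) y

noncomputable def GBig (S : MString) (x : ℝ) : ℝ := ∫ y in (0:ℝ)..x, S.m y

noncomputable def intGdm (S : MString) (k : ℕ) : ℝ≥0∞ :=
  ∫⁻ x in Set.Ioc (0:ℝ) 1, ENNReal.ofReal ((-1 : ℝ) ^ k * G S k x) ∂S.μ

open scoped Classical in
noncomputable def dIdx (S : MString) : ℕ∞ :=
  if BddBelow (S.m '' Set.Ioc (0:ℝ) 1) then 0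
  else sInf {n : ℕ∞ | ∃ k : ℕ, n = (k : ℕ∞) ∧ 1 ≤ k ∧ intGdm S k < ⊤}

noncomputable def phi (S : MString) (d : ℕ) (lam x : ℝ) : ℝ :=
  1 + (∑ k ∈ Finset.Icc 1 d, lam ^ k * G S k x)
    + ∑' k : ℕ, lam ^ (d + k + 1) * smIter S (k + 1) (G S d) x

noncomputable def c (S : MString) (d : ℕ) (lam : ℝ) : ℝ :=
  (phi S d lam 1 - g S lam 1) / psi S lam 1

noncomputable def Sd (S : MString) (d : ℕ) (x : ℝ) : ℝ :=
  sSup ((fun y => |mBul S (G S d) y|) '' Set.Icc 0 x)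

variable (S : MString)

/-- ENNReal version of `(-1)^k G^k`. -/
noncomputable def AE : ℕ → ℝ → ℝ≥0∞
  | 0 => fun _ => 1
  | (k+1) => fun x => ∫⁻ y in Set.Ioc (0:ℝ) x, (∫⁻ z in Set.Ioc y 1, AE k z ∂S.μ)

noncomputable def HE (k : ℕ) (y : ℝ) : ℝ≥0∞ := ∫⁻ z in Set.Ioc y 1, AE S k z ∂S.μ

lemma AE_zero (x : ℝ) : AE S 0 x = 1 := rfl

lemma AE_succ (k : ℕ) (x : ℝ) :
    AE S (k+1) x = ∫⁻ y in Set.Ioc (0:ℝ) x, HE S k y := by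
  rw [AE]; rfl

lemma HE_antitone (k : ℕ) : Antitone (HE S k) :=
  fun _ _ h => lintegral_mono_set (Ioc_subset_Ioc_left h)

lemma HE_measurable (k : ℕ) : Measurable (HE S k) :=
  (HE_antitone S k).measurable

lemma AE_mono : ∀ k : ℕ, Monotone (AE S k)
  | 0 => monotone_const
  | (k+1) => fun _ _ h => lintegral_mono_set (Ioc_subset_Ioc_right h)

lemma AE_measurable : ∀ k : ℕ, Measurable (AE S k)
  | 0 => measurable_const
  | (k+1) => (AE_mono S (k+1)).measurable

lemma HE_zero_eq (y : ℝ) : HE S 0 y = S.μ (Set.Ioc y 1) := by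
  simp [HE, AE_zero]

lemma m_le_m {x y : ℝ} (hx : 0 < x) (hy : 0 < y) (hxy : x ≤ y) : S.m x ≤ S.m y :=
  S.strict_mono.monotoneOn hx hy hxy

lemma mu_Ioc_eq {y : ℝ} (hy : 0 < y) (hy1 : y ≤ 1) :
    S.μ (Set.Ioc y 1) = ENNReal.ofReal (S.m 1 - S.m y) := S.stieltjes y 1 hy hy1

lemma mu_Ioc_lt_top {y : ℝ} (hy : 0 < y) : S.μ (Set.Ioc y 1) < ⊤ := by
  rcases le_total y 1 with h | h
  · rw [mu_Ioc_eq S hy h]; exact ENNReal.ofReal_lt_top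
  · rw [Set.Ioc_eq_empty (by linarith : ¬ y < 1)]; simp

lemma sigmaFinite_restrict : SigmaFinite (S.μ.restrict (Set.Ioc 0 1)) := by
  refine ⟨⟨⟨fun n => Set.Ioc (1/(n+1):ℝ) 1 ∪ (Set.Ioc (0:ℝ) 1)ᶜ, fun _ => trivial, ?_, ?_⟩⟩⟩
  · intro n
    have hpos : (0:ℝ) < 1/(n+1) := by positivity
    have hmeas : MeasurableSet (Set.Ioc (1/(n+1):ℝ) 1 ∪ (Set.Ioc (0:ℝ) 1)ᶜ) :=
      measurableSet_Ioc.union measurableSet_Ioc.compl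
    rw [Measure.restrict_apply hmeas]
    have hset : (Set.Ioc (1/(n+1):ℝ) 1 ∪ (Set.Ioc (0:ℝ) 1)ᶜ) ∩ Set.Ioc 0 1
        = Set.Ioc (1/(n+1):ℝ) 1 := by
      rw [Set.union_inter_distrib_right, Set.compl_inter_self, Set.union_empty,
        Set.inter_eq_left]
      exact Set.Ioc_subset_Ioc_left hpos.le
    rw [hset, S.stieltjes _ 1 hpos (by
      rw [div_le_one (by positivity)]; linarith [Nat.cast_nonneg (α := ℝ) n])]
    exact ENNReal.ofReal_lt_top
  · rw [Set.eq_univ_iff_forall]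
    intro x
    by_cases hx : x ∈ Set.Ioc (0:ℝ) 1
    · obtain ⟨n, hn⟩ := exists_nat_one_div_lt hx.1
      exact Set.mem_iUnion.2 ⟨n, Or.inl ⟨hn, hx.2⟩⟩
    · exact Set.mem_iUnion.2 ⟨0, Or.inr hx⟩

lemma Ifin : ∫⁻ y in Set.Ioc (0:ℝ) 1, S.μ (Set.Ioc y 1) ≠ ⊤ := by
  haveI := sigmaFinite_restrict S
  set f : ℝ → ℝ → ℝ≥0∞ := fun y z => {p : ℝ × ℝ | p.1 < p.2}.indicator 1 (y, z) with hf
  have hmeas : Measurable (Function.uncurry f) := by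
    have : Function.uncurry f = {p : ℝ × ℝ | p.1 < p.2}.indicator 1 := rfl
    rw [this]
    exact measurable_const.indicator (measurableSet_lt measurable_fst measurable_snd)
  have key : ∫⁻ y in Set.Ioc (0:ℝ) 1, S.μ (Set.Ioc y 1)
      = ∫⁻ z in Set.Ioc (0:ℝ) 1, ENNReal.ofReal z ∂S.μ := by
    have h1 : ∫⁻ y in Set.Ioc (0:ℝ) 1, S.μ (Set.Ioc y 1)
        = ∫⁻ y, (∫⁻ z, f y z ∂(S.μ.restrict (Set.Ioc 0 1))) ∂(volume.restrict (Set.Ioc 0 1)) := by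
      refine lintegral_congr_ae ?_
      filter_upwards [ae_restrict_mem measurableSet_Ioc] with y hy
      have hind : ∀ z : ℝ, f y z = (Set.Ioi y).indicator 1 z := by
        intro z; simp [hf, Set.indicator_apply, Set.mem_Ioi]
      simp_rw [hind]
      rw [lintegral_indicator_one measurableSet_Ioi,
        Measure.restrict_apply measurableSet_Ioi]
      congr 1
      apply Set.eq_of_subset_of_subset
      · intro z hz
        have h := Set.mem_Ioc.1 hz
        exact ⟨Set.mem_Ioi.2 h.1, Set.mem_Ioc.2 ⟨hy.1.trans h.1, h.2⟩⟩
      · intro z hz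
        exact Set.mem_Ioc.2 ⟨Set.mem_Ioi.1 hz.1, (Set.mem_Ioc.1 hz.2).2⟩
    have h2 : ∫⁻ z, (∫⁻ y, f y z ∂(volume.restrict (Set.Ioc 0 1))) ∂(S.μ.restrict (Set.Ioc 0 1))
        = ∫⁻ z in Set.Ioc (0:ℝ) 1, ENNReal.ofReal z ∂S.μ := by
      refine lintegral_congr_ae ?_
      filter_upwards [ae_restrict_mem measurableSet_Ioc] with z hz
      have hind : ∀ y : ℝ, f y z = (Set.Iio z).indicator 1 y := by
        intro y; simp [hf, Set.indicator_apply, Set.mem_Iio]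
      simp_rw [hind]
      rw [lintegral_indicator_one measurableSet_Iio,
        Measure.restrict_apply measurableSet_Iio]
      have : Set.Iio z ∩ Set.Ioc 0 1 = Set.Ioo 0 z := by
        apply Set.eq_of_subset_of_subset
        · intro y hy
          exact Set.mem_Ioo.2 ⟨(Set.mem_Ioc.1 hy.2).1, Set.mem_Iio.1 hy.1⟩
        · intro y hy
          have h := Set.mem_Ioo.1 hy
          exact ⟨Set.mem_Iio.2 h.2, Set.mem_Ioc.2 ⟨h.1, h.2.le.trans hz.2⟩⟩
      rw [this, Real.volume_Ioo, sub_zero]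
    rw [h1, lintegral_lintegral_swap hmeas.aemeasurable, h2]
  rw [key]
  exact S.int_fin.ne

lemma HE_le (k : ℕ) (y : ℝ) : HE S k y ≤ AE S k 1 * S.μ (Set.Ioc y 1) := by
  calc HE S k y ≤ ∫⁻ z in Set.Ioc y 1, AE S k 1 ∂S.μ :=
        setLIntegral_mono measurable_const (fun z hz => AE_mono S k hz.2)
    _ = AE S k 1 * S.μ (Set.Ioc y 1) := setLIntegral_const _ _

lemma AE_lt_top : ∀ (k : ℕ) {x : ℝ}, x ≤ 1 → AE S k x < ⊤ := by
  intro k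
  induction k with
  | zero => intro x _; simp [AE_zero]
  | succ k IH =>
    intro x hx
    have h1 : AE S (k+1) x ≤ AE S (k+1) 1 := AE_mono S (k+1) hx
    refine h1.trans_lt ?_
    rw [AE_succ]
    have h2 : ∫⁻ y in Set.Ioc (0:ℝ) 1, HE S k y
        ≤ ∫⁻ y in Set.Ioc (0:ℝ) 1, AE S k 1 * S.μ (Set.Ioc y 1) := by
      refine setLIntegral_mono ?_ (fun y _ => HE_le S k y)
      have : Measurable fun y => S.μ (Set.Ioc y 1) := by
        rw [show (fun y => S.μ (Set.Ioc y 1)) = S.HE 0 from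
          funext fun y => (HE_zero_eq S y).symm]
        exact HE_measurable S 0
      exact measurable_const.mul this
    refine h2.trans_lt ?_
    have hmm : Measurable fun y => S.μ (Set.Ioc y 1) := by
      rw [show (fun y => S.μ (Set.Ioc y 1)) = S.HE 0 from
        funext fun y => (HE_zero_eq S y).symm]
      exact HE_measurable S 0
    rw [lintegral_const_mul _ hmm]
    exact ENNReal.mul_lt_top (IH le_rfl) (lt_top_iff_ne_top.2 (Ifin S))

lemma HE_lt_top (k : ℕ) {y : ℝ} (hy : 0 < y) : HE S k y < ⊤ :=
  (HE_le S k y).trans_lt (ENNReal.mul_lt_top (AE_lt_top S k le_rfl) (mu_Ioc_lt_top S hy))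

lemma AE_pos : ∀ (k : ℕ) {x : ℝ}, 0 < x → x ≤ 1 → 0 < AE S k x := by
  intro k
  induction k with
  | zero => intro x _ _; simp [AE_zero]
  | succ k IH =>
    have HE_pos : ∀ {y : ℝ}, y < 1 → 0 < HE S k y := by
      intro y hy
      set t : ℝ := (max y 0 + 1)/2 with ht
      have ht0 : 0 < t := by
        have : (0:ℝ) ≤ max y 0 := le_max_right _ _
        rw [ht]; linarith
      have hmax1 : max y 0 < 1 := max_lt hy one_pos
      have ht1 : t < 1 := by rw [ht]; linarith
      have hyt : y < t := by
        have : y ≤ max y 0 := le_max_left _ _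
        rw [ht]; linarith
      have h1 : AE S k t * S.μ (Set.Ioc t 1) ≤ HE S k y := by
        calc AE S k t * S.μ (Set.Ioc t 1) = ∫⁻ z in Set.Ioc t 1, AE S k t ∂S.μ :=
              (setLIntegral_const _ _).symm
          _ ≤ ∫⁻ z in Set.Ioc t 1, AE S k z ∂S.μ :=
              setLIntegral_mono (AE_measurable S k) (fun z hz => AE_mono S k hz.1.le)
          _ ≤ HE S k y := lintegral_mono_set (Ioc_subset_Ioc_left hyt.le)
      refine lt_of_lt_of_le ?_ h1
      refine ENNReal.mul_pos (IH ht0 ht1.le).ne' ?_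
      rw [mu_Ioc_eq S ht0 ht1.le]
      simp only [ne_eq, ENNReal.ofReal_eq_zero, not_le]
      have := S.strict_mono (Set.mem_Ioi.2 ht0) (Set.mem_Ioi.2 one_pos) ht1
      linarith
    intro x hx0 hx1
    have key : ∀ {x : ℝ}, 0 < x → x < 1 → 0 < AE S (k+1) x := by
      intro x hx0 hx1
      have h1 : HE S k x * ENNReal.ofReal x ≤ AE S (k+1) x := by
        rw [AE_succ]
        calc HE S k x * ENNReal.ofReal x
            = ∫⁻ y in Set.Ioc (0:ℝ) x, HE S k x := by
              rw [setLIntegral_const, Real.volume_Ioc, sub_zero]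
          _ ≤ ∫⁻ y in Set.Ioc (0:ℝ) x, HE S k y :=
              setLIntegral_mono (HE_measurable S k) (fun y hy => HE_antitone S k hy.2)
      refine lt_of_lt_of_le ?_ h1
      exact ENNReal.mul_pos (HE_pos hx1).ne' (by simpa using hx0)
    rcases hx1.lt_or_eq with h | h
    · exact key hx0 h
    · subst h
      exact lt_of_lt_of_le (key one_half_pos one_half_lt_one) (AE_mono S (k+1) (by norm_num))

-- continuation: to be appended inside namespace MString (variable S)

lemma setIntegral_HE (k : ℕ) (x : ℝ) :
    ∫ y in Set.Ioc (0:ℝ) x, (HE S k y).toReal = (AE S (k+1) x).toReal := by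
  rw [AE_succ]
  refine integral_toReal (HE_measurable S k).aemeasurable ?_
  filter_upwards [ae_restrict_mem measurableSet_Ioc] with y hy
  exact HE_lt_top S k hy.1

lemma G_repr : ∀ (k : ℕ) {x : ℝ}, 0 ≤ x → x ≤ 1 →
    G S (k+1) x = (-1:ℝ)^(k+1) * (AE S (k+1) x).toReal := by
  intro k
  induction k with
  | zero =>
    intro x hx0 hx1
    show (∫ y in (0:ℝ)..x, mtilde S y) = _
    rw [intervalIntegral.integral_of_le hx0]
    have hcong : ∀ y ∈ Set.Ioc (0:ℝ) x, mtilde S y = -(HE S 0 y).toReal := by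
      intro y hy
      have hy1 : y ≤ 1 := hy.2.trans hx1
      rw [HE_zero_eq, mu_Ioc_eq S hy.1 hy1, ENNReal.toReal_ofReal
        (by linarith [m_le_m S hy.1 one_pos hy1])]
      show S.m y - S.m 1 = _
      ring
    rw [setIntegral_congr_fun measurableSet_Ioc hcong, integral_neg, setIntegral_HE S 0 x]
    ring
  | succ k IH =>
    intro x hx0 hx1
    show (- ∫ y in (0:ℝ)..x, jInt S (G S (k+1)) y) = _
    rw [intervalIntegral.integral_of_le hx0]
    have hcong : ∀ y ∈ Set.Ioc (0:ℝ) x, jInt S (G S (k+1)) y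
        = (-1:ℝ)^(k+1) * (HE S (k+1) y).toReal := by
      intro y hy
      have hy1 : y ≤ 1 := hy.2.trans hx1
      rw [jInt, if_pos hy1]
      have hcong2 : ∀ z ∈ Set.Ioc y 1, G S (k+1) z = (-1:ℝ)^(k+1) * (AE S (k+1) z).toReal :=
        fun z hz => IH (hy.1.trans hz.1).le hz.2
      rw [setIntegral_congr_fun measurableSet_Ioc hcong2, integral_const_mul]
      congr 1
      refine integral_toReal (AE_measurable S (k+1)).aemeasurable ?_
      filter_upwards [ae_restrict_mem measurableSet_Ioc] with z hz
      exact AE_lt_top S (k+1) hz.2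
    rw [setIntegral_congr_fun measurableSet_Ioc hcong, integral_const_mul,
      setIntegral_HE S (k+1) x, pow_succ]
    ring

lemma sup_tail (μ0 : Measure ℝ) (f : ℝ → ℝ≥0∞) (hf : Measurable f) :
    (⨆ n : ℕ, ∫⁻ z in Set.Ioc (1/(n+1):ℝ) 1, f z ∂μ0) = ∫⁻ z in Set.Ioc (0:ℝ) 1, f z ∂μ0 := by
  have hpos : ∀ n : ℕ, (0:ℝ) < 1/(n+1) := fun n => by positivity
  have hrw : ∀ n : ℕ, ∫⁻ z in Set.Ioc (1/(n+1):ℝ) 1, f z ∂μ0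
      = ∫⁻ z, (Set.Ioc (1/(n+1):ℝ) 1).indicator f z ∂μ0 :=
    fun n => (lintegral_indicator measurableSet_Ioc f).symm
  simp_rw [hrw]
  rw [← lintegral_indicator measurableSet_Ioc f]
  have hsup := lintegral_iSup (μ := μ0)
    (f := fun (n : ℕ) => (Set.Ioc (1/(n+1):ℝ) 1).indicator f)
    (fun n => hf.indicator measurableSet_Ioc)
    (fun n m hnm => Set.indicator_le_indicator_of_subset
      (Set.Ioc_subset_Ioc_left (one_div_le_one_div_of_le (by positivity : (0:ℝ) < (n:ℝ)+1)
        (by exact_mod_cast Nat.succ_le_succ hnm))) (fun _ => zero_le))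
  rw [← hsup]
  congr 1
  funext z
  by_cases hz : z ∈ Set.Ioc (0:ℝ) 1
  · obtain ⟨n, hn⟩ := exists_nat_one_div_lt hz.1
    apply le_antisymm
    · exact iSup_le fun m => Set.indicator_le_indicator_of_subset
        (Set.Ioc_subset_Ioc_left (hpos m).le) (fun _ => zero_le) z
    · calc (Set.Ioc (0:ℝ) 1).indicator f z = f z := Set.indicator_of_mem hz f
        _ = (Set.Ioc (1/(n+1):ℝ) 1).indicator f z := (Set.indicator_of_mem (Set.mem_Ioc.2 ⟨hn, hz.2⟩) f).symm
        _ ≤ ⨆ m : ℕ, (Set.Ioc (1/(m+1):ℝ) 1).indicator f z :=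
            le_iSup (fun m : ℕ => (Set.Ioc (1/(m+1):ℝ) 1).indicator f z) n
  · have h0 : ∀ m : ℕ, (Set.Ioc (1/(m+1):ℝ) 1).indicator f z = 0 := fun m =>
      Set.indicator_of_notMem (fun hmem => hz (Set.Ioc_subset_Ioc_left (hpos m).le hmem)) f
    simp only [h0, iSup_const, Set.indicator_of_notMem hz]

lemma head_small (μ0 : Measure ℝ) (f : ℝ → ℝ≥0∞) (hf : Measurable f)
    (hfin : ∫⁻ z in Set.Ioc (0:ℝ) 1, f z ∂μ0 ≠ ⊤) :
    Tendsto (fun x => ∫⁻ z in Set.Ioc (0:ℝ) x, f z ∂μ0) (𝓝[>] (0:ℝ)) (𝓝 0) := by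
  rw [ENNReal.tendsto_nhds_zero]
  intro ε hε
  set T := ∫⁻ z in Set.Ioc (0:ℝ) 1, f z ∂μ0 with hT
  rcases le_or_gt T ε with h | h
  · filter_upwards [Ioo_mem_nhdsGT_of_mem ⟨le_refl (0:ℝ), one_pos⟩] with x hx
    exact (lintegral_mono_set (Set.Ioc_subset_Ioc_right hx.2.le)).trans h
  · have hT0 : T ≠ 0 := by
      intro h0
      rw [h0] at h
      exact absurd h (not_lt.mpr (zero_le : 0 ≤ ε))
    have hsub : T - ε < ⨆ n : ℕ, ∫⁻ z in Set.Ioc (1/(n+1):ℝ) 1, f z ∂μ0 := by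
      rw [sup_tail μ0 f hf]
      exact ENNReal.sub_lt_self hfin hT0 hε.ne'
    obtain ⟨n, hn⟩ := lt_iSup_iff.1 hsub
    have hpos : (0:ℝ) < 1/(n+1) := by positivity
    have hle1 : (1:ℝ)/(n+1) ≤ 1 := by
      rw [div_le_one (by positivity)]; linarith [Nat.cast_nonneg (α := ℝ) n]
    filter_upwards [Ioo_mem_nhdsGT_of_mem ⟨le_refl (0:ℝ), hpos⟩] with x hx
    have hx1 : x ≤ 1 := hx.2.le.trans hle1
    have hsplit : (∫⁻ z in Set.Ioc (0:ℝ) x, f z ∂μ0) + ∫⁻ z in Set.Ioc x 1, f z ∂μ0 = T := by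
      rw [hT, ← Set.Ioc_union_Ioc_eq_Ioc hx.1.le hx1]
      exact (lintegral_union measurableSet_Ioc (Set.Ioc_disjoint_Ioc_of_le le_rfl)).symm
    by_contra hcon
    push_neg at hcon
    have h2 : T - ε < ∫⁻ z in Set.Ioc x 1, f z ∂μ0 :=
      hn.trans_le (lintegral_mono_set (Set.Ioc_subset_Ioc_left hx.2.le))
    have h3 : T < (∫⁻ z in Set.Ioc (0:ℝ) x, f z ∂μ0) + ∫⁻ z in Set.Ioc x 1, f z ∂μ0 := by
      calc T = ε + (T - ε) := (add_tsub_cancel_of_le h.le).symm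
        _ < _ := ENNReal.add_lt_add hcon h2
    rw [hsplit] at h3
    exact lt_irrefl _ h3

lemma tail_big (μ0 : Measure ℝ) (f : ℝ → ℝ≥0∞) (hf : Measurable f)
    (hdiv : ∫⁻ z in Set.Ioc (0:ℝ) 1, f z ∂μ0 = ⊤) (N : ℝ≥0∞) (hN : N ≠ ⊤) :
    ∃ δ : ℝ, 0 < δ ∧ ∀ y ≤ δ, N ≤ ∫⁻ z in Set.Ioc y 1, f z ∂μ0 := by
  have h : N < ⨆ n : ℕ, ∫⁻ z in Set.Ioc (1/(n+1):ℝ) 1, f z ∂μ0 := by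
    rw [sup_tail μ0 f hf, hdiv]
    exact hN.lt_top
  obtain ⟨n, hn⟩ := lt_iSup_iff.1 h
  exact ⟨1/(n+1), by positivity,
    fun y hy => hn.le.trans (lintegral_mono_set (Set.Ioc_subset_Ioc_left hy))⟩

lemma base_prev :
    Tendsto (fun x => (AE S 1 x).toReal / (AE S 0 x).toReal) (𝓝[>] (0:ℝ)) (𝓝 0) := by
  have h1 : Tendsto (fun x => AE S 1 x) (𝓝[>] (0:ℝ)) (𝓝 0) := by
    have hfin : ∫⁻ z in Set.Ioc (0:ℝ) 1, HE S 0 z ≠ ⊤ := by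
      rw [← AE_succ]
      exact (AE_lt_top S 1 le_rfl).ne
    have := head_small volume (HE S 0) (HE_measurable S 0) hfin
    simpa only [← AE_succ] using this
  have h2 : Tendsto (fun x => (AE S 1 x).toReal) (𝓝[>] (0:ℝ)) (𝓝 0) := by
    have := (ENNReal.tendsto_toReal (by simp : (0:ℝ≥0∞) ≠ ⊤)).comp h1
    simpa [Function.comp_def] using this
  simpa only [AE_zero, ENNReal.toReal_one, div_one] using h2

lemma mu_top (hB : ¬ BddBelow (S.m '' Set.Ioc 0 1)) : S.μ (Set.Ioc (0:ℝ) 1) = ⊤ := by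
  by_contra h
  apply hB
  refine ⟨S.m 1 - (S.μ (Set.Ioc (0:ℝ) 1)).toReal, ?_⟩
  rintro v ⟨y, hy, rfl⟩
  have h1 := mu_Ioc_eq S hy.1 hy.2
  have h2 : S.μ (Set.Ioc y 1) ≤ S.μ (Set.Ioc (0:ℝ) 1) :=
    measure_mono (Set.Ioc_subset_Ioc_left hy.1.le)
  have h3 : S.m 1 - S.m y ≤ (S.μ (Set.Ioc (0:ℝ) 1)).toReal := by
    rcases le_or_gt (S.m 1 - S.m y) 0 with hc | hc
    · exact hc.trans ENNReal.toReal_nonneg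
    · have := ENNReal.toReal_mono h (h1 ▸ h2)
      rwa [ENNReal.toReal_ofReal hc.le] at this
  linarith

lemma estimate (k : ℕ)
    (hdiv : ∫⁻ z in Set.Ioc (0:ℝ) 1, AE S k z ∂S.μ = ⊤)
    (hprev : Tendsto (fun x => (AE S (k+1) x).toReal / (AE S k x).toReal) (𝓝[>] (0:ℝ)) (𝓝 0)) :
    Tendsto (fun x => (AE S (k+2) x).toReal / (AE S (k+1) x).toReal) (𝓝[>] (0:ℝ)) (𝓝 0) := by
  rw [NormedAddCommGroup.tendsto_nhds_zero]
  intro e he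
  have hprev' := NormedAddCommGroup.tendsto_nhds_zero.1 hprev (e/2) (half_pos he)
  obtain ⟨δ1, hδ1pos, hδ1sub⟩ := mem_nhdsGT_iff_exists_Ioc_subset.1 hprev'
  set δ : ℝ := min δ1 1 with hδ
  have hδpos : 0 < δ := lt_min hδ1pos one_pos
  have hδ1' : δ ≤ 1 := min_le_right _ _
  have hbound : ∀ z, 0 < z → z ≤ δ → AE S (k+1) z ≤ ENNReal.ofReal (e/2) * AE S k z := by
    intro z hz0 hzδ
    have h1 := hδ1sub ⟨hz0, hzδ.trans (min_le_left _ _)⟩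
    simp only [Set.mem_setOf_eq] at h1
    have hz1 : z ≤ 1 := hzδ.trans hδ1'
    have hkfin : AE S k z ≠ ⊤ := (AE_lt_top S k hz1).ne
    have hk1fin : AE S (k+1) z ≠ ⊤ := (AE_lt_top S (k+1) hz1).ne
    have hb : 0 < (AE S k z).toReal := ENNReal.toReal_pos (AE_pos S k hz0 hz1).ne' hkfin
    rw [Real.norm_eq_abs,
      abs_of_nonneg (div_nonneg ENNReal.toReal_nonneg ENNReal.toReal_nonneg)] at h1
    rw [div_lt_iff₀ hb] at h1
    calc AE S (k+1) z = ENNReal.ofReal (AE S (k+1) z).toReal :=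
          (ENNReal.ofReal_toReal hk1fin).symm
      _ ≤ ENNReal.ofReal (e/2 * (AE S k z).toReal) := ENNReal.ofReal_le_ofReal h1.le
      _ = ENNReal.ofReal (e/2) * ENNReal.ofReal (AE S k z).toReal :=
          ENNReal.ofReal_mul (half_pos he).le
      _ = ENNReal.ofReal (e/2) * AE S k z := by rw [ENNReal.ofReal_toReal hkfin]
  set C : ℝ≥0∞ := HE S (k+1) δ with hC
  have hCfin : C ≠ ⊤ := (HE_lt_top S (k+1) hδpos).ne
  have hHE : ∀ y, 0 < y → y ≤ δ → HE S (k+1) y ≤ ENNReal.ofReal (e/2) * HE S k y + C := by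
    intro y hy0 hyδ
    have hsplit : HE S (k+1) y = (∫⁻ z in Set.Ioc y δ, AE S (k+1) z ∂S.μ) + C := by
      rw [hC]
      show (∫⁻ z in Set.Ioc y 1, AE S (k+1) z ∂S.μ) = _
      rw [← Set.Ioc_union_Ioc_eq_Ioc hyδ hδ1',
        lintegral_union measurableSet_Ioc (Set.Ioc_disjoint_Ioc_of_le le_rfl)]
      rfl
    rw [hsplit]
    refine add_le_add_left ?_ C
    calc (∫⁻ z in Set.Ioc y δ, AE S (k+1) z ∂S.μ)
        ≤ ∫⁻ z in Set.Ioc y δ, ENNReal.ofReal (e/2) * AE S k z ∂S.μ :=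
          setLIntegral_mono (measurable_const.mul (AE_measurable S k))
            (fun z hz => hbound z (hy0.trans hz.1) hz.2)
      _ = ENNReal.ofReal (e/2) * ∫⁻ z in Set.Ioc y δ, AE S k z ∂S.μ :=
          lintegral_const_mul _ (AE_measurable S k)
      _ ≤ ENNReal.ofReal (e/2) * HE S k y :=
          mul_le_mul_right (lintegral_mono_set (Set.Ioc_subset_Ioc_right hδ1')) _
  have hup : ∀ x, 0 < x → x ≤ δ →
      AE S (k+2) x ≤ ENNReal.ofReal (e/2) * AE S (k+1) x + C * ENNReal.ofReal x := by
    intro x hx0 hxδ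
    rw [AE_succ]
    calc (∫⁻ y in Set.Ioc (0:ℝ) x, HE S (k+1) y)
        ≤ ∫⁻ y in Set.Ioc (0:ℝ) x, (ENNReal.ofReal (e/2) * HE S k y + C) :=
          setLIntegral_mono ((measurable_const.mul (HE_measurable S k)).add measurable_const)
            (fun y hy => hHE y hy.1 (hy.2.trans hxδ))
      _ = (∫⁻ y in Set.Ioc (0:ℝ) x, ENNReal.ofReal (e/2) * HE S k y)
            + C * ENNReal.ofReal x := by
          rw [lintegral_add_right _ measurable_const, setLIntegral_const,
            Real.volume_Ioc, sub_zero]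
      _ = ENNReal.ofReal (e/2) * AE S (k+1) x + C * ENNReal.ofReal x := by
          rw [lintegral_const_mul _ (HE_measurable S k), ← AE_succ]
  set N : ℝ := (C.toReal + 1) * 2 / e with hN
  have hCnn : (0:ℝ) ≤ C.toReal := ENNReal.toReal_nonneg
  have hNpos : 0 < N := by
    rw [hN]
    apply div_pos (by nlinarith) he
  obtain ⟨δ2, hδ2pos, hδ2⟩ := tail_big S.μ (AE S k) (AE_measurable S k) hdiv
    (ENNReal.ofReal N) ENNReal.ofReal_ne_top
  have hδmin : 0 < min δ δ2 := lt_min hδpos hδ2pos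
  filter_upwards [Ioo_mem_nhdsGT_of_mem ⟨le_refl (0:ℝ), hδmin⟩] with x hx
  have hx0 : 0 < x := hx.1
  have hxδ : x ≤ δ := (hx.2.trans_le (min_le_left _ _)).le
  have hxδ2 : x ≤ δ2 := (hx.2.trans_le (min_le_right _ _)).le
  have hx1 : x ≤ 1 := hxδ.trans hδ1'
  have hA1fin : AE S (k+1) x ≠ ⊤ := (AE_lt_top S (k+1) hx1).ne
  have hA1pos : 0 < (AE S (k+1) x).toReal :=
    ENNReal.toReal_pos (AE_pos S (k+1) hx0 hx1).ne' hA1fin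
  have hlow : N * x ≤ (AE S (k+1) x).toReal := by
    have h1 : ENNReal.ofReal N * ENNReal.ofReal x ≤ AE S (k+1) x := by
      rw [AE_succ]
      calc ENNReal.ofReal N * ENNReal.ofReal x
          = ∫⁻ y in Set.Ioc (0:ℝ) x, ENNReal.ofReal N := by
            rw [setLIntegral_const, Real.volume_Ioc, sub_zero]
        _ ≤ ∫⁻ y in Set.Ioc (0:ℝ) x, HE S k y :=
            setLIntegral_mono (HE_measurable S k) (fun y hy => hδ2 y (hy.2.trans hxδ2))
    have h2 := ENNReal.toReal_mono hA1fin h1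
    rwa [ENNReal.toReal_mul, ENNReal.toReal_ofReal hNpos.le,
      ENNReal.toReal_ofReal hx0.le] at h2
  have hupR : (AE S (k+2) x).toReal ≤ e/2 * (AE S (k+1) x).toReal + C.toReal * x := by
    have hfin1 : ENNReal.ofReal (e/2) * AE S (k+1) x ≠ ⊤ :=
      ENNReal.mul_ne_top ENNReal.ofReal_ne_top hA1fin
    have hfin2 : C * ENNReal.ofReal x ≠ ⊤ :=
      ENNReal.mul_ne_top hCfin ENNReal.ofReal_ne_top
    have h1 := ENNReal.toReal_mono (ENNReal.add_ne_top.2 ⟨hfin1, hfin2⟩) (hup x hx0 hxδ)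
    rwa [ENNReal.toReal_add hfin1 hfin2, ENNReal.toReal_mul, ENNReal.toReal_mul,
      ENNReal.toReal_ofReal (half_pos he).le, ENNReal.toReal_ofReal hx0.le] at h1
  rw [Real.norm_eq_abs,
    abs_of_nonneg (div_nonneg ENNReal.toReal_nonneg ENNReal.toReal_nonneg)]
  set A1 := (AE S (k+1) x).toReal
  set A2 := (AE S (k+2) x).toReal
  have hCx : C.toReal * x < e/2 * A1 := by
    have h3 : e/2 * (N * x) = (C.toReal + 1) * x := by
      rw [hN]; field_simp
    have h4 : C.toReal * x < (C.toReal + 1) * x := by nlinarith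
    calc C.toReal * x < (C.toReal + 1) * x := h4
      _ = e/2 * (N * x) := h3.symm
      _ ≤ e/2 * A1 := by nlinarith [hlow]
  calc A2 / A1 ≤ (e/2 * A1 + C.toReal * x) / A1 := (div_le_div_iff_of_pos_right hA1pos).2 hupR
    _ < (e/2 * A1 + e/2 * A1) / A1 := (div_lt_div_iff_of_pos_right hA1pos).2 (by linarith)
    _ = e := by rw [div_eq_iff hA1pos.ne']; ring

lemma main_tendsto (hB : S.μ (Set.Ioc (0:ℝ) 1) = ⊤) :
    ∀ k : ℕ, (∀ j : ℕ, 1 ≤ j → j < k + 1 → ∫⁻ z in Set.Ioc (0:ℝ) 1, AE S j z ∂S.μ = ⊤) →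
    Tendsto (fun x => (AE S (k+2) x).toReal / (AE S (k+1) x).toReal) (𝓝[>] (0:ℝ)) (𝓝 0) := by
  intro k
  induction k with
  | zero =>
    intro _
    refine estimate S 0 ?_ (base_prev S)
    have : ∫⁻ z in Set.Ioc (0:ℝ) 1, AE S 0 z ∂S.μ = S.μ (Set.Ioc (0:ℝ) 1) :=
      setLIntegral_one _
    rw [this, hB]
  | succ n IH =>
    intro h
    exact estimate S (n+1) (h (n+1) (Nat.le_add_left 1 n) (by omega))
      (IH (fun j hj1 hj2 => h j hj1 (by omega)))

end MString


theorem stmt9 (S : MString) (k : ℕ) (hk1 : 1 ≤ k) (hk2 : (k : ℕ∞) ≤ MString.dIdx S) :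
    Tendsto (fun x => MString.G S (k + 1) x / MString.G S k x)
      (nhdsWithin 0 (Set.Ioi 0)) (nhds 0) := by
  classical
  by_cases hB : BddBelow (S.m '' Set.Ioc 0 1)
  · exfalso
    rw [MString.dIdx, if_pos hB] at hk2
    have hk0 : (k : ℕ∞) = 0 := le_antisymm hk2 zero_le
    have : k = 0 := by exact_mod_cast hk0
    omega
  · rw [MString.dIdx, if_neg hB] at hk2
    have hμtop := MString.mu_top S hB
    have hIG : ∀ j : ℕ, 1 ≤ j →
        MString.intGdm S j = ∫⁻ z in Set.Ioc (0:ℝ) 1, MString.AE S j z ∂S.μ := by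
      intro j hj
      obtain ⟨i, rfl⟩ : ∃ i, j = i + 1 := ⟨j - 1, by omega⟩
      rw [MString.intGdm]
      refine setLIntegral_congr_fun measurableSet_Ioc ?_
      intro z hz
      dsimp only
      rw [MString.G_repr S i hz.1.le hz.2, ← mul_assoc, ← mul_pow]
      norm_num
      exact (MString.AE_lt_top S (i+1) hz.2).ne
    have hj : ∀ j : ℕ, 1 ≤ j → j < k →
        ∫⁻ z in Set.Ioc (0:ℝ) 1, MString.AE S j z ∂S.μ = ⊤ := by
      intro j hj1 hjk
      by_contra hfin0
      have hmem : (j : ℕ∞) ∈ {n : ℕ∞ | ∃ k' : ℕ, n = (k' : ℕ∞) ∧ 1 ≤ k' ∧ MString.intGdm S k' < ⊤} := by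
        refine ⟨j, rfl, hj1, ?_⟩
        rw [hIG j hj1]
        exact lt_top_iff_ne_top.2 hfin0
      have h5 := sInf_le hmem
      have h6 : (k : ℕ∞) ≤ (j : ℕ∞) := hk2.trans h5
      have h7 : k ≤ j := by exact_mod_cast h6
      omega
    obtain ⟨i, rfl⟩ : ∃ i, k = i + 1 := ⟨k - 1, by omega⟩
    have hmain := MString.main_tendsto S hμtop i (fun j h1 h2 => hj j h1 (by omega))
    have hneg := hmain.neg
    rw [neg_zero] at hneg
    refine hneg.congr' ?_
    filter_upwards [Ioo_mem_nhdsGT_of_mem ⟨le_refl (0:ℝ), one_pos⟩] with x hx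
    rw [MString.G_repr S (i+1) hx.1.le hx.2.le, MString.G_repr S i hx.1.le hx.2.le]
    have h1 : ((-1:ℝ))^(i+1) ≠ 0 := pow_ne_zero _ (by norm_num)
    rw [pow_succ (-1:ℝ) (i+1), mul_assoc, mul_div_mul_left _ _ h1, neg_one_mul, neg_div]
end

section
/- Let m_n ∈ 𝓜 (n ∈ ℕ) be a sequence such that m_n(x) → 0 as n → ∞ for every x > 0 and ∫_{(0,1]} y dm_n(y) → 0 as n → ∞. Then for every integer k ≥ 1 and every x₀ > 0, sup_{z ∈ [0,x₀]} |G^k_{m_n}(z)| → 0 as n → ∞. -/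
open MeasureTheory Filter Topology Set
open scoped ENNReal NNReal

namespace StringAux

open MString MeasureTheory

lemma m_mono (S : MString) : MonotoneOn S.m (Set.Ioi 0) := S.strict_mono.monotoneOn

lemma m_le (S : MString) {a c : ℝ} (ha : 0 < a) (hac : a ≤ c) : S.m a ≤ S.m c :=
  m_mono S (Set.mem_Ioi.2 ha) (Set.mem_Ioi.2 (lt_of_lt_of_le ha hac)) hac

lemma mt_mono (S : MString) : MonotoneOn (mtilde S) (Set.Ioi 0) :=
  fun a ha b hb h => sub_le_sub_right (m_mono S ha hb h) _

lemma key_lin (S : MString) :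
    ∫⁻ y in Set.Ioc (0:ℝ) 1, ENNReal.ofReal |mtilde S y| ≤
      ∫⁻ x in Set.Ioc (0:ℝ) 1, ENNReal.ofReal x ∂S.μ := by
  set ν := S.μ.restrict (Set.Ioc (0:ℝ) 1) with hν
  have hnn : 0 ≤ᵐ[ν] (id : ℝ → ℝ) :=
    (ae_restrict_iff' measurableSet_Ioc).2 (Filter.Eventually.of_forall fun a ha => ha.1.le)
  have layer := lintegral_eq_lintegral_meas_lt ν hnn aemeasurable_id
  have step1 : ∫⁻ y in Set.Ioc (0:ℝ) 1, ENNReal.ofReal |mtilde S y| =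
      ∫⁻ y in Set.Ioc (0:ℝ) 1, ν (Set.Ioi y) := by
    refine setLIntegral_congr_fun measurableSet_Ioc
      (fun y hy => ?_)
    have h1 : S.m y ≤ S.m 1 := m_le S hy.1 hy.2
    have habs : |mtilde S y| = S.m 1 - S.m y := by
      rw [mtilde, abs_of_nonpos (by linarith)]; ring
    have hset : Set.Ioi y ∩ Set.Ioc 0 1 = Set.Ioc y 1 := by
      ext a
      constructor
      · rintro ⟨ha1, _, ha3⟩; exact ⟨ha1, ha3⟩
      · rintro ⟨ha1, ha2⟩; exact ⟨ha1, hy.1.trans ha1, ha2⟩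
    rw [habs, hν, Measure.restrict_apply measurableSet_Ioi, hset,
      ← S.stieltjes y 1 hy.1 hy.2]
  rw [step1]
  calc ∫⁻ y in Set.Ioc (0:ℝ) 1, ν (Set.Ioi y)
      ≤ ∫⁻ y in Set.Ioi (0:ℝ), ν (Set.Ioi y) :=
        lintegral_mono_set Set.Ioc_subset_Ioi_self
    _ = ∫⁻ a, ENNReal.ofReal a ∂ν := layer.symm
    _ = ∫⁻ x in Set.Ioc (0:ℝ) 1, ENNReal.ofReal x ∂S.μ := rfl

lemma mt_aemeas (S : MString) {s : Set ℝ} (hs : s ⊆ Set.Ioi 0) (hms : MeasurableSet s) :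
    AEMeasurable (mtilde S) (volume.restrict s) :=
  aemeasurable_restrict_of_monotoneOn hms ((mt_mono S).mono hs)

lemma mt_int1 (S : MString) : IntegrableOn (mtilde S) (Set.Ioc (0:ℝ) 1) volume := by
  refine ⟨(mt_aemeas S Set.Ioc_subset_Ioi_self measurableSet_Ioc).aestronglyMeasurable, ?_⟩
  rw [hasFiniteIntegral_iff_norm]
  have : ∫⁻ y in Set.Ioc (0:ℝ) 1, ENNReal.ofReal ‖mtilde S y‖ =
      ∫⁻ y in Set.Ioc (0:ℝ) 1, ENNReal.ofReal |mtilde S y| := by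
    simp [Real.norm_eq_abs]
  rw [this]
  exact lt_of_le_of_lt (key_lin S) S.int_fin

lemma mt_intOn (S : MString) {z : ℝ} (hz : 0 ≤ z) :
    IntegrableOn (mtilde S) (Set.Ioc 0 z) volume := by
  rcases le_total z 1 with h | h
  · exact (mt_int1 S).mono_set (Set.Ioc_subset_Ioc_right h)
  · have hz0 : (0:ℝ) < z := lt_of_lt_of_le one_pos h
    have h2 : IntegrableOn (mtilde S) (Set.Ioc 1 z) volume := by
      refine Integrable.mono' (g := fun _ => S.m z - S.m 1)
        (integrableOn_const measure_Ioc_lt_top.ne)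
        (mt_aemeas S (fun a ha => lt_trans one_pos ha.1) measurableSet_Ioc).aestronglyMeasurable ?_
      refine (ae_restrict_iff' measurableSet_Ioc).2 (Filter.Eventually.of_forall fun y hy => ?_)
      have h1y : S.m 1 ≤ S.m y := m_le S one_pos hy.1.le
      have hyz : S.m y ≤ S.m z := m_le S (lt_trans one_pos hy.1) hy.2
      show ‖mtilde S y‖ ≤ S.m z - S.m 1
      rw [Real.norm_eq_abs, mtilde, abs_of_nonneg (by linarith)]
      linarith
    rw [← Set.Ioc_union_Ioc_eq_Ioc zero_le_one h]
    exact (mt_int1 S).union h2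

noncomputable def Cb (S : MString) (b : ℝ) : ℝ := S.F 1 + (b - 1) * (S.m b - S.m 1)

lemma F_eq (S : MString) :
    S.F 1 = (∫⁻ x in Set.Ioc (0:ℝ) 1, ENNReal.ofReal x ∂S.μ).toReal := by
  have h := integral_eq_lintegral_of_nonneg_ae (μ := S.μ.restrict (Set.Ioc 0 1))
      (f := fun x : ℝ => x)
      ((ae_restrict_iff' measurableSet_Ioc).2 (Filter.Eventually.of_forall fun a ha => ha.1.le))
      aestronglyMeasurable_id
  exact h

lemma F_nonneg (S : MString) : 0 ≤ S.F 1 :=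
  setIntegral_nonneg measurableSet_Ioc fun y hy => hy.1.le

lemma Cb_nonneg (S : MString) {b : ℝ} (hb : 1 ≤ b) : 0 ≤ Cb S b :=
  add_nonneg (F_nonneg S) (mul_nonneg (by linarith)
    (sub_nonneg.2 (m_le S one_pos hb)))

lemma w_int_le (S : MString) {b : ℝ} (hb : 1 ≤ b) {z : ℝ} (hz : z ∈ Set.Icc (0:ℝ) b) :
    ∫ y in Set.Ioc (0:ℝ) z, |mtilde S y| ≤ Cb S b := by
  have hz0 := hz.1
  have hmb : S.m 1 ≤ S.m b := m_le S one_pos hb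
  set c := min z 1 with hc
  have hcz : c ≤ z := min_le_left _ _
  have hc1 : c ≤ 1 := min_le_right _ _
  have hc0 : (0:ℝ) ≤ c := le_min hz0 zero_le_one
  have hsplit : Set.Ioc (0:ℝ) z = Set.Ioc 0 c ∪ Set.Ioc c z :=
    (Set.Ioc_union_Ioc_eq_Ioc hc0 hcz).symm
  have int1 : IntegrableOn (fun y => |mtilde S y|) (Set.Ioc (0:ℝ) c) volume :=
    ((mt_intOn S hz0).mono_set (Set.Ioc_subset_Ioc_right hcz)).abs
  have int2 : IntegrableOn (fun y => |mtilde S y|) (Set.Ioc c z) volume :=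
    ((mt_intOn S hz0).mono_set (Set.Ioc_subset_Ioc_left hc0)).abs
  rw [hsplit, setIntegral_union (Set.Ioc_disjoint_Ioc_of_le le_rfl) measurableSet_Ioc int1 int2]
  have hT1 : ∫ y in Set.Ioc (0:ℝ) c, |mtilde S y| ≤ S.F 1 := by
    rw [integral_eq_lintegral_of_nonneg_ae
        (Filter.Eventually.of_forall fun y => abs_nonneg _)
        (((mt_aemeas S Set.Ioc_subset_Ioi_self measurableSet_Ioc).aestronglyMeasurable.norm).congr
          (Filter.Eventually.of_forall fun y => Real.norm_eq_abs _)),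
      F_eq S]
    refine ENNReal.toReal_mono S.int_fin.ne ?_
    calc ∫⁻ y in Set.Ioc (0:ℝ) c, ENNReal.ofReal |mtilde S y|
        ≤ ∫⁻ y in Set.Ioc (0:ℝ) 1, ENNReal.ofReal |mtilde S y| :=
          lintegral_mono_set (Set.Ioc_subset_Ioc_right hc1)
      _ ≤ _ := key_lin S
  have hT2 : ∫ y in Set.Ioc c z, |mtilde S y| ≤ (b - 1) * (S.m b - S.m 1) := by
    rcases le_total z 1 with h | h
    · have hceq : c = z := min_eq_left h
      rw [hceq]
      simp only [Set.Ioc_self, Measure.restrict_empty, integral_zero_measure]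
      exact mul_nonneg (by linarith) (by linarith)
    · have hceq : c = 1 := min_eq_right h
      rw [hceq]
      have hbd := norm_setIntegral_le_of_norm_le_const (μ := volume)
        (s := Set.Ioc (1:ℝ) z) (f := fun y => |mtilde S y|) (C := S.m b - S.m 1)
        measure_Ioc_lt_top ?_
      · calc ∫ y in Set.Ioc (1:ℝ) z, |mtilde S y|
            ≤ ‖∫ y in Set.Ioc (1:ℝ) z, |mtilde S y|‖ := le_abs_self _
          _ ≤ (S.m b - S.m 1) * (volume (Set.Ioc (1:ℝ) z)).toReal := hbd
          _ = (S.m b - S.m 1) * (z - 1) := by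
              rw [Real.volume_Ioc, ENNReal.toReal_ofReal (by linarith)]
          _ ≤ (S.m b - S.m 1) * (b - 1) := by
              have : z - 1 ≤ b - 1 := by linarith [hz.2]
              exact mul_le_mul_of_nonneg_left this (by linarith)
          _ = (b - 1) * (S.m b - S.m 1) := mul_comm _ _
      · intro x hx
        have h1x : S.m 1 ≤ S.m x := m_le S one_pos hx.1.le
        have hxb : S.m x ≤ S.m b := m_le S (lt_trans one_pos hx.1) (hx.2.trans hz.2)
        rw [Real.norm_eq_abs, abs_abs, mtilde, abs_of_nonneg (by linarith)]
        linarith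
  rw [Cb]
  linarith

lemma G_bound (S : MString) {b : ℝ} (hb : 1 ≤ b) :
    ∀ k : ℕ, 1 ≤ k → ContinuousOn (G S k) (Set.Icc 0 b) ∧
      ∀ z ∈ Set.Icc (0:ℝ) b, |G S k z| ≤ Cb S b ^ k := by
  have hb0 : (0:ℝ) ≤ b := zero_le_one.trans hb
  intro k hk
  induction k, hk using Nat.le_induction with
  | base =>
    have hint : IntegrableOn (mtilde S) (Set.Icc (0:ℝ) b) volume :=
      (integrableOn_Icc_iff_integrableOn_Ioc enorm_ne_top).2 (mt_intOn S hb0)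
    have hGeq : ∀ x : ℝ, G S 1 x = ∫ y in (0:ℝ)..x, mtilde S y := fun x => rfl
    constructor
    · have hprim := intervalIntegral.continuousOn_primitive (f := mtilde S)
        (a := 0) (b := b) (μ := volume) hint
      refine hprim.congr fun x hx => ?_
      rw [hGeq, intervalIntegral.integral_of_le hx.1]
    · intro z hz
      rw [hGeq, pow_one, intervalIntegral.integral_of_le hz.1, ← Real.norm_eq_abs]
      calc ‖∫ y in Set.Ioc (0:ℝ) z, mtilde S y‖
          ≤ ∫ y in Set.Ioc (0:ℝ) z, ‖mtilde S y‖ := norm_integral_le_integral_norm _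
        _ = ∫ y in Set.Ioc (0:ℝ) z, |mtilde S y| := by simp [Real.norm_eq_abs]
        _ ≤ Cb S b := w_int_le S hb hz
  | succ n hn IH =>
    obtain ⟨m, rfl⟩ : ∃ m, n = m + 1 := ⟨n - 1, (Nat.succ_pred_eq_of_pos hn).symm⟩
    obtain ⟨hfc, hfb⟩ := IH
    set f := G S (m + 1) with hf
    set M := Cb S b ^ (m + 1) with hM
    have hM0 : 0 ≤ M := pow_nonneg (Cb_nonneg S hb) _
    have fin1 : ∀ y : ℝ, 0 < y → y ≤ 1 → S.μ (Set.Ioc y 1) < ⊤ := fun y hy h => by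
      rw [S.stieltjes y 1 hy h]; exact ENNReal.ofReal_lt_top
    have fin2 : ∀ y : ℝ, 1 ≤ y → S.μ (Set.Ioc 1 y) < ⊤ := fun y h => by
      rw [S.stieltjes 1 y one_pos h]; exact ENNReal.ofReal_lt_top
    have aux_int : ∀ s : Set ℝ, s ⊆ Set.Icc 0 b → MeasurableSet s → S.μ s < ⊤ →
        IntegrableOn f s S.μ := by
      intro s hsub hms hfin
      refine Integrable.mono' (g := fun _ => M) (integrableOn_const hfin.ne)
        ((hfc.mono hsub).aestronglyMeasurable hms) ?_
      exact (ae_restrict_iff' hms).2 (Filter.Eventually.of_forall fun x hx => by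
        rw [Real.norm_eq_abs]; exact hfb x (hsub hx))
    have hjb : ∀ y ∈ Set.Ioc (0:ℝ) b, |jInt S f y| ≤ M * |mtilde S y| := by
      intro y hy
      by_cases h1 : y ≤ 1
      · have hsub : Set.Ioc y 1 ⊆ Set.Icc 0 b := fun a ha =>
          ⟨(hy.1.trans ha.1).le, ha.2.trans hb⟩
        have hbd := norm_setIntegral_le_of_norm_le_const (μ := S.μ) (s := Set.Ioc y 1)
          (f := f) (C := M) (fin1 y hy.1 h1)
          (fun x hx => by rw [Real.norm_eq_abs]; exact hfb x (hsub hx))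
        have hmy : S.m y ≤ S.m 1 := m_le S hy.1 h1
        rw [Measure.real, S.stieltjes y 1 hy.1 h1, ENNReal.toReal_ofReal (by linarith)] at hbd
        have habs : |mtilde S y| = S.m 1 - S.m y := by
          rw [mtilde, abs_of_nonpos (by linarith)]; ring
        rw [jInt, if_pos h1, habs, ← Real.norm_eq_abs]
        exact hbd
      · push_neg at h1
        have hsub : Set.Ioc 1 y ⊆ Set.Icc 0 b := fun a ha =>
          ⟨(one_pos.trans ha.1).le, ha.2.trans hy.2⟩
        have hbd := norm_setIntegral_le_of_norm_le_const (μ := S.μ) (s := Set.Ioc 1 y)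
          (f := f) (C := M) (fin2 y h1.le)
          (fun x hx => by rw [Real.norm_eq_abs]; exact hfb x (hsub hx))
        have hmy : S.m 1 ≤ S.m y := m_le S one_pos h1.le
        rw [Measure.real, S.stieltjes 1 y one_pos h1.le, ENNReal.toReal_ofReal (by linarith)] at hbd
        have habs : |mtilde S y| = S.m y - S.m 1 := by
          rw [mtilde, abs_of_nonneg (by linarith)]
        rw [jInt, if_neg (not_le.2 h1), abs_neg, habs, ← Real.norm_eq_abs]
        exact hbd
    have hmeasj : AEMeasurable (jInt S f) (volume.restrict (Set.Ioc 0 b)) := by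
      set fp := fun x => max (f x) 0 with hfp
      set fn := fun x => max (-f x) 0 with hfn
      have key : ∀ φ : ℝ → ℝ, (∀ x, 0 ≤ φ x) →
          (∀ s : Set ℝ, s ⊆ Set.Icc 0 b → MeasurableSet s → S.μ s < ⊤ →
            IntegrableOn φ s S.μ) →
          AntitoneOn (jInt S φ) (Set.Ioc 0 b) := by
        intro φ hφ hφint y₁ hy₁ y₂ hy₂ h12
        by_cases h2 : y₂ ≤ 1
        · have h1 : y₁ ≤ 1 := h12.trans h2
          simp only [jInt]
          rw [if_pos h1, if_pos h2]
          exact setIntegral_mono_set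
            (hφint _ (fun a ha => ⟨(hy₁.1.trans ha.1).le, ha.2.trans hb⟩)
              measurableSet_Ioc (fin1 _ hy₁.1 h1))
            (Filter.Eventually.of_forall fun x => hφ x)
            (HasSubset.Subset.eventuallyLE (Set.Ioc_subset_Ioc_left h12))
        · push_neg at h2
          by_cases h1 : y₁ ≤ 1
          · simp only [jInt]
            rw [if_pos h1, if_neg (not_le.2 h2)]
            have A : 0 ≤ ∫ z in Set.Ioc y₁ 1, φ z ∂S.μ :=
              setIntegral_nonneg measurableSet_Ioc fun x _ => hφ x
            have B : 0 ≤ ∫ z in Set.Ioc 1 y₂, φ z ∂S.μ :=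
              setIntegral_nonneg measurableSet_Ioc fun x _ => hφ x
            linarith
          · push_neg at h1
            simp only [jInt]
            rw [if_neg (not_le.2 h1), if_neg (not_le.2 h2)]
            exact neg_le_neg (setIntegral_mono_set
              (hφint _ (fun a ha => ⟨(one_pos.trans ha.1).le, ha.2.trans hy₂.2⟩)
                measurableSet_Ioc (fin2 _ h2.le))
              (Filter.Eventually.of_forall fun x => hφ x)
              (HasSubset.Subset.eventuallyLE (Set.Ioc_subset_Ioc_right h12)))
      have hp : AEMeasurable (jInt S fp) (volume.restrict (Set.Ioc 0 b)) :=
        aemeasurable_restrict_of_antitoneOn measurableSet_Ioc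
          (key fp (fun x => le_max_right _ _)
            (fun s h1 h2 h3 => (aux_int s h1 h2 h3).pos_part))
      have hn' : AEMeasurable (jInt S fn) (volume.restrict (Set.Ioc 0 b)) :=
        aemeasurable_restrict_of_antitoneOn measurableSet_Ioc
          (key fn (fun x => le_max_right _ _)
            (fun s h1 h2 h3 => (aux_int s h1 h2 h3).neg.pos_part))
      refine (hp.sub hn').congr ?_
      refine (ae_restrict_iff' measurableSet_Ioc).2 (Filter.Eventually.of_forall fun y hy => ?_)
      show jInt S fp y - jInt S fn y = jInt S f y
      by_cases h1 : y ≤ 1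
      · have hsub : Set.Ioc y 1 ⊆ Set.Icc 0 b := fun a ha =>
          ⟨(hy.1.trans ha.1).le, ha.2.trans hb⟩
        have hfi := aux_int _ hsub measurableSet_Ioc (fin1 y hy.1 h1)
        simp only [jInt, if_pos h1]
        have h2 : (∫ z in Set.Ioc y 1, ((fun a => max (f a) 0) z - (fun a => max ((-f) a) 0) z) ∂S.μ)
            = ∫ z in Set.Ioc y 1, f z ∂S.μ :=
          integral_congr_ae (Filter.Eventually.of_forall fun x => by
            simpa using max_zero_sub_max_neg_zero_eq_self (f x))
        exact (integral_sub hfi.pos_part hfi.neg.pos_part).symm.trans h2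
      · push_neg at h1
        have hsub : Set.Ioc 1 y ⊆ Set.Icc 0 b := fun a ha =>
          ⟨(one_pos.trans ha.1).le, ha.2.trans hy.2⟩
        have hfi := aux_int _ hsub measurableSet_Ioc (fin2 y h1.le)
        simp only [jInt, if_neg (not_le.2 h1)]
        have h2 : (∫ z in Set.Ioc 1 y, ((fun a => max (f a) 0) z - (fun a => max ((-f) a) 0) z) ∂S.μ)
            = ∫ z in Set.Ioc 1 y, f z ∂S.μ :=
          integral_congr_ae (Filter.Eventually.of_forall fun x => by
            simpa using max_zero_sub_max_neg_zero_eq_self (f x))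
        have h3 := (integral_sub hfi.pos_part hfi.neg.pos_part).symm.trans h2
        have h4 : (∫ z in Set.Ioc 1 y, fp z ∂S.μ) - ∫ z in Set.Ioc 1 y, fn z ∂S.μ
            = ∫ z in Set.Ioc 1 y, f z ∂S.μ := h3
        linarith [h4]
    have hjint : IntegrableOn (jInt S f) (Set.Ioc 0 b) volume := by
      refine Integrable.mono' (g := fun y => M * |mtilde S y|)
        (((mt_intOn S hb0).abs).const_mul M) hmeasj.aestronglyMeasurable ?_
      exact (ae_restrict_iff' measurableSet_Ioc).2 (Filter.Eventually.of_forall fun y hy => by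
        rw [Real.norm_eq_abs]; exact hjb y hy)
    have hGeq : ∀ x : ℝ, G S (m + 1 + 1) x = -(∫ y in (0:ℝ)..x, jInt S f y) := fun x => rfl
    constructor
    · have hprim := intervalIntegral.continuousOn_primitive (f := jInt S f)
        (a := 0) (b := b) (μ := volume) ((integrableOn_Icc_iff_integrableOn_Ioc enorm_ne_top).2 hjint)
      refine hprim.neg.congr fun x hx => ?_
      rw [hGeq, intervalIntegral.integral_of_le hx.1]; rfl
    · intro z hz
      rw [hGeq, abs_neg, ← Real.norm_eq_abs]
      have hg2 : IntegrableOn (fun y => M * |mtilde S y|) (Set.Ioc 0 b) volume :=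
        ((mt_intOn S hb0).abs).const_mul M
      have hIg : IntervalIntegrable (fun y => M * |mtilde S y|) volume 0 z :=
        (intervalIntegrable_iff_integrableOn_Ioc_of_le hz.1).2
          (hg2.mono_set (Set.Ioc_subset_Ioc_right hz.2))
      have hae : ∀ᵐ t ∂(volume.restrict (Set.uIoc 0 z)), ‖jInt S f t‖ ≤ M * |mtilde S t| := by
        rw [Set.uIoc_of_le hz.1]
        exact (ae_restrict_iff' measurableSet_Ioc).2 (Filter.Eventually.of_forall fun y hy => by
          rw [Real.norm_eq_abs]; exact hjb y ⟨hy.1, hy.2.trans hz.2⟩)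
      calc ‖∫ y in (0:ℝ)..z, jInt S f y‖
          ≤ abs (∫ y in (0:ℝ)..z, M * |mtilde S y|) :=
            intervalIntegral.norm_integral_le_abs_of_norm_le hae hIg
        _ = ∫ y in Set.Ioc (0:ℝ) z, M * |mtilde S y| := by
            rw [intervalIntegral.integral_of_le hz.1]
            exact abs_of_nonneg (setIntegral_nonneg measurableSet_Ioc
              fun x _ => mul_nonneg hM0 (abs_nonneg _))
        _ = M * ∫ y in Set.Ioc (0:ℝ) z, |mtilde S y| := integral_const_mul M _
        _ ≤ M * Cb S b := mul_le_mul_of_nonneg_left (w_int_le S hb hz) hM0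
        _ = Cb S b ^ (m + 1 + 1) := by rw [hM, ← pow_succ]

end StringAux

theorem stmt10 (Sn : ℕ → MString)
    (hm : ∀ x : ℝ, 0 < x → Tendsto (fun n => (Sn n).m x) atTop (nhds 0))
    (hint : Tendsto (fun n => MString.F (Sn n) 1) atTop (nhds 0)) :
    ∀ k : ℕ, 1 ≤ k → ∀ x₀ : ℝ, 0 < x₀ →
      Tendsto (fun n => sSup ((fun z => |MString.G (Sn n) k z|) '' Set.Icc 0 x₀))
        atTop (nhds 0) := by
  intro k hk x₀ hx₀
  set b := max x₀ 1 with hbdef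
  have hb : (1:ℝ) ≤ b := le_max_right _ _
  have hC0 : Tendsto (fun n => StringAux.Cb (Sn n) b) atTop (nhds 0) := by
    have h1 : Tendsto (fun n => (Sn n).m b) atTop (nhds 0) :=
      hm b (lt_of_lt_of_le one_pos hb)
    have h2 := hm 1 one_pos
    have h3 := hint.add (Filter.Tendsto.const_mul (b - 1) (h1.sub h2))
    simpa [StringAux.Cb] using h3
  have hCk : Tendsto (fun n => StringAux.Cb (Sn n) b ^ k) atTop (nhds 0) := by
    have h := hC0.pow k
    rwa [zero_pow (by omega : k ≠ 0)] at h
  refine tendsto_of_tendsto_of_tendsto_of_le_of_le tendsto_const_nhds hCk ?_ ?_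
  · intro n
    have hbdd : BddAbove ((fun z => |MString.G (Sn n) k z|) '' Set.Icc 0 x₀) := by
      refine ⟨StringAux.Cb (Sn n) b ^ k, ?_⟩
      rintro v ⟨z, hz, rfl⟩
      exact (StringAux.G_bound (Sn n) hb k hk).2 z ⟨hz.1, hz.2.trans (le_max_left _ _)⟩
    have hne : |MString.G (Sn n) k 0| ∈ (fun z => |MString.G (Sn n) k z|) '' Set.Icc 0 x₀ :=
      ⟨0, ⟨le_refl 0, hx₀.le⟩, rfl⟩
    exact le_trans (abs_nonneg _) (le_csSup hbdd hne)
  · intro n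
    refine Real.sSup_le ?_ (pow_nonneg (StringAux.Cb_nonneg (Sn n) hb) k)
    rintro v ⟨z, hz, rfl⟩
    exact (StringAux.G_bound (Sn n) hb k hk).2 z ⟨hz.1, hz.2.trans (le_max_left _ _)⟩
end

section
/- Let m_n ∈ 𝓜 (n ∈ ℕ) be a sequence such that m_n(x) → 0 as n → ∞ for every x > 0 and ∫_{(0,1]} y dm_n(y) → 0 as n → ∞. Then for every integer k ≥ 1, sup_{y ∈ (0,1]} |G^{k+1}_{m_n}(y) / G^k_{m_n}(y)| → 0 as n → ∞ (the ratio is well defined since m_n is strictly increasing, whence (−1)^k G^k_{m_n} > 0 on (0,1]). -/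
open MeasureTheory Filter Topology Set
open scoped ENNReal NNReal

namespace StringProof
open MString ENNReal

noncomputable def fk (S : MString) (k : ℕ) (z : ℝ) : ℝ := (-1:ℝ)^k * MString.G S k z

lemma G_eq_fk (S : MString) (k : ℕ) (z : ℝ) : MString.G S k z = (-1:ℝ)^k * fk S k z := by
  simp [fk, ← mul_assoc, ← mul_pow]

lemma m_mono (S : MString) {a b : ℝ} (ha : 0 < a) (hab : a ≤ b) : S.m a ≤ S.m b :=
  S.strict_mono.monotoneOn (Set.mem_Ioi.2 ha) (Set.mem_Ioi.2 (ha.trans_le hab)) hab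

lemma mu_Ioc (S : MString) {a b : ℝ} (ha : 0 < a) (hab : a ≤ b) :
    S.μ (Set.Ioc a b) = ENNReal.ofReal (S.m b - S.m a) := S.stieltjes a b ha hab

lemma mu_Ioc_lt_top (S : MString) {a b : ℝ} (ha : 0 < a) (hab : a ≤ b) :
    S.μ (Set.Ioc a b) < ⊤ := by rw [mu_Ioc S ha hab]; exact ofReal_lt_top

lemma mu_Ioc_toReal (S : MString) {a b : ℝ} (ha : 0 < a) (hab : a ≤ b) :
    (S.μ (Set.Ioc a b)).toReal = S.m b - S.m a := by
  rw [mu_Ioc S ha hab, toReal_ofReal (sub_nonneg.2 (m_mono S ha hab))]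

instance sfR (S : MString) : SigmaFinite (S.μ.restrict (Set.Ioc (0:ℝ) 1)) := by
  constructor
  refine ⟨⟨fun n => Set.Ioc (1/(n+1) : ℝ) 1 ∪ (Set.Ioc (0:ℝ) 1)ᶜ, fun _ => trivial, ?_, ?_⟩⟩
  · intro n
    rw [Measure.restrict_apply' measurableSet_Ioc]
    have hsub : Set.Ioc (1/(n+1):ℝ) 1 ⊆ Set.Ioc 0 1 := Set.Ioc_subset_Ioc_left (by positivity)
    rw [Set.union_inter_distrib_right, Set.compl_inter_self, Set.union_empty,
      Set.inter_eq_left.2 hsub]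
    rcases le_or_gt (1/(n+1):ℝ) 1 with h | h
    · rw [mu_Ioc S (by positivity) h]; exact ofReal_lt_top
    · rw [Set.Ioc_eq_empty (by linarith)]; simp
  · rw [Set.eq_univ_iff_forall]
    intro x
    by_cases hx : x ∈ Set.Ioc (0:ℝ) 1
    · obtain ⟨n, hn⟩ := exists_nat_one_div_lt hx.1
      exact Set.mem_iUnion.2 ⟨n, Or.inl ⟨hn, hx.2⟩⟩
    · exact Set.mem_iUnion.2 ⟨0, Or.inr hx⟩

lemma vol_inter (S : MString) {x z : ℝ} (hx : x ∈ Set.Ioc (0:ℝ) 1) (hz : z ∈ Set.Ioc (0:ℝ) 1) :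
    (volume.restrict (Set.Ioc (0:ℝ) x)) (Set.Iio z) = ENNReal.ofReal (min z x) := by
  rw [Measure.restrict_apply' measurableSet_Ioc]
  rcases le_or_gt z x with h | h
  · have : Set.Iio z ∩ Set.Ioc 0 x = Set.Ioo 0 z := by
      ext y; simp only [Set.mem_inter_iff, Set.mem_Iio, Set.mem_Ioc, Set.mem_Ioo]
      constructor
      · rintro ⟨h1, h2, h3⟩; exact ⟨h2, h1⟩
      · rintro ⟨h1, h2⟩; exact ⟨h2, h1, h2.le.trans h⟩
    rw [this, Real.volume_Ioo, min_eq_left h, sub_zero]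
  · have : Set.Iio z ∩ Set.Ioc 0 x = Set.Ioc 0 x := by
      rw [Set.inter_eq_right]
      intro y hy; exact Set.mem_Iio.2 (hy.2.trans_lt h)
    rw [this, Real.volume_Ioc, min_eq_right h.le, sub_zero]

lemma swap_lemma (S : MString) (g : ℝ → ℝ≥0∞) (hg : Measurable g) {x : ℝ}
    (hx : x ∈ Set.Ioc (0:ℝ) 1) :
    ∫⁻ y in Set.Ioc (0:ℝ) x, (∫⁻ z in Set.Ioc y 1, g z ∂S.μ) =
      ∫⁻ z in Set.Ioc (0:ℝ) 1, ENNReal.ofReal (min z x) * g z ∂S.μ := by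
  have h1 : ∀ y ∈ Set.Ioc (0:ℝ) x, (∫⁻ z in Set.Ioc y 1, g z ∂S.μ) =
      ∫⁻ z in Set.Ioc (0:ℝ) 1, (Set.Ioi y).indicator (fun _ => (1:ℝ≥0∞)) z * g z ∂S.μ := by
    intro y hy
    have hpt : ∀ z, (Set.Ioi y).indicator (fun _ => (1:ℝ≥0∞)) z * g z
        = (Set.Ioi y).indicator g z := by
      intro z; by_cases h : z ∈ Set.Ioi y <;> simp [h]
    have hset : Set.Ioi y ∩ Set.Ioc 0 1 = Set.Ioc y 1 := by
      ext z
      simp only [Set.mem_inter_iff, Set.mem_Ioi, Set.mem_Ioc]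
      constructor
      · rintro ⟨h1, h2, h3⟩; exact ⟨h1, h3⟩
      · rintro ⟨h1, h2⟩; exact ⟨h1, hy.1.trans h1, h2⟩
    rw [lintegral_congr hpt, lintegral_indicator measurableSet_Ioi,
      Measure.restrict_restrict measurableSet_Ioi, hset]
  rw [setLIntegral_congr_fun measurableSet_Ioc h1]
  rw [lintegral_lintegral_swap]
  · apply setLIntegral_congr_fun measurableSet_Ioc
    intro z hz
    have hpt : ∀ y, (Set.Ioi y).indicator (fun _ => (1:ℝ≥0∞)) z * g z
        = (Set.Iio z).indicator (fun _ => g z) y := by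
      intro y
      simp only [Set.indicator_apply, Set.mem_Ioi, Set.mem_Iio]
      by_cases h : y < z <;> simp [h]
    simp only [hpt]
    rw [lintegral_indicator measurableSet_Iio, setLIntegral_const, vol_inter S hx hz, mul_comm]
  · have : (Function.uncurry fun y z => (Set.Ioi y).indicator (fun _ => (1:ℝ≥0∞)) z * g z)
        = fun p : ℝ × ℝ => ({q : ℝ × ℝ | q.1 < q.2}.indicator (fun _ => (1:ℝ≥0∞)) p) * g p.2 := by
      funext p
      rcases p with ⟨y, z⟩
      simp only [Function.uncurry, Set.indicator_apply, Set.mem_Ioi, Set.mem_setOf_eq]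
    rw [this]
    exact ((measurable_const.indicator (measurableSet_lt measurable_fst measurable_snd)).mul
      (hg.comp measurable_snd)).aemeasurable

end StringProof
namespace StringProof

noncomputable def fext (f : ℝ → ℝ) (z : ℝ) : ℝ := if z ≤ 0 then 0 else f (min z 1)

variable {f : ℝ → ℝ}

lemma min_mem {z : ℝ} (hz : ¬ z ≤ 0) : min z 1 ∈ Set.Ioc (0:ℝ) 1 :=
  ⟨lt_min (not_le.1 hz) one_pos, min_le_right _ _⟩

lemma fext_mono (hmono : MonotoneOn f (Set.Ioc 0 1)) (hpos : ∀ z ∈ Set.Ioc (0:ℝ) 1, 0 ≤ f z) :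
    Monotone (fext f) := by
  intro a b hab
  unfold fext
  split_ifs with ha hb hb
  · exact le_rfl
  · exact hpos _ (min_mem hb)
  · exact absurd (hab.trans hb) ha
  · exact hmono (min_mem ha) (min_mem hb) (min_le_min hab le_rfl)

lemma fext_eq {z : ℝ} (hz : z ∈ Set.Ioc (0:ℝ) 1) : fext f z = f z := by
  unfold fext
  rw [if_neg (not_le.2 hz.1), min_eq_left hz.2]

lemma fext_nonneg (hpos : ∀ z ∈ Set.Ioc (0:ℝ) 1, 0 ≤ f z) (z : ℝ) : 0 ≤ fext f z := by
  unfold fext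
  split_ifs with h
  · exact le_rfl
  · exact hpos _ (min_mem h)

lemma fext_le (hmono : MonotoneOn f (Set.Ioc 0 1)) (hpos : ∀ z ∈ Set.Ioc (0:ℝ) 1, 0 ≤ f z)
    (z : ℝ) : fext f z ≤ f 1 := by
  unfold fext
  split_ifs with h
  · exact hpos 1 ⟨one_pos, le_rfl⟩
  · exact hmono (min_mem h) ⟨one_pos, le_rfl⟩ (min_le_right _ _)

lemma core (S : MString) (hmono : MonotoneOn f (Set.Ioc 0 1))
    (hpos : ∀ z ∈ Set.Ioc (0:ℝ) 1, 0 ≤ f z) {x : ℝ} (hx : x ∈ Set.Ioc (0:ℝ) 1) :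
    ∫ y in Set.Ioc (0:ℝ) x, (∫ z in Set.Ioc y 1, f z ∂S.μ) =
      (∫⁻ z in Set.Ioc (0:ℝ) 1, ENNReal.ofReal (min z x * f z) ∂S.μ).toReal := by
  have hfm : Measurable (fext f) := (fext_mono hmono hpos).measurable
  have hgm : Measurable (fun z => ENNReal.ofReal (fext f z)) :=
    ENNReal.measurable_ofReal.comp hfm
  have hInner : ∀ y ∈ Set.Ioc (0:ℝ) x, (∫ z in Set.Ioc y 1, f z ∂S.μ) =
      (∫⁻ z in Set.Ioc y 1, ENNReal.ofReal (fext f z) ∂S.μ).toReal := by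
    intro y hy
    have hsub : Set.Ioc y 1 ⊆ Set.Ioc (0:ℝ) 1 := Set.Ioc_subset_Ioc_left hy.1.le
    rw [setIntegral_congr_fun measurableSet_Ioc (fun z hz => (fext_eq (hsub hz)).symm)]
    exact integral_eq_lintegral_of_nonneg_ae
      (Filter.Eventually.of_forall (fext_nonneg hpos)) hfm.aestronglyMeasurable
  rw [setIntegral_congr_fun measurableSet_Ioc hInner]
  have hanti : Antitone (fun y => ∫⁻ z in Set.Ioc y 1, ENNReal.ofReal (fext f z) ∂S.μ) :=
    fun y1 y2 h => lintegral_mono_set (Set.Ioc_subset_Ioc_left h)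
  have hfin : ∀ᵐ y ∂(volume.restrict (Set.Ioc (0:ℝ) x)),
      (∫⁻ z in Set.Ioc y 1, ENNReal.ofReal (fext f z) ∂S.μ) < ⊤ := by
    rw [ae_restrict_iff' measurableSet_Ioc]
    refine Filter.Eventually.of_forall fun y hy => ?_
    calc ∫⁻ z in Set.Ioc y 1, ENNReal.ofReal (fext f z) ∂S.μ
        ≤ ∫⁻ _ in Set.Ioc y 1, ENNReal.ofReal (f 1) ∂S.μ :=
          lintegral_mono fun z => ENNReal.ofReal_le_ofReal (fext_le hmono hpos z)
      _ = ENNReal.ofReal (f 1) * S.μ (Set.Ioc y 1) := setLIntegral_const _ _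
      _ < ⊤ := ENNReal.mul_lt_top ENNReal.ofReal_lt_top
          (mu_Ioc_lt_top S hy.1 (hy.2.trans hx.2))
  rw [integral_toReal hanti.measurable.aemeasurable hfin, swap_lemma S _ hgm hx]
  congr 1
  refine setLIntegral_congr_fun measurableSet_Ioc (fun z hz => ?_)
  rw [fext_eq hz, ← ENNReal.ofReal_mul (le_min hz.1.le hx.1.le)]

lemma core_fin (S : MString) (hmono : MonotoneOn f (Set.Ioc 0 1))
    (hpos : ∀ z ∈ Set.Ioc (0:ℝ) 1, 0 ≤ f z) {x : ℝ} (hx : x ∈ Set.Ioc (0:ℝ) 1) :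
    (∫⁻ z in Set.Ioc (0:ℝ) 1, ENNReal.ofReal (min z x * f z) ∂S.μ) < ⊤ := by
  calc (∫⁻ z in Set.Ioc (0:ℝ) 1, ENNReal.ofReal (min z x * f z) ∂S.μ)
      ≤ ∫⁻ z in Set.Ioc (0:ℝ) 1, ENNReal.ofReal (f 1) * ENNReal.ofReal z ∂S.μ := by
        refine lintegral_mono_ae ((ae_restrict_iff' measurableSet_Ioc).2
          (Filter.Eventually.of_forall fun z hz => ?_))
        rw [← ENNReal.ofReal_mul (hpos 1 ⟨one_pos, le_rfl⟩)]
        refine ENNReal.ofReal_le_ofReal ?_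
        calc min z x * f z ≤ z * f z :=
              mul_le_mul_of_nonneg_right (min_le_left _ _) (hpos z hz)
          _ ≤ z * f 1 := mul_le_mul_of_nonneg_left
              (hmono hz ⟨one_pos, le_rfl⟩ hz.2) hz.1.le
          _ = f 1 * z := mul_comm _ _
    _ = ENNReal.ofReal (f 1) * ∫⁻ z in Set.Ioc (0:ℝ) 1, ENNReal.ofReal z ∂S.μ :=
        lintegral_const_mul _ ENNReal.measurable_ofReal
    _ < ⊤ := ENNReal.mul_lt_top ENNReal.ofReal_lt_top S.int_fin

end StringProof
namespace StringProof

lemma m_monoOn (S : MString) : MonotoneOn S.m (Set.Ioc 0 1) :=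
  fun _ ha _ _ hab => m_mono S ha.1 hab

lemma m_nonneg_ae (S : MString) {x : ℝ} (hx : x ∈ Set.Ioc (0:ℝ) 1) :
    0 ≤ᵐ[volume.restrict (Set.Ioc (0:ℝ) x)] fun y => S.m 1 - S.m y :=
  (ae_restrict_iff' measurableSet_Ioc).2 (Filter.Eventually.of_forall
    fun y hy => sub_nonneg.2 (m_mono S hy.1 (hy.2.trans hx.2)))

lemma int_m (S : MString) : IntegrableOn (fun y => S.m 1 - S.m y) (Set.Ioc 0 1) volume := by
  constructor
  · exact (aemeasurable_const.sub
      (aemeasurable_restrict_of_monotoneOn measurableSet_Ioc (m_monoOn S))).aestronglyMeasurable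
  · rw [hasFiniteIntegral_iff_ofReal (m_nonneg_ae S ⟨one_pos, le_rfl⟩)]
    have h1 : ∀ y ∈ Set.Ioc (0:ℝ) 1, ENNReal.ofReal (S.m 1 - S.m y)
        = ∫⁻ _ in Set.Ioc y 1, (1:ℝ≥0∞) ∂S.μ := by
      intro y hy
      rw [setLIntegral_one, mu_Ioc S hy.1 hy.2]
    rw [setLIntegral_congr_fun measurableSet_Ioc h1,
      swap_lemma S (fun _ => 1) measurable_const ⟨one_pos, le_rfl⟩]
    calc (∫⁻ z in Set.Ioc (0:ℝ) 1, ENNReal.ofReal (min z 1) * 1 ∂S.μ)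
        ≤ ∫⁻ z in Set.Ioc (0:ℝ) 1, ENNReal.ofReal z ∂S.μ := by
          refine lintegral_mono fun z => ?_
          rw [mul_one]
          exact ENNReal.ofReal_le_ofReal (min_le_left _ _)
      _ < ⊤ := S.int_fin

lemma fk_one (S : MString) {x : ℝ} (hx : 0 ≤ x) :
    fk S 1 x = ∫ y in Set.Ioc (0:ℝ) x, (S.m 1 - S.m y) := by
  have hG : MString.G S 1 x = ∫ y in (0:ℝ)..x, MString.mtilde S y := rfl
  unfold fk
  rw [hG, intervalIntegral.integral_of_le hx, pow_one, neg_one_mul, ← integral_neg]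
  congr 1
  funext y
  simp [MString.mtilde]

lemma fk_base (S : MString) :
    (∀ x ∈ Set.Ioc (0:ℝ) 1, 0 ≤ fk S 1 x) ∧ MonotoneOn (fk S 1) (Set.Ioc 0 1) := by
  constructor
  · intro x hx
    rw [fk_one S hx.1.le]
    exact setIntegral_nonneg measurableSet_Ioc
      (fun y hy => sub_nonneg.2 (m_mono S hy.1 (hy.2.trans hx.2)))
  · intro a ha b hb hab
    rw [fk_one S ha.1.le, fk_one S hb.1.le]
    exact setIntegral_mono_set ((int_m S).mono_set (Set.Ioc_subset_Ioc_right hb.2))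
      (m_nonneg_ae S hb) (HasSubset.Subset.eventuallyLE (Set.Ioc_subset_Ioc_right hab))

lemma fk_succ (S : MString) (k : ℕ) (hk : 1 ≤ k)
    (ha : (∀ x ∈ Set.Ioc (0:ℝ) 1, 0 ≤ fk S k x) ∧ MonotoneOn (fk S k) (Set.Ioc 0 1)) :
    ∀ x ∈ Set.Ioc (0:ℝ) 1, fk S (k+1) x =
      (∫⁻ z in Set.Ioc (0:ℝ) 1, ENNReal.ofReal (min z x * fk S k z) ∂S.μ).toReal := by
  obtain ⟨j, rfl⟩ : ∃ j, k = j + 1 := ⟨k - 1, (Nat.succ_pred_eq_of_pos hk).symm⟩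
  intro x hx
  have hGdef : MString.G S (j+2) x
      = - ∫ y in (0:ℝ)..x, MString.jInt S (MString.G S (j+1)) y := rfl
  have h0 : fk S (j+1+1) x
      = (-1:ℝ)^(j+1) * ∫ y in Set.Ioc (0:ℝ) x, MString.jInt S (MString.G S (j+1)) y := by
    unfold fk
    rw [show j+1+1 = j+2 from rfl, hGdef, intervalIntegral.integral_of_le hx.1.le,
      show ((-1:ℝ))^(j+2) = (-1)^(j+1) * (-1) from pow_succ _ _]
    ring
  have h1 : ∀ y ∈ Set.Ioc (0:ℝ) x, MString.jInt S (MString.G S (j+1)) y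
      = (-1:ℝ)^(j+1) * ∫ z in Set.Ioc y 1, fk S (j+1) z ∂S.μ := by
    intro y hy
    unfold MString.jInt
    rw [if_pos (hy.2.trans hx.2),
      setIntegral_congr_fun measurableSet_Ioc (fun z _ => G_eq_fk S (j+1) z),
      integral_const_mul]
  rw [h0, setIntegral_congr_fun measurableSet_Ioc h1, integral_const_mul, ← mul_assoc,
    ← mul_pow]
  norm_num
  exact core S ha.2 ha.1 hx

lemma fk_A (S : MString) : ∀ k, 1 ≤ k →
    (∀ x ∈ Set.Ioc (0:ℝ) 1, 0 ≤ fk S k x) ∧ MonotoneOn (fk S k) (Set.Ioc 0 1) := by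
  intro k
  induction k with
  | zero => omega
  | succ n ih =>
    intro _
    by_cases hn : 1 ≤ n
    · have hA := ih hn
      constructor
      · intro x hx
        rw [fk_succ S n hn hA x hx]
        exact ENNReal.toReal_nonneg
      · intro a ha b hb hab
        rw [fk_succ S n hn hA a ha, fk_succ S n hn hA b hb]
        refine ENNReal.toReal_mono (core_fin S hA.2 hA.1 hb).ne ?_
        refine lintegral_mono_ae ((ae_restrict_iff' measurableSet_Ioc).2
          (Filter.Eventually.of_forall fun z hz => ?_))
        exact ENNReal.ofReal_le_ofReal
          (mul_le_mul_of_nonneg_right (min_le_min le_rfl hab) (hA.1 z hz))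
    · have hn0 : n = 0 := by omega
      subst hn0
      exact fk_base S

lemma F_eq (S : MString) :
    MString.F S 1 = (∫⁻ z in Set.Ioc (0:ℝ) 1, ENNReal.ofReal z ∂S.μ).toReal := by
  unfold MString.F
  exact integral_eq_lintegral_of_nonneg_ae ((ae_restrict_iff' measurableSet_Ioc).2
    (Filter.Eventually.of_forall fun y hy => hy.1.le)) measurable_id.aestronglyMeasurable

lemma F_nonneg (S : MString) : 0 ≤ MString.F S 1 := by
  rw [F_eq]; exact ENNReal.toReal_nonneg

lemma f1_eq (S : MString) {x : ℝ} (hx : x ∈ Set.Ioc (0:ℝ) 1) :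
    fk S 1 x = (∫⁻ z in Set.Ioc (0:ℝ) 1, ENNReal.ofReal (min z x) ∂S.μ).toReal := by
  rw [fk_one S hx.1.le]
  have h1 : ∀ y ∈ Set.Ioc (0:ℝ) x, (S.m 1 - S.m y)
      = (∫⁻ _ in Set.Ioc y 1, (1:ℝ≥0∞) ∂S.μ).toReal := by
    intro y hy
    rw [setLIntegral_one, mu_Ioc_toReal S hy.1 (hy.2.trans hx.2)]
  rw [setIntegral_congr_fun measurableSet_Ioc h1]
  have hanti : Antitone (fun y => ∫⁻ _ in Set.Ioc y 1, (1:ℝ≥0∞) ∂S.μ) :=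
    fun y1 y2 h => lintegral_mono_set (Set.Ioc_subset_Ioc_left h)
  have hfin : ∀ᵐ y ∂(volume.restrict (Set.Ioc (0:ℝ) x)),
      (∫⁻ _ in Set.Ioc y 1, (1:ℝ≥0∞) ∂S.μ) < ⊤ := by
    rw [ae_restrict_iff' measurableSet_Ioc]
    refine Filter.Eventually.of_forall fun y hy => ?_
    rw [setLIntegral_one]
    exact mu_Ioc_lt_top S hy.1 (hy.2.trans hx.2)
  rw [integral_toReal hanti.measurable.aemeasurable hfin,
    swap_lemma S (fun _ => 1) measurable_const hx]
  simp [mul_one]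

lemma f1_ub (S : MString) {x : ℝ} (hx : x ∈ Set.Ioc (0:ℝ) 1) : fk S 1 x ≤ MString.F S 1 := by
  rw [f1_eq S hx, F_eq S]
  exact ENNReal.toReal_mono S.int_fin.ne
    (lintegral_mono fun z => ENNReal.ofReal_le_ofReal (min_le_left _ _))

lemma f1_lb (S : MString) {x : ℝ} (hx : x ∈ Set.Ioc (0:ℝ) 1) :
    x * (S.m 1 - S.m x) ≤ fk S 1 x := by
  rw [fk_one S hx.1.le]
  have h : x * (S.m 1 - S.m x) = ∫ _ in Set.Ioc (0:ℝ) x, (S.m 1 - S.m x) := by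
    rw [setIntegral_const, Real.volume_real_Ioc_of_le hx.1.le, sub_zero,
      smul_eq_mul]
  rw [h]
  refine setIntegral_mono_on
    (integrableOn_const (by rw [Real.volume_Ioc]; exact ENNReal.ofReal_ne_top))
    ((int_m S).mono_set (Set.Ioc_subset_Ioc_right hx.2)) measurableSet_Ioc
    (fun y hy => sub_le_sub_left (m_mono S hy.1 hy.2) _)

end StringProof
namespace StringProof

lemma ratio (S : MString) : ∀ k, 1 ≤ k → ∀ x ∈ Set.Ioc (0:ℝ) 1,
    fk S (k+1) x ≤ 2 * MString.F S 1 * fk S k x := by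
  intro k
  induction k with
  | zero => omega
  | succ n ih =>
    intro _ x hx
    by_cases hn : 1 ≤ n
    · -- inductive step
      have hAn := fk_A S n hn
      have hAn1 := fk_A S (n+1) (by omega)
      rw [fk_succ S (n+1) (by omega) hAn1 x hx]
      have key : (∫⁻ z in Set.Ioc (0:ℝ) 1, ENNReal.ofReal (min z x * fk S (n+1) z) ∂S.μ)
          ≤ ENNReal.ofReal (2 * MString.F S 1) *
            ∫⁻ z in Set.Ioc (0:ℝ) 1, ENNReal.ofReal (min z x * fk S n z) ∂S.μ := by
        rw [← lintegral_const_mul' _ _ ENNReal.ofReal_ne_top]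
        refine lintegral_mono_ae ((ae_restrict_iff' measurableSet_Ioc).2
          (Filter.Eventually.of_forall fun z hz => ?_))
        rw [← ENNReal.ofReal_mul (mul_nonneg (by norm_num) (F_nonneg S))]
        refine ENNReal.ofReal_le_ofReal ?_
        have h1 : min z x * fk S (n+1) z ≤ min z x * (2 * MString.F S 1 * fk S n z) :=
          mul_le_mul_of_nonneg_left (ih hn z hz) (le_min hz.1.le hx.1.le)
        calc min z x * fk S (n+1) z ≤ min z x * (2 * MString.F S 1 * fk S n z) := h1
          _ = 2 * MString.F S 1 * (min z x * fk S n z) := by ring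
      calc (∫⁻ z in Set.Ioc (0:ℝ) 1, ENNReal.ofReal (min z x * fk S (n+1) z) ∂S.μ).toReal
          ≤ (ENNReal.ofReal (2 * MString.F S 1) *
            ∫⁻ z in Set.Ioc (0:ℝ) 1, ENNReal.ofReal (min z x * fk S n z) ∂S.μ).toReal := by
            refine ENNReal.toReal_mono ?_ key
            exact (ENNReal.mul_lt_top ENNReal.ofReal_lt_top (core_fin S hAn.2 hAn.1 hx)).ne
        _ = 2 * MString.F S 1 * fk S (n+1) x := by
            rw [ENNReal.toReal_mul, ENNReal.toReal_ofReal (mul_nonneg (by norm_num) (F_nonneg S)),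
              ← fk_succ S n hn hAn x hx]
    · -- base case n = 0
      have hn0 : n = 0 := by omega
      subst hn0
      have hA1 := fk_base S
      rw [fk_succ S 1 le_rfl hA1 x hx]
      set L := ∫⁻ z in Set.Ioc (0:ℝ) 1, ENNReal.ofReal z ∂S.μ with hL
      have hsplit : (∫⁻ z in Set.Ioc (0:ℝ) 1, ENNReal.ofReal (min z x * fk S 1 z) ∂S.μ)
          = (∫⁻ z in Set.Ioc (0:ℝ) x, ENNReal.ofReal (min z x * fk S 1 z) ∂S.μ)
            + ∫⁻ z in Set.Ioc x 1, ENNReal.ofReal (min z x * fk S 1 z) ∂S.μ := by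
        rw [← Set.Ioc_union_Ioc_eq_Ioc hx.1.le hx.2,
          lintegral_union measurableSet_Ioc (Set.Ioc_disjoint_Ioc_of_le le_rfl)]
      have hP1 : (∫⁻ z in Set.Ioc (0:ℝ) x, ENNReal.ofReal (min z x * fk S 1 z) ∂S.μ)
          ≤ ENNReal.ofReal (fk S 1 x) * L := by
        calc (∫⁻ z in Set.Ioc (0:ℝ) x, ENNReal.ofReal (min z x * fk S 1 z) ∂S.μ)
            ≤ ∫⁻ z in Set.Ioc (0:ℝ) x, ENNReal.ofReal (fk S 1 x) * ENNReal.ofReal z ∂S.μ := by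
              refine lintegral_mono_ae ((ae_restrict_iff' measurableSet_Ioc).2
                (Filter.Eventually.of_forall fun z hz => ?_))
              have hz1 : z ∈ Set.Ioc (0:ℝ) 1 := ⟨hz.1, hz.2.trans hx.2⟩
              rw [← ENNReal.ofReal_mul (hA1.1 x hx)]
              refine ENNReal.ofReal_le_ofReal ?_
              calc min z x * fk S 1 z ≤ z * fk S 1 x :=
                    mul_le_mul (min_le_left _ _) (hA1.2 hz1 hx hz.2) (hA1.1 z hz1) hz.1.le
                _ = fk S 1 x * z := mul_comm _ _
          _ = ENNReal.ofReal (fk S 1 x) * ∫⁻ z in Set.Ioc (0:ℝ) x, ENNReal.ofReal z ∂S.μ :=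
              lintegral_const_mul' _ _ ENNReal.ofReal_ne_top
          _ ≤ ENNReal.ofReal (fk S 1 x) * L :=
              mul_le_mul_right (lintegral_mono_set (Set.Ioc_subset_Ioc_right hx.2)) _
      have hP2 : (∫⁻ z in Set.Ioc x 1, ENNReal.ofReal (min z x * fk S 1 z) ∂S.μ)
          ≤ ENNReal.ofReal (MString.F S 1 * fk S 1 x) := by
        calc (∫⁻ z in Set.Ioc x 1, ENNReal.ofReal (min z x * fk S 1 z) ∂S.μ)
            ≤ ∫⁻ _ in Set.Ioc x 1, ENNReal.ofReal (x * MString.F S 1) ∂S.μ := by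
              refine lintegral_mono_ae ((ae_restrict_iff' measurableSet_Ioc).2
                (Filter.Eventually.of_forall fun z hz => ?_))
              have hz1 : z ∈ Set.Ioc (0:ℝ) 1 := ⟨hx.1.trans hz.1, hz.2⟩
              refine ENNReal.ofReal_le_ofReal ?_
              rw [min_eq_right hz.1.le]
              exact mul_le_mul_of_nonneg_left (f1_ub S hz1) hx.1.le
          _ = ENNReal.ofReal (x * MString.F S 1) * S.μ (Set.Ioc x 1) := setLIntegral_const _ _
          _ = ENNReal.ofReal (x * MString.F S 1 * (S.m 1 - S.m x)) := by
              rw [mu_Ioc S hx.1 hx.2, ← ENNReal.ofReal_mul (mul_nonneg hx.1.le (F_nonneg S))]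
          _ ≤ ENNReal.ofReal (MString.F S 1 * fk S 1 x) := by
              refine ENNReal.ofReal_le_ofReal ?_
              calc x * MString.F S 1 * (S.m 1 - S.m x)
                  = MString.F S 1 * (x * (S.m 1 - S.m x)) := by ring
                _ ≤ MString.F S 1 * fk S 1 x :=
                    mul_le_mul_of_nonneg_left (f1_lb S hx) (F_nonneg S)
      have hfin : ENNReal.ofReal (fk S 1 x) * L + ENNReal.ofReal (MString.F S 1 * fk S 1 x) ≠ ⊤ := by
        refine ENNReal.add_ne_top.2 ⟨?_, ENNReal.ofReal_ne_top⟩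
        exact (ENNReal.mul_lt_top ENNReal.ofReal_lt_top S.int_fin).ne
      calc (∫⁻ z in Set.Ioc (0:ℝ) 1, ENNReal.ofReal (min z x * fk S 1 z) ∂S.μ).toReal
          ≤ (ENNReal.ofReal (fk S 1 x) * L + ENNReal.ofReal (MString.F S 1 * fk S 1 x)).toReal := by
            refine ENNReal.toReal_mono hfin ?_
            rw [hsplit]
            exact add_le_add hP1 hP2
        _ = fk S 1 x * MString.F S 1 + MString.F S 1 * fk S 1 x := by
            rw [ENNReal.toReal_add ((ENNReal.mul_lt_top ENNReal.ofReal_lt_top S.int_fin).ne)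
              ENNReal.ofReal_ne_top, ENNReal.toReal_mul,
              ENNReal.toReal_ofReal (hA1.1 x hx), ← F_eq S,
              ENNReal.toReal_ofReal (mul_nonneg (F_nonneg S) (hA1.1 x hx))]
        _ = 2 * MString.F S 1 * fk S 1 x := by ring

lemma ratio_abs (S : MString) (k : ℕ) (hk : 1 ≤ k) {x : ℝ} (hx : x ∈ Set.Ioc (0:ℝ) 1) :
    |MString.G S (k+1) x / MString.G S k x| ≤ 2 * MString.F S 1 := by
  have hA1 := (fk_A S k hk).1 x hx
  have hA2 := (fk_A S (k+1) (by omega)).1 x hx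
  have e : ∀ j : ℕ, 0 ≤ fk S j x → |MString.G S j x| = fk S j x := by
    intro j hj
    rw [G_eq_fk S j x, abs_mul, abs_pow, abs_neg, abs_one, one_pow, one_mul, abs_of_nonneg hj]
  rw [abs_div, e k hA1, e (k+1) hA2]
  rcases eq_or_lt_of_le hA1 with h0 | h0
  · rw [← h0, div_zero]
    exact mul_nonneg (by norm_num) (F_nonneg S)
  · rw [div_le_iff₀ h0]
    exact ratio S k hk x hx

end StringProof

theorem stmt11 (Sn : ℕ → MString)
    (hm : ∀ x : ℝ, 0 < x → Tendsto (fun n => (Sn n).m x) atTop (nhds 0))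
    (hint : Tendsto (fun n => MString.F (Sn n) 1) atTop (nhds 0)) :
    ∀ k : ℕ, 1 ≤ k →
      Tendsto
        (fun n => sSup ((fun y => |MString.G (Sn n) (k + 1) y / MString.G (Sn n) k y|)
          '' Set.Ioc (0:ℝ) 1)) atTop (nhds 0) := by
  intro k hk
  have h0 : ∀ n, (0:ℝ) ≤ sSup ((fun y => |MString.G (Sn n) (k + 1) y / MString.G (Sn n) k y|)
      '' Set.Ioc (0:ℝ) 1) := by
    intro n
    refine Real.sSup_nonneg' ⟨_, Set.mem_image_of_mem _ (show (1:ℝ) ∈ Set.Ioc (0:ℝ) 1 from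
      ⟨one_pos, le_rfl⟩), abs_nonneg _⟩
  have hle : ∀ n, sSup ((fun y => |MString.G (Sn n) (k + 1) y / MString.G (Sn n) k y|)
      '' Set.Ioc (0:ℝ) 1) ≤ 2 * MString.F (Sn n) 1 := by
    intro n
    refine Real.sSup_le ?_ (mul_nonneg (by norm_num) (StringProof.F_nonneg (Sn n)))
    rintro v ⟨y, hy, rfl⟩
    exact StringProof.ratio_abs (Sn n) k hk hy
  have hg : Tendsto (fun n => 2 * MString.F (Sn n) 1) atTop (nhds 0) := by
    simpa using hint.const_mul 2
  exact squeeze_zero h0 hle hg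
end

section
/- Let m_n ∈ 𝓜 (n ∈ ℕ) with m_n →^G 0, witnessed by an integer d ≥ 1 such that for every n, ∫_{(0,1]} (−1)^d G^d_{m_n}(x) dm_n(x) < ∞ (so that d ≥ max(d(m_n),1) and φ^d_{m_n} is defined). Then for every λ > 0, lim_{n→∞} c^d_{m_n}(λ) = 0. -/
open MeasureTheory Filter Topology Set
open scoped ENNReal NNReal

namespace MString

variable (S : MString)

lemma m_mono : MonotoneOn S.m (Set.Ioi 0) := S.strict_mono.monotoneOn

lemma measure_Ioc_lt_top {a b : ℝ} (ha : 0 < a) : S.μ (Set.Ioc a b) < ⊤ := by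
  rcases le_or_gt a b with h | h
  · rw [S.stieltjes a b ha h]; exact ENNReal.ofReal_lt_top
  · rw [Set.Ioc_eq_empty h.not_gt]; simp

lemma toReal_measure_Ioc {a b : ℝ} (ha : 0 < a) (hab : a ≤ b) :
    (S.μ (Set.Ioc a b)).toReal = S.m b - S.m a := by
  rw [S.stieltjes a b ha hab, ENNReal.toReal_ofReal]
  exact sub_nonneg.2 (S.m_mono ha (lt_of_lt_of_le ha hab) hab)

lemma lint_id (x : ℝ) : ∫⁻ y in Set.Ioc (0:ℝ) x, ENNReal.ofReal y ∂S.μ < ⊤ := by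
  set M := max 1 x with hM
  have hsub : Set.Ioc (0:ℝ) x ⊆ Set.Ioc 0 1 ∪ Set.Ioc 1 M := by
    intro y hy
    rcases le_or_gt y 1 with h | h
    · exact Or.inl ⟨hy.1, h⟩
    · exact Or.inr ⟨h, hy.2.trans (le_max_right _ _)⟩
  calc ∫⁻ y in Set.Ioc (0:ℝ) x, ENNReal.ofReal y ∂S.μ
      ≤ ∫⁻ y in Set.Ioc (0:ℝ) 1 ∪ Set.Ioc 1 M, ENNReal.ofReal y ∂S.μ :=
        lintegral_mono_set hsub
    _ ≤ (∫⁻ y in Set.Ioc (0:ℝ) 1, ENNReal.ofReal y ∂S.μ)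
        + ∫⁻ y in Set.Ioc (1:ℝ) M, ENNReal.ofReal y ∂S.μ := lintegral_union_le _ _ _
    _ < ⊤ := by
        refine ENNReal.add_lt_top.2 ⟨S.int_fin, ?_⟩
        calc ∫⁻ y in Set.Ioc (1:ℝ) M, ENNReal.ofReal y ∂S.μ
            ≤ ∫⁻ _ in Set.Ioc (1:ℝ) M, ENNReal.ofReal M ∂S.μ := by
              refine setLIntegral_mono measurable_const fun y hy => ?_
              exact ENNReal.ofReal_le_ofReal hy.2
          _ = ENNReal.ofReal M * S.μ (Set.Ioc 1 M) := by
              rw [setLIntegral_const]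
          _ < ⊤ := ENNReal.mul_lt_top ENNReal.ofReal_lt_top (S.measure_Ioc_lt_top one_pos)

lemma integrableOn_id (x : ℝ) : IntegrableOn (fun y => y) (Set.Ioc 0 x) S.μ := by
  refine ⟨measurable_id.aestronglyMeasurable, ?_⟩
  rw [hasFiniteIntegral_iff_ofReal ?_]
  · exact S.lint_id x
  · exact ae_restrict_of_forall_mem measurableSet_Ioc fun y hy => hy.1.le

lemma F_nonneg (x : ℝ) : 0 ≤ S.F x :=
  setIntegral_nonneg measurableSet_Ioc fun y hy => hy.1.le

lemma F_mono : Monotone S.F := by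
  intro x y hxy
  refine setIntegral_mono_set (S.integrableOn_id y) ?_ ?_
  · exact ae_restrict_of_forall_mem measurableSet_Ioc fun z hz => hz.1.le
  · exact HasSubset.Subset.eventuallyLE (Set.Ioc_subset_Ioc_right hxy)

lemma F_eq_toReal (x : ℝ) :
    S.F x = (∫⁻ y in Set.Ioc (0:ℝ) x, ENNReal.ofReal y ∂S.μ).toReal := by
  exact integral_eq_lintegral_of_nonneg_ae
    (ae_restrict_of_forall_mem measurableSet_Ioc fun y hy => hy.1.le)
    measurable_id.aestronglyMeasurable

lemma integrableOn_of_le_linear {f : ℝ → ℝ} {C t : ℝ}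
    (hm : AEStronglyMeasurable f (S.μ.restrict (Set.Ioc 0 t)))
    (hb : ∀ y ∈ Set.Ioc (0:ℝ) t, |f y| ≤ C * y) :
    IntegrableOn f (Set.Ioc 0 t) S.μ := by
  refine Integrable.mono' ((S.integrableOn_id t).const_mul C) hm ?_
  exact ae_restrict_of_forall_mem measurableSet_Ioc fun y hy => hb y hy

lemma abs_mBul_le {f : ℝ → ℝ} {C t : ℝ}
    (hf : IntegrableOn f (Set.Ioc 0 t) S.μ)
    (hb : ∀ y ∈ Set.Ioc (0:ℝ) t, |f y| ≤ C * y) :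
    |∫ y in Set.Ioc (0:ℝ) t, f y ∂S.μ| ≤ C * S.F t := by
  calc |∫ y in Set.Ioc (0:ℝ) t, f y ∂S.μ| ≤ ∫ y in Set.Ioc (0:ℝ) t, |f y| ∂S.μ :=
        (norm_integral_le_integral_norm f).trans_eq (by simp [Real.norm_eq_abs])
    _ ≤ ∫ y in Set.Ioc (0:ℝ) t, C * y ∂S.μ := by
        refine setIntegral_mono_on hf.abs ((S.integrableOn_id t).const_mul C)
          measurableSet_Ioc hb
    _ = C * S.F t := integral_const_mul C _


lemma smIter_id_facts : ∀ k : ℕ, Monotone (smIter S k id) ∧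
    (∀ x : ℝ, 0 ≤ x → 0 ≤ smIter S k id x ∧ smIter S k id x ≤ x * S.F x ^ k) := by
  intro k
  induction k with
  | zero => exact ⟨monotone_id, fun x hx => ⟨hx, by simp [smIter]⟩⟩
  | succ k ih =>
    obtain ⟨hmono, hbd⟩ := ih
    set a := smIter S k id with ha
    have habs : ∀ t : ℝ, ∀ y ∈ Set.Ioc (0:ℝ) t, |a y| ≤ S.F t ^ k * y := by
      intro t y hy
      have h1 := hbd y hy.1.le
      rw [abs_of_nonneg h1.1, mul_comm]
      have h2 : S.F y ^ k ≤ S.F t ^ k := pow_le_pow_left₀ (S.F_nonneg y) (S.F_mono hy.2) k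
      calc a y ≤ y * S.F y ^ k := h1.2
        _ ≤ y * S.F t ^ k := by nlinarith [hy.1.le]
    have hint : ∀ t : ℝ, IntegrableOn a (Set.Ioc 0 t) S.μ := fun t =>
      S.integrableOn_of_le_linear hmono.measurable.aestronglyMeasurable (habs t)
    set b := S.mBul a with hb
    have hbnn : ∀ t, 0 ≤ b t := fun t =>
      setIntegral_nonneg measurableSet_Ioc fun y hy => (hbd y hy.1.le).1
    have hbmono : Monotone b := by
      intro t1 t2 h12
      exact setIntegral_mono_set (hint t2)
        (ae_restrict_of_forall_mem measurableSet_Ioc fun y hy => (hbd y hy.1.le).1)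
        (HasSubset.Subset.eventuallyLE (Set.Ioc_subset_Ioc_right h12))
    have hbbd : ∀ t, 0 ≤ t → b t ≤ S.F t ^ (k+1) := by
      intro t ht
      have h := S.abs_mBul_le (hint t) (habs t)
      calc b t ≤ S.F t ^ k * S.F t := (le_abs_self (b t)).trans h
        _ = S.F t ^ (k+1) := (pow_succ _ _).symm
    have hii : ∀ u v : ℝ, IntervalIntegrable b volume u v := fun u v =>
      hbmono.intervalIntegrable
    have hs : ∀ x : ℝ, smIter S (k+1) id x = ∫ y in (0:ℝ)..x, b y := fun x => rfl
    refine ⟨?_, ?_⟩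
    · intro x1 x2 h12
      rw [hs, hs, ← intervalIntegral.integral_add_adjacent_intervals (hii 0 x1) (hii x1 x2)]
      have : 0 ≤ ∫ y in x1..x2, b y :=
        intervalIntegral.integral_nonneg h12 fun u _ => hbnn u
      linarith
    · intro x hx
      refine ⟨by rw [hs]; exact intervalIntegral.integral_nonneg hx fun u _ => hbnn u, ?_⟩
      rw [hs]
      calc (∫ y in (0:ℝ)..x, b y) ≤ ∫ _ in (0:ℝ)..x, S.F x ^ (k+1) := by
            refine intervalIntegral.integral_mono_on hx (hii 0 x) intervalIntegrable_const ?_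
            intro u hu
            exact (hbbd u hu.1).trans
              (pow_le_pow_left₀ (S.F_nonneg u) (S.F_mono hu.2) _)
        _ = x * S.F x ^ (k+1) := by simp


lemma term_nonneg {lam x : ℝ} (hlam : 0 ≤ lam) (hx : 0 ≤ x) (k : ℕ) :
    0 ≤ lam ^ k * smIter S k id x :=
  mul_nonneg (pow_nonneg hlam k) ((S.smIter_id_facts k).2 x hx).1

lemma term_le {lam x : ℝ} (hlam : 0 ≤ lam) (hx : 0 ≤ x) (k : ℕ) :
    lam ^ k * smIter S k id x ≤ x * (lam * S.F x) ^ k := by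
  rw [mul_pow]
  have h := ((S.smIter_id_facts k).2 x hx).2
  have h2 : (0:ℝ) ≤ lam ^ k := pow_nonneg hlam k
  calc lam ^ k * smIter S k id x ≤ lam ^ k * (x * S.F x ^ k) := by
        exact mul_le_mul_of_nonneg_left h h2
    _ = x * (lam ^ k * S.F x ^ k) := by ring

lemma summable_psi {lam x : ℝ} (hlam : 0 ≤ lam) (hx : 0 ≤ x) (hq : lam * S.F x < 1) :
    Summable (fun k : ℕ => lam ^ k * smIter S k id x) := by
  refine Summable.of_nonneg_of_le (S.term_nonneg hlam hx) (S.term_le hlam hx) ?_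
  exact (summable_geometric_of_lt_one (mul_nonneg hlam (S.F_nonneg x)) hq).mul_left x

lemma psi_inv_sq_le {lam : ℝ} (hlam : 0 ≤ lam) {y : ℝ} (hy : 0 < y) :
    (psi S lam y ^ 2)⁻¹ ≤ (y ^ 2)⁻¹ := by
  by_cases hs : Summable (fun k : ℕ => lam ^ k * smIter S k id y)
  · have hge : y ≤ psi S lam y := by
      have h := Summable.le_tsum hs 0 fun j _ => S.term_nonneg hlam hy.le j
      simpa [smIter, psi] using h
    have h2 : (0:ℝ) < y ^ 2 := by positivity
    have h3 : y ^ 2 ≤ psi S lam y ^ 2 := by nlinarith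
    exact inv_anti₀ h2 h3
  · rw [psi, tsum_eq_zero_of_not_summable hs]
    norm_num
    positivity

lemma abs_psi_sub_le {lam x : ℝ} (hlam : 0 ≤ lam) (hx : 0 ≤ x) (hq : lam * S.F x < 1) :
    |psi S lam x - x| ≤ x * (lam * S.F x) * (1 - lam * S.F x)⁻¹ := by
  set q := lam * S.F x with hqdef
  have hq0 : 0 ≤ q := mul_nonneg hlam (S.F_nonneg x)
  have hsum := S.summable_psi hlam hx hq
  have htail : Summable (fun k : ℕ => lam ^ (k+1) * smIter S (k+1) id x) :=
    (summable_nat_add_iff 1).mpr hsum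
  have h0 : psi S lam x = x + ∑' k : ℕ, lam ^ (k+1) * smIter S (k+1) id x := by
    rw [psi, Summable.tsum_eq_zero_add hsum]
    simp [smIter]
  rw [h0]
  have hgeo : Summable (fun k : ℕ => x * q ^ (k+1)) := by
    refine Summable.mul_left x ?_
    exact (summable_nat_add_iff 1).mpr (summable_geometric_of_lt_one hq0 hq)
  have habs0 : Summable (fun k : ℕ => |lam ^ (k+1) * smIter S (k+1) id x|) := by
    refine htail.congr fun k => ?_
    exact (abs_of_nonneg (S.term_nonneg hlam hx _)).symm
  have habs : |∑' k : ℕ, lam ^ (k+1) * smIter S (k+1) id x|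
      ≤ ∑' k : ℕ, x * q ^ (k+1) := by
    have hnorm : ‖∑' k : ℕ, lam ^ (k+1) * smIter S (k+1) id x‖
        ≤ ∑' k : ℕ, ‖lam ^ (k+1) * smIter S (k+1) id x‖ := norm_tsum_le_tsum_norm habs0
    simp only [Real.norm_eq_abs] at hnorm
    refine hnorm.trans ?_
    refine Summable.tsum_le_tsum (fun k => ?_) habs0 hgeo
    rw [abs_of_nonneg (S.term_nonneg hlam hx _)]
    exact S.term_le hlam hx (k+1)
  have hsumval : ∑' k : ℕ, x * q ^ (k+1) = x * q * (1-q)⁻¹ := by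
    rw [tsum_mul_left]
    have : ∑' k : ℕ, q ^ (k+1) = q * (1-q)⁻¹ := by
      simp only [pow_succ']
      rw [tsum_mul_left, tsum_geometric_of_lt_one hq0 hq]
    rw [this]; ring
  rw [add_sub_cancel_left]
  exact habs.trans_eq hsumval


lemma psi_eq_toReal {lam : ℝ} (hlam : 0 ≤ lam) {y : ℝ} (hy : 0 ≤ y) :
    psi S lam y = (∑' k : ℕ, ENNReal.ofReal (lam ^ k * smIter S k id y)).toReal := by
  by_cases hs : Summable (fun k : ℕ => lam ^ k * smIter S k id y)
  · rw [psi, ← ENNReal.ofReal_tsum_of_nonneg (fun k => S.term_nonneg hlam hy k) hs,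
      ENNReal.toReal_ofReal (tsum_nonneg fun k => S.term_nonneg hlam hy k)]
  · have hnn : ∀ k : ℕ, ((lam ^ k * smIter S k id y).toNNReal : ℝ)
        = lam ^ k * smIter S k id y := fun k =>
      Real.coe_toNNReal _ (S.term_nonneg hlam hy k)
    have hns : ¬ Summable (fun k : ℕ => (lam ^ k * smIter S k id y).toNNReal) := by
      intro hcon
      apply hs
      have := NNReal.summable_coe.mpr hcon
      exact this.congr hnn
    have htop : (∑' k : ℕ, ENNReal.ofReal (lam ^ k * smIter S k id y)) = ⊤ := by
      have := (not_iff_not.mpr ENNReal.tsum_coe_ne_top_iff_summable).mpr hns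
      simpa [ENNReal.ofReal] using not_not.mp this
    rw [psi, tsum_eq_zero_of_not_summable hs, htop, ENNReal.toReal_top]

lemma psi_aesm_inv_sq {lam : ℝ} (hlam : 0 ≤ lam) :
    AEStronglyMeasurable (fun y => (psi S lam y ^ 2)⁻¹)
      (volume.restrict (Set.Ioi (1:ℝ))) := by
  have hmeas : Measurable fun y : ℝ =>
      (((∑' k : ℕ, ENNReal.ofReal (lam ^ k * smIter S k id y)).toReal) ^ 2)⁻¹ := by
    refine Measurable.inv (Measurable.pow_const ?_ 2)
    refine ENNReal.measurable_toReal.comp (Measurable.ennreal_tsum fun k => ?_)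
    exact ENNReal.measurable_ofReal.comp
      (((S.smIter_id_facts k).1.measurable).const_mul _)
  refine hmeas.aestronglyMeasurable.congr ?_
  refine ae_restrict_of_forall_mem measurableSet_Ioi fun y hy => ?_
  simp only
  rw [← S.psi_eq_toReal hlam (zero_le_one.trans (le_of_lt hy))]

lemma integrableOn_inv_sq : IntegrableOn (fun y : ℝ => (y^2)⁻¹) (Set.Ioi (1:ℝ)) volume := by
  have h := integrableOn_Ioi_rpow_of_lt (by norm_num : (-2:ℝ) < -1) one_pos
  refine h.congr_fun (fun y hy => ?_) measurableSet_Ioi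
  have hy0 : (0:ℝ) < y := lt_trans one_pos hy
  show y ^ (-2:ℝ) = (y^2)⁻¹
  rw [show (-2:ℝ) = -((2:ℕ):ℝ) by norm_num, Real.rpow_neg hy0.le, Real.rpow_natCast]

lemma integral_inv_sq : ∫ y in Set.Ioi (1:ℝ), (y^2)⁻¹ = 1 := by
  have h : ∫ y in Set.Ioi (1:ℝ), (y^2)⁻¹ = ∫ y in Set.Ioi (1:ℝ), y ^ (-2:ℝ) := by
    refine setIntegral_congr_fun measurableSet_Ioi fun y hy => ?_
    have hy0 : (0:ℝ) < y := lt_trans one_pos hy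
    rw [show (-2:ℝ) = -((2:ℕ):ℝ) by norm_num, Real.rpow_neg hy0.le, Real.rpow_natCast]
  rw [h, integral_Ioi_rpow_of_lt (by norm_num) one_pos]
  norm_num


lemma lint_w_le {x : ℝ} (hx : x ≤ 1) :
    ∫⁻ y in Set.Ioo (0:ℝ) x, S.μ (Set.Ioc y 1)
      ≤ ∫⁻ z in Set.Ioc (0:ℝ) 1, ENNReal.ofReal z ∂S.μ := by
  have hsf : SigmaFinite (S.μ.restrict (Set.Ioc 0 1)) := S.sigmaFinite_restrict
  set f : ℝ × ℝ → ℝ≥0∞ := fun p => if p.1 < p.2 then 1 else 0 with hf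
  have hfm : Measurable f :=
    Measurable.ite (measurableSet_lt measurable_fst measurable_snd)
      measurable_const measurable_const
  have h1 : ∀ y ∈ Set.Ioo (0:ℝ) x, S.μ (Set.Ioc y 1)
      = ∫⁻ z in Set.Ioc (0:ℝ) 1, f (y, z) ∂S.μ := by
    intro y hy
    have heq : ∀ z : ℝ, f (y, z) = (Set.Ioi y).indicator (fun _ => (1:ℝ≥0∞)) z := by
      intro z; simp [hf, Set.indicator_apply, Set.mem_Ioi]
    calc S.μ (Set.Ioc y 1) = S.μ.restrict (Set.Ioc 0 1) (Set.Ioi y) := by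
          rw [Measure.restrict_apply measurableSet_Ioi]
          congr 1
          ext z
          constructor
          · rintro ⟨h1', h2'⟩; exact ⟨h1', ⟨hy.1.trans h1', h2'⟩⟩
          · rintro ⟨h1', h2'⟩; exact ⟨h1', h2'.2⟩
      _ = ∫⁻ z, (Set.Ioi y).indicator (fun _ => (1:ℝ≥0∞)) z ∂(S.μ.restrict (Set.Ioc 0 1)) :=
          (lintegral_indicator_one measurableSet_Ioi).symm
      _ = ∫⁻ z in Set.Ioc (0:ℝ) 1, f (y, z) ∂S.μ := by
          exact lintegral_congr fun z => (heq z).symm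
  calc ∫⁻ y in Set.Ioo (0:ℝ) x, S.μ (Set.Ioc y 1)
      = ∫⁻ y in Set.Ioo (0:ℝ) x, (∫⁻ z in Set.Ioc (0:ℝ) 1, f (y, z) ∂S.μ) :=
        setLIntegral_congr_fun measurableSet_Ioo
          h1
    _ = ∫⁻ z in Set.Ioc (0:ℝ) 1, (∫⁻ y in Set.Ioo (0:ℝ) x, f (y, z)) ∂S.μ := by
        exact lintegral_lintegral_swap (μ := volume.restrict (Set.Ioo 0 x))
          (ν := S.μ.restrict (Set.Ioc 0 1)) (f := fun y z => f (y, z)) hfm.aemeasurable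
    _ ≤ ∫⁻ z in Set.Ioc (0:ℝ) 1, ENNReal.ofReal z ∂S.μ := by
        refine setLIntegral_mono' measurableSet_Ioc fun z hz => ?_
        have heq : ∀ y : ℝ, f (y, z) = (Set.Iio z).indicator (fun _ => (1:ℝ≥0∞)) y := by
          intro y; simp [hf, Set.indicator_apply, Set.mem_Iio]
        calc ∫⁻ y in Set.Ioo (0:ℝ) x, f (y, z)
            = ∫⁻ y, (Set.Iio z).indicator (fun _ => (1:ℝ≥0∞)) y
                ∂(volume.restrict (Set.Ioo 0 x)) := lintegral_congr fun y => heq y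
          _ = volume.restrict (Set.Ioo 0 x) (Set.Iio z) :=
              lintegral_indicator_one measurableSet_Iio
          _ ≤ volume (Set.Ioo 0 z) := by
              rw [Measure.restrict_apply measurableSet_Iio]
              refine measure_mono ?_
              rintro y ⟨h1', h2'⟩; exact ⟨h2'.1, h1'⟩
          _ = ENNReal.ofReal z := by rw [Real.volume_Ioo, sub_zero]


lemma w_antitoneOn : AntitoneOn (fun y => (S.μ (Set.Ioc y 1)).toReal) (Set.Ioi (0:ℝ)) := by
  intro y1 h1 y2 h2 h12
  exact ENNReal.toReal_mono (S.measure_Ioc_lt_top h1).ne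
    (measure_mono (Set.Ioc_subset_Ioc_left h12))

lemma w_aemeasurable {s : Set ℝ} (hs : MeasurableSet s) (hsub : s ⊆ Set.Ioi (0:ℝ)) :
    AEMeasurable (fun y => (S.μ (Set.Ioc y 1)).toReal) (volume.restrict s) :=
  aemeasurable_restrict_of_antitoneOn hs ((S.w_antitoneOn).mono hsub)

lemma w_integrableOn_Ioo {x : ℝ} (hx : x ≤ 1) :
    IntegrableOn (fun y => (S.μ (Set.Ioc y 1)).toReal) (Set.Ioo 0 x) volume := by
  refine ⟨(S.w_aemeasurable measurableSet_Ioo fun y hy => hy.1).aestronglyMeasurable, ?_⟩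
  rw [hasFiniteIntegral_iff_ofReal
    (ae_restrict_of_forall_mem measurableSet_Ioo fun y _ => ENNReal.toReal_nonneg)]
  calc ∫⁻ y in Set.Ioo (0:ℝ) x, ENNReal.ofReal (S.μ (Set.Ioc y 1)).toReal
      ≤ ∫⁻ y in Set.Ioo (0:ℝ) x, S.μ (Set.Ioc y 1) :=
        lintegral_mono fun y => ENNReal.ofReal_toReal_le
    _ ≤ ∫⁻ z in Set.Ioc (0:ℝ) 1, ENNReal.ofReal z ∂S.μ := S.lint_w_le hx
    _ < ⊤ := S.int_fin

lemma integral_w_le {x : ℝ} (hx : x ≤ 1) :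
    ∫ y in Set.Ioo (0:ℝ) x, (S.μ (Set.Ioc y 1)).toReal ≤ S.F 1 := by
  rw [integral_eq_lintegral_of_nonneg_ae
    (ae_restrict_of_forall_mem measurableSet_Ioo fun y _ => ENNReal.toReal_nonneg)
    (S.w_aemeasurable measurableSet_Ioo fun y hy => hy.1).aestronglyMeasurable]
  rw [S.F_eq_toReal 1]
  refine ENNReal.toReal_mono (S.int_fin).ne ?_
  calc ∫⁻ y in Set.Ioo (0:ℝ) x, ENNReal.ofReal (S.μ (Set.Ioc y 1)).toReal
      ≤ ∫⁻ y in Set.Ioo (0:ℝ) x, S.μ (Set.Ioc y 1) :=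
        lintegral_mono fun y => ENNReal.ofReal_toReal_le
    _ ≤ ∫⁻ z in Set.Ioc (0:ℝ) 1, ENNReal.ofReal z ∂S.μ := S.lint_w_le hx

lemma primitive_facts {J : ℝ → ℝ} {C : ℝ} (hC : 0 ≤ C)
    (hmeas : AEMeasurable J (volume.restrict (Set.Ioo (0:ℝ) 1)))
    (hbd : ∀ y ∈ Set.Ioo (0:ℝ) 1,
      0 ≤ J y ∧ J y ≤ C * (S.μ (Set.Ioc y 1)).toReal) :
    (∀ x ∈ Set.Icc (0:ℝ) 1,
      0 ≤ (∫ y in (0:ℝ)..x, J y) ∧ (∫ y in (0:ℝ)..x, J y) ≤ C * S.F 1)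
    ∧ MonotoneOn (fun x => ∫ y in (0:ℝ)..x, J y) (Set.Icc (0:ℝ) 1) := by
  have hmeas' : ∀ x ∈ Set.Icc (0:ℝ) 1, AEMeasurable J (volume.restrict (Set.Ioo (0:ℝ) x)) := by
    intro x hx
    exact hmeas.mono_measure (Measure.restrict_mono (Set.Ioo_subset_Ioo_right hx.2) le_rfl)
  have hint : ∀ x ∈ Set.Icc (0:ℝ) 1, IntegrableOn J (Set.Ioo 0 x) volume := by
    intro x hx
    refine Integrable.mono' ((S.w_integrableOn_Ioo hx.2).const_mul C)
      (hmeas' x hx).aestronglyMeasurable ?_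
    refine ae_restrict_of_forall_mem measurableSet_Ioo fun y hy => ?_
    have h := hbd y ⟨hy.1, lt_of_lt_of_le hy.2 hx.2⟩
    rw [Real.norm_eq_abs, abs_of_nonneg h.1]
    exact h.2
  have hrw : ∀ x ∈ Set.Icc (0:ℝ) 1,
      (∫ y in (0:ℝ)..x, J y) = ∫ y in Set.Ioo (0:ℝ) x, J y := by
    intro x hx
    rw [intervalIntegral.integral_of_le hx.1, integral_Ioc_eq_integral_Ioo]
  constructor
  · intro x hx
    rw [hrw x hx]
    constructor
    · refine setIntegral_nonneg measurableSet_Ioo fun y hy => ?_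
      exact (hbd y ⟨hy.1, lt_of_lt_of_le hy.2 hx.2⟩).1
    · calc (∫ y in Set.Ioo (0:ℝ) x, J y)
          ≤ ∫ y in Set.Ioo (0:ℝ) x, C * (S.μ (Set.Ioc y 1)).toReal := by
            refine setIntegral_mono_on (hint x hx)
              ((S.w_integrableOn_Ioo hx.2).const_mul C) measurableSet_Ioo fun y hy => ?_
            exact (hbd y ⟨hy.1, lt_of_lt_of_le hy.2 hx.2⟩).2
        _ = C * ∫ y in Set.Ioo (0:ℝ) x, (S.μ (Set.Ioc y 1)).toReal := integral_const_mul C _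
        _ ≤ C * S.F 1 := mul_le_mul_of_nonneg_left (S.integral_w_le hx.2) hC
  · intro x1 h1 x2 h2 h12
    simp only
    rw [hrw x1 h1, hrw x2 h2]
    refine setIntegral_mono_set (hint x2 h2) ?_ ?_
    · exact ae_restrict_of_forall_mem measurableSet_Ioo fun y hy =>
        (hbd y ⟨hy.1, lt_of_lt_of_le hy.2 h2.2⟩).1
    · exact HasSubset.Subset.eventuallyLE (Set.Ioo_subset_Ioo_right h12)

lemma G_succ_eq (k : ℕ) (hk : 1 ≤ k) (x : ℝ) :
    G S (k+1) x = - ∫ y in (0:ℝ)..x, jInt S (G S k) y := by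
  cases k with
  | zero => omega
  | succ j => rfl

lemma G_facts : ∀ k : ℕ, 1 ≤ k →
    (∀ x ∈ Set.Icc (0:ℝ) 1,
      0 ≤ (-1:ℝ)^k * G S k x ∧ (-1:ℝ)^k * G S k x ≤ S.F 1 ^ k)
    ∧ MonotoneOn (fun x => (-1:ℝ)^k * G S k x) (Set.Icc (0:ℝ) 1) := by
  intro k
  induction k with
  | zero => omega
  | succ k ih =>
    intro _
    rcases Nat.eq_or_lt_of_le (Nat.one_le_iff_ne_zero.mpr (Nat.succ_ne_zero k)) with h1 | h2
    · -- k + 1 = 1, base case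
      have hk0 : k = 0 := by omega
      subst hk0
      set J : ℝ → ℝ := fun y => -(mtilde S y) with hJ
      have hJW : ∀ y ∈ Set.Ioo (0:ℝ) 1, J y = (S.μ (Set.Ioc y 1)).toReal := by
        intro y hy
        rw [hJ]
        simp only [mtilde]
        rw [S.toReal_measure_Ioc hy.1 hy.2.le]
        ring
      have hmeas : AEMeasurable J (volume.restrict (Set.Ioo (0:ℝ) 1)) := by
        refine (S.w_aemeasurable measurableSet_Ioo fun y hy => hy.1).congr ?_
        exact (ae_restrict_of_forall_mem measurableSet_Ioo fun y hy => (hJW y hy).symm)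
      have hbd : ∀ y ∈ Set.Ioo (0:ℝ) 1,
          0 ≤ J y ∧ J y ≤ 1 * (S.μ (Set.Ioc y 1)).toReal := by
        intro y hy
        rw [hJW y hy, one_mul]
        exact ⟨ENNReal.toReal_nonneg, le_refl _⟩
      have prim := S.primitive_facts zero_le_one hmeas hbd
      have hEq : ∀ x : ℝ, (-1:ℝ)^1 * G S 1 x = ∫ y in (0:ℝ)..x, J y := by
        intro x
        show (-1:ℝ)^1 * G S 1 x = ∫ y in (0:ℝ)..x, -(mtilde S y)
        rw [intervalIntegral.integral_neg]
        show (-1:ℝ)^1 * (∫ y in (0:ℝ)..x, mtilde S y) = _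
        ring
      constructor
      · intro x hx
        rw [hEq x]
        refine ⟨(prim.1 x hx).1, ?_⟩
        rw [pow_one]
        linarith [(prim.1 x hx).2]
      · intro a ha b hb hab
        simp only
        rw [hEq a, hEq b]
        exact prim.2 ha hb hab
    · -- step : k ≥ 1
      have hk : 1 ≤ k := by omega
      obtain ⟨ihb, ihm⟩ := ih hk
      set J : ℝ → ℝ := fun y => (-1:ℝ)^k * jInt S (G S k) y with hJ
      have hGmeas : AEMeasurable (G S k) (S.μ.restrict (Set.Icc 0 1)) := by
        have h1' : AEMeasurable (fun z => (-1:ℝ)^k * G S k z) (S.μ.restrict (Set.Icc 0 1)) :=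
          aemeasurable_restrict_of_monotoneOn measurableSet_Icc ihm
        have h2' := h1'.const_mul ((-1:ℝ)^k)
        refine h2'.congr (Filter.Eventually.of_forall fun z => ?_)
        show (-1:ℝ)^k * ((-1:ℝ)^k * S.G k z) = S.G k z
        rw [← mul_assoc, ← mul_pow]
        norm_num
      have hGint : ∀ y : ℝ, 0 < y → IntegrableOn (G S k) (Set.Ioc y 1) S.μ := by
        intro y hy
        have hsub : Set.Ioc y 1 ⊆ Set.Icc (0:ℝ) 1 := fun z hz => ⟨(hy.trans hz.1).le, hz.2⟩
        refine Integrable.mono'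
          ((integrableOn_const_iff (C := S.F 1 ^ k)).2 (Or.inr (S.measure_Ioc_lt_top hy)))
          ((hGmeas.mono_measure (Measure.restrict_mono hsub le_rfl)).aestronglyMeasurable) ?_
        refine ae_restrict_of_forall_mem measurableSet_Ioc fun z hz => ?_
        have hb := ihb z (hsub hz)
        rw [Real.norm_eq_abs]
        have habs : |G S k z| = |(-1:ℝ)^k * G S k z| := by
          rw [abs_mul, abs_pow, abs_neg, abs_one, one_pow, one_mul]
        rw [habs, abs_of_nonneg hb.1]
        exact hb.2
      have hJeq : ∀ y : ℝ, 0 < y → y ≤ 1 →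
          J y = ∫ z in Set.Ioc y 1, (-1:ℝ)^k * G S k z ∂S.μ := by
        intro y hy hy1
        rw [hJ]
        simp only [jInt, if_pos hy1]
        rw [integral_const_mul]
      have hbd : ∀ y ∈ Set.Ioo (0:ℝ) 1,
          0 ≤ J y ∧ J y ≤ S.F 1 ^ k * (S.μ (Set.Ioc y 1)).toReal := by
        intro y hy
        have hsub : Set.Ioc y 1 ⊆ Set.Icc (0:ℝ) 1 := fun z hz => ⟨(hy.1.trans hz.1).le, hz.2⟩
        rw [hJeq y hy.1 hy.2.le]
        constructor
        · exact setIntegral_nonneg measurableSet_Ioc fun z hz => (ihb z (hsub hz)).1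
        · calc (∫ z in Set.Ioc y 1, (-1:ℝ)^k * G S k z ∂S.μ)
              ≤ ∫ _ in Set.Ioc y 1, S.F 1 ^ k ∂S.μ := by
                refine setIntegral_mono_on ((hGint y hy.1).const_mul _)
                  ((integrableOn_const_iff).2 (Or.inr (S.measure_Ioc_lt_top hy.1)))
                  measurableSet_Ioc fun z hz => (ihb z (hsub hz)).2
            _ = (S.μ (Set.Ioc y 1)).toReal * S.F 1 ^ k := by
                rw [setIntegral_const, smul_eq_mul, measureReal_def]
            _ = S.F 1 ^ k * (S.μ (Set.Ioc y 1)).toReal := mul_comm _ _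
      have hanti : AntitoneOn J (Set.Ioo (0:ℝ) 1) := by
        intro y1 h1' y2 h2' h12
        rw [hJeq y1 h1'.1 h1'.2.le, hJeq y2 (lt_of_lt_of_le h1'.1 h12) h2'.2.le]
        refine setIntegral_mono_set ((hGint y1 h1'.1).const_mul _) ?_ ?_
        · refine ae_restrict_of_forall_mem measurableSet_Ioc fun z hz => (ihb z ?_).1
          exact ⟨(h1'.1.trans hz.1).le, hz.2⟩
        · exact HasSubset.Subset.eventuallyLE (Set.Ioc_subset_Ioc_left h12)
      have hmeas : AEMeasurable J (volume.restrict (Set.Ioo (0:ℝ) 1)) :=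
        aemeasurable_restrict_of_antitoneOn measurableSet_Ioo hanti
      have prim := S.primitive_facts (pow_nonneg (S.F_nonneg 1) k) hmeas hbd
      have hEq : ∀ x : ℝ, (-1:ℝ)^(k+1) * G S (k+1) x = ∫ y in (0:ℝ)..x, J y := by
        intro x
        rw [S.G_succ_eq k hk x, hJ]
        rw [intervalIntegral.integral_const_mul]
        rw [pow_succ]
        ring
      constructor
      · intro x hx
        rw [hEq x]
        refine ⟨(prim.1 x hx).1, ?_⟩
        calc (∫ y in (0:ℝ)..x, J y) ≤ S.F 1 ^ k * S.F 1 := (prim.1 x hx).2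
          _ = S.F 1 ^ (k+1) := (pow_succ _ _).symm
      · intro a ha b hb hab
        simp only
        rw [hEq a, hEq b]
        exact prim.2 ha hb hab


lemma G_one_bound {k : ℕ} (hk : 1 ≤ k) : |G S k 1| ≤ S.F 1 ^ k := by
  obtain ⟨hb, _⟩ := S.G_facts k hk
  have h := hb 1 ⟨zero_le_one, le_refl 1⟩
  have habs : |G S k 1| = |(-1:ℝ)^k * G S k 1| := by
    rw [abs_mul, abs_pow, abs_neg, abs_one, one_pow, one_mul]
  rw [habs, abs_of_nonneg h.1]
  exact h.2

lemma Gd_aemeas {d : ℕ} (hd : 1 ≤ d) {s : Set ℝ} (hs : MeasurableSet s)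
    (hsub : s ⊆ Set.Icc (0:ℝ) 1) : AEMeasurable (G S d) (S.μ.restrict s) := by
  have h1' : AEMeasurable (fun z => (-1:ℝ)^d * G S d z) (S.μ.restrict (Set.Icc 0 1)) :=
    aemeasurable_restrict_of_monotoneOn measurableSet_Icc (S.G_facts d hd).2
  have h2' := (h1'.const_mul ((-1:ℝ)^d)).mono_measure (Measure.restrict_mono hsub le_rfl)
  refine h2'.congr (Filter.Eventually.of_forall fun z => ?_)
  show (-1:ℝ)^d * ((-1:ℝ)^d * S.G d z) = S.G d z
  rw [← mul_assoc, ← mul_pow]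
  norm_num

lemma Gd_integrableOn {d : ℕ} (hd : 1 ≤ d) (hfin : intGdm S d < ⊤) :
    IntegrableOn (G S d) (Set.Ioc 0 1) S.μ := by
  refine ⟨(S.Gd_aemeas hd measurableSet_Ioc Set.Ioc_subset_Icc_self).aestronglyMeasurable, ?_⟩
  rw [hasFiniteIntegral_iff_norm]
  have hcongr : ∫⁻ z in Set.Ioc (0:ℝ) 1, ENNReal.ofReal ‖G S d z‖ ∂S.μ
      = ∫⁻ z in Set.Ioc (0:ℝ) 1, ENNReal.ofReal ((-1:ℝ)^d * G S d z) ∂S.μ := by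
    refine setLIntegral_congr_fun measurableSet_Ioc (fun z hz => ?_)
    have h := ((S.G_facts d hd).1 z (Set.Ioc_subset_Icc_self hz)).1
    congr 1
    rw [Real.norm_eq_abs]
    have habs : |G S d z| = |(-1:ℝ)^d * G S d z| := by
      rw [abs_mul, abs_pow, abs_neg, abs_one, one_pow, one_mul]
    rw [habs, abs_of_nonneg h]
  rw [hcongr]
  exact hfin

lemma intGdm_toReal_eq {d : ℕ} (hd : 1 ≤ d) :
    ∫ z in Set.Ioc (0:ℝ) 1, (-1:ℝ)^d * G S d z ∂S.μ = (intGdm S d).toReal := by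
  rw [integral_eq_lintegral_of_nonneg_ae
    (ae_restrict_of_forall_mem measurableSet_Ioc fun z hz =>
      ((S.G_facts d hd).1 z (Set.Ioc_subset_Icc_self hz)).1)
    (((S.Gd_aemeas hd measurableSet_Ioc Set.Ioc_subset_Icc_self).const_mul
      ((-1:ℝ)^d)).aestronglyMeasurable)]
  rfl

lemma smIter_const_mul (c : ℝ) (f : ℝ → ℝ) :
    ∀ (k : ℕ) (x : ℝ), smIter S k (fun y => c * f y) x = c * smIter S k f x := by
  intro k
  induction k with
  | zero => intro x; rfl
  | succ k ih =>
    intro x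
    show sBul (mBul S (smIter S k fun y => c * f y)) x
        = c * sBul (mBul S (smIter S k f)) x
    have h1 : ∀ t : ℝ, mBul S (smIter S k fun y => c * f y) t
        = c * mBul S (smIter S k f) t := by
      intro t
      unfold mBul
      rw [← integral_const_mul]
      exact setIntegral_congr_fun measurableSet_Ioc fun y _ => ih y
    unfold sBul
    rw [← intervalIntegral.integral_const_mul]
    exact intervalIntegral.integral_congr fun y _ => h1 y

lemma tail_facts {d : ℕ} (hd : 1 ≤ d) (hfin : intGdm S d < ⊤) :
    ∀ j : ℕ,
      (∀ t ∈ Set.Icc (0:ℝ) 1,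
        0 ≤ mBul S (smIter S j (fun z => (-1:ℝ)^d * G S d z)) t ∧
        mBul S (smIter S j (fun z => (-1:ℝ)^d * G S d z)) t
          ≤ (intGdm S d).toReal * S.F 1 ^ j)
      ∧ MonotoneOn (mBul S (smIter S j (fun z => (-1:ℝ)^d * G S d z))) (Set.Icc (0:ℝ) 1)
      ∧ (∀ x ∈ Set.Icc (0:ℝ) 1,
        0 ≤ smIter S (j+1) (fun z => (-1:ℝ)^d * G S d z) x ∧
        smIter S (j+1) (fun z => (-1:ℝ)^d * G S d z) x
          ≤ x * ((intGdm S d).toReal * S.F 1 ^ j)) := by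
  set A := (intGdm S d).toReal with hA
  have hA0 : 0 ≤ A := ENNReal.toReal_nonneg
  set GD : ℝ → ℝ := fun z => (-1:ℝ)^d * G S d z with hGD
  have hGD0 : ∀ z ∈ Set.Icc (0:ℝ) 1, 0 ≤ GD z := fun z hz => ((S.G_facts d hd).1 z hz).1
  have hGDint : IntegrableOn GD (Set.Ioc 0 1) S.μ :=
    (S.Gd_integrableOn hd hfin).const_mul _
  -- generic step: from v-facts at level j to the whole package
  have main : ∀ j : ℕ,
      ((∀ t ∈ Set.Icc (0:ℝ) 1, 0 ≤ mBul S (smIter S j GD) t ∧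
          mBul S (smIter S j GD) t ≤ A * S.F 1 ^ j)
        ∧ MonotoneOn (mBul S (smIter S j GD)) (Set.Icc (0:ℝ) 1)) →
      ((∀ x ∈ Set.Icc (0:ℝ) 1, 0 ≤ smIter S (j+1) GD x ∧
          smIter S (j+1) GD x ≤ x * (A * S.F 1 ^ j))
        ∧ MonotoneOn (smIter S (j+1) GD) (Set.Icc (0:ℝ) 1)) := by
    intro j ⟨hvb, hvm⟩
    set v := mBul S (smIter S j GD) with hv
    have hvii : ∀ x ∈ Set.Icc (0:ℝ) 1, IntervalIntegrable v volume 0 x := by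
      intro x hx
      refine MonotoneOn.intervalIntegrable (hvm.mono ?_)
      rw [Set.uIcc_of_le hx.1]
      exact fun t ht => ⟨ht.1, ht.2.trans hx.2⟩
    have hse : ∀ x : ℝ, smIter S (j+1) GD x = ∫ y in (0:ℝ)..x, v y := fun x => rfl
    constructor
    · intro x hx
      rw [hse]
      constructor
      · exact intervalIntegral.integral_nonneg hx.1 fun u hu =>
          (hvb u ⟨hu.1, hu.2.trans hx.2⟩).1
      · calc (∫ y in (0:ℝ)..x, v y) ≤ ∫ _ in (0:ℝ)..x, A * S.F 1 ^ j := by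
              refine intervalIntegral.integral_mono_on hx.1 (hvii x hx)
                intervalIntegrable_const fun u hu => (hvb u ⟨hu.1, hu.2.trans hx.2⟩).2
          _ = x * (A * S.F 1 ^ j) := by
              rw [intervalIntegral.integral_const, smul_eq_mul, sub_zero]
    · intro x1 h1 x2 h2 h12
      have hii2 : IntervalIntegrable v volume x1 x2 := by
        refine (hvii x2 h2).mono_set ?_
        rw [Set.uIcc_of_le h12, Set.uIcc_of_le h2.1]
        exact fun t ht => ⟨h1.1.trans ht.1, ht.2⟩
      rw [hse, hse, ← intervalIntegral.integral_add_adjacent_intervals (hvii x1 h1) hii2]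
      have : 0 ≤ ∫ y in x1..x2, v y := by
        refine intervalIntegral.integral_nonneg h12 fun u hu =>
          (hvb u ⟨h1.1.trans hu.1, hu.2.trans h2.2⟩).1
      linarith
  -- v-facts at each level
  have vfacts : ∀ j : ℕ,
      (∀ t ∈ Set.Icc (0:ℝ) 1, 0 ≤ mBul S (smIter S j GD) t ∧
        mBul S (smIter S j GD) t ≤ A * S.F 1 ^ j)
      ∧ MonotoneOn (mBul S (smIter S j GD)) (Set.Icc (0:ℝ) 1) := by
    intro j
    induction j with
    | zero =>
      have hint : ∀ t : ℝ, t ≤ 1 → IntegrableOn GD (Set.Ioc 0 t) S.μ :=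
        fun t ht => hGDint.mono_set (Set.Ioc_subset_Ioc_right ht)
      have h0 : ∀ t ∈ Set.Icc (0:ℝ) 1, 0 ≤ mBul S (smIter S 0 GD) t ∧
          mBul S (smIter S 0 GD) t ≤ A * S.F 1 ^ 0 := by
        intro t ht
        constructor
        · exact setIntegral_nonneg measurableSet_Ioc fun z hz =>
            hGD0 z ⟨hz.1.le, hz.2.trans ht.2⟩
        · rw [pow_zero, mul_one]
          calc mBul S (smIter S 0 GD) t ≤ ∫ z in Set.Ioc (0:ℝ) 1, GD z ∂S.μ := by
                refine setIntegral_mono_set hGDint ?_ ?_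
                · exact ae_restrict_of_forall_mem measurableSet_Ioc fun z hz =>
                    hGD0 z ⟨hz.1.le, hz.2⟩
                · exact HasSubset.Subset.eventuallyLE (Set.Ioc_subset_Ioc_right ht.2)
            _ = A := S.intGdm_toReal_eq hd
      refine ⟨h0, ?_⟩
      intro t1 h1 t2 h2 h12
      refine setIntegral_mono_set (hint t2 h2.2) ?_ ?_
      · exact ae_restrict_of_forall_mem measurableSet_Ioc fun z hz =>
          hGD0 z ⟨hz.1.le, hz.2.trans h2.2⟩
      · exact HasSubset.Subset.eventuallyLE (Set.Ioc_subset_Ioc_right h12)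
    | succ j ih =>
      obtain ⟨hub, hum⟩ := main j ih
      set u := smIter S (j+1) GD with hu
      have humeas : ∀ t : ℝ, t ≤ 1 → AEMeasurable u (S.μ.restrict (Set.Ioc 0 t)) := by
        intro t ht
        refine (aemeasurable_restrict_of_monotoneOn measurableSet_Icc hum).mono_measure
          (Measure.restrict_mono ?_ le_rfl)
        exact fun z hz => ⟨hz.1.le, hz.2.trans ht⟩
      have huint : ∀ t : ℝ, t ≤ 1 → IntegrableOn u (Set.Ioc 0 t) S.μ := by
        intro t ht
        refine S.integrableOn_of_le_linear (C := A * S.F 1 ^ j)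
          ((humeas t ht).aestronglyMeasurable) fun y hy => ?_
        have hb := hub y ⟨hy.1.le, hy.2.trans ht⟩
        rw [abs_of_nonneg hb.1, mul_comm]
        exact hb.2
      have hbd : ∀ t ∈ Set.Icc (0:ℝ) 1, 0 ≤ mBul S u t ∧
          mBul S u t ≤ A * S.F 1 ^ (j+1) := by
        intro t ht
        constructor
        · exact setIntegral_nonneg measurableSet_Ioc fun z hz =>
            (hub z ⟨hz.1.le, hz.2.trans ht.2⟩).1
        · have h := S.abs_mBul_le (huint t ht.2) (C := A * S.F 1 ^ j) fun y hy => by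
            have hb := hub y ⟨hy.1.le, hy.2.trans ht.2⟩
            rw [abs_of_nonneg hb.1, mul_comm]
            exact hb.2
          calc mBul S u t ≤ A * S.F 1 ^ j * S.F t := (le_abs_self _).trans h
            _ ≤ A * S.F 1 ^ j * S.F 1 :=
                mul_le_mul_of_nonneg_left (S.F_mono ht.2)
                  (mul_nonneg hA0 (pow_nonneg (S.F_nonneg 1) j))
            _ = A * S.F 1 ^ (j+1) := by ring
      refine ⟨hbd, ?_⟩
      intro t1 h1 t2 h2 h12
      refine setIntegral_mono_set (huint t2 h2.2) ?_ ?_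
      · exact ae_restrict_of_forall_mem measurableSet_Ioc fun z hz =>
          (hub z ⟨hz.1.le, hz.2.trans h2.2⟩).1
      · exact HasSubset.Subset.eventuallyLE (Set.Ioc_subset_Ioc_right h12)
  intro j
  exact ⟨(vfacts j).1, (vfacts j).2, (main j (vfacts j)).1⟩

lemma tail_term_bound {d : ℕ} (hd : 1 ≤ d) (hfin : intGdm S d < ⊤) (k : ℕ) :
    |smIter S (k+1) (G S d) 1| ≤ (intGdm S d).toReal * S.F 1 ^ k := by
  have h := (S.tail_facts hd hfin k).2.2 1 ⟨zero_le_one, le_refl 1⟩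
  have hcm := S.smIter_const_mul ((-1:ℝ)^d) (G S d) (k+1) 1
  rw [hcm] at h
  have habs : |smIter S (k+1) (G S d) 1| = |(-1:ℝ)^d * smIter S (k+1) (G S d) 1| := by
    rw [abs_mul, abs_pow, abs_neg, abs_one, one_pow, one_mul]
  rw [habs, abs_of_nonneg h.1]
  linarith [h.2]


lemma F_le_of_ge_one {y : ℝ} (hy : 1 ≤ y) :
    S.F y ≤ S.F 1 + y * (S.m y - S.m 1) := by
  have hdisj : Disjoint (Set.Ioc (0:ℝ) 1) (Set.Ioc 1 y) := Set.Ioc_disjoint_Ioc_of_le le_rfl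
  have hun : Set.Ioc (0:ℝ) 1 ∪ Set.Ioc 1 y = Set.Ioc 0 y :=
    Set.Ioc_union_Ioc_eq_Ioc zero_le_one hy
  have hint2 : IntegrableOn (fun z : ℝ => z) (Set.Ioc 1 y) S.μ :=
    (S.integrableOn_id y).mono_set (by rw [← hun]; exact Set.subset_union_right)
  have hsplit : S.F y = S.F 1 + ∫ z in Set.Ioc (1:ℝ) y, z ∂S.μ := by
    rw [F, F, ← hun, setIntegral_union hdisj measurableSet_Ioc (S.integrableOn_id 1) hint2]
  rw [hsplit]
  refine add_le_add le_rfl ?_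
  calc (∫ z in Set.Ioc (1:ℝ) y, z ∂S.μ) ≤ ∫ _ in Set.Ioc (1:ℝ) y, y ∂S.μ := by
        refine setIntegral_mono_on hint2
          ((integrableOn_const_iff).2 (Or.inr (S.measure_Ioc_lt_top one_pos)))
          measurableSet_Ioc fun z hz => hz.2
    _ = (S.μ (Set.Ioc 1 y)).toReal * y := by rw [setIntegral_const, smul_eq_mul, measureReal_def]
    _ = y * (S.m y - S.m 1) := by rw [S.toReal_measure_Ioc one_pos hy, mul_comm]


end MString

theorem stmt15 (Sn : ℕ → MString) (d : ℕ) (hd : 1 ≤ d)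
    (hm : ∀ x : ℝ, 0 < x → Tendsto (fun n => (Sn n).m x) atTop (nhds 0))
    (hint : Tendsto (fun n => MString.F (Sn n) 1) atTop (nhds 0))
    (hGfin : ∀ n, MString.intGdm (Sn n) d < ⊤)
    (hG : Tendsto (fun n => MString.intGdm (Sn n) d) atTop (nhds 0)) :
    ∀ lam : ℝ, 0 < lam →
      Tendsto (fun n => MString.c (Sn n) d lam) atTop (nhds 0) := by
  intro lam hlam
  have hlam0 : (0:ℝ) ≤ lam := hlam.le
  set F1 : ℕ → ℝ := fun n => MString.F (Sn n) 1 with hF1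
  have hF1nn : ∀ n, 0 ≤ F1 n := fun n => (Sn n).F_nonneg 1
  have hq : Tendsto (fun n => lam * F1 n) atTop (nhds 0) := by
    have := hint.const_mul lam
    rwa [mul_zero] at this
  have hqev : ∀ᶠ n in atTop, lam * F1 n ≤ 1/2 :=
    hq.eventually_le_const (by norm_num)
  have hA : Tendsto (fun n => (MString.intGdm (Sn n) d).toReal) atTop (nhds 0) := by
    have hcont := ENNReal.tendsto_toReal (a := 0) (by simp)
    have := hcont.comp hG
    exact this
  -- psi at 1 tends to 1
  have hpsi1 : Tendsto (fun n => MString.psi (Sn n) lam 1) atTop (nhds 1) := by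
    rw [← tendsto_sub_nhds_zero_iff]
    refine squeeze_zero_norm' (a := fun n => 2 * (lam * F1 n)) ?_ ?_
    · filter_upwards [hqev] with n hn
      have hq2 : lam * F1 n < 1 := lt_of_le_of_lt hn (by norm_num)
      have h := (Sn n).abs_psi_sub_le hlam0 zero_le_one hq2
      rw [Real.norm_eq_abs]
      refine h.trans ?_
      have hq0 : 0 ≤ lam * F1 n := mul_nonneg hlam0 (hF1nn n)
      have hinv : (1 - lam * F1 n)⁻¹ ≤ 2 := by
        rw [show (2:ℝ) = (1/2)⁻¹ by norm_num]
        exact inv_anti₀ (by norm_num) (by linarith)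
      calc 1 * (lam * F1 n) * (1 - lam * F1 n)⁻¹ ≤ 1 * (lam * F1 n) * 2 :=
            mul_le_mul_of_nonneg_left hinv (by linarith)
        _ = 2 * (lam * F1 n) := by ring
    · have := hq.const_mul 2
      rwa [mul_zero] at this
  -- psi at y > 1 tends to y
  have hpsiy : ∀ y : ℝ, 1 < y →
      Tendsto (fun n => MString.psi (Sn n) lam y) atTop (nhds y) := by
    intro y hy
    have hFy : Tendsto (fun n => MString.F (Sn n) y) atTop (nhds 0) := by
      have hub : Tendsto (fun n => F1 n + y * ((Sn n).m y - (Sn n).m 1)) atTop (nhds 0) := by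
        have h1 := ((hm y (lt_trans one_pos hy)).sub (hm 1 one_pos)).const_mul y
        have h2 := hint.add h1
        simpa using h2
      refine squeeze_zero (fun n => (Sn n).F_nonneg y)
        (fun n => (Sn n).F_le_of_ge_one hy.le) hub
    have hqy : Tendsto (fun n => lam * MString.F (Sn n) y) atTop (nhds 0) := by
      have := hFy.const_mul lam
      rwa [mul_zero] at this
    have hqyev : ∀ᶠ n in atTop, lam * MString.F (Sn n) y ≤ 1/2 :=
      hqy.eventually_le_const (by norm_num)
    rw [← tendsto_sub_nhds_zero_iff]
    refine squeeze_zero_norm' (a := fun n => y * (lam * MString.F (Sn n) y) * 2) ?_ ?_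
    · filter_upwards [hqyev] with n hn
      have hq2 : lam * MString.F (Sn n) y < 1 := lt_of_le_of_lt hn (by norm_num)
      have h := (Sn n).abs_psi_sub_le hlam0 (zero_le_one.trans hy.le) hq2
      rw [Real.norm_eq_abs]
      refine h.trans ?_
      have hq0 : 0 ≤ lam * MString.F (Sn n) y :=
        mul_nonneg hlam0 ((Sn n).F_nonneg y)
      have hinv : (1 - lam * MString.F (Sn n) y)⁻¹ ≤ 2 := by
        rw [show (2:ℝ) = (1/2)⁻¹ by norm_num]
        exact inv_anti₀ (by norm_num) (by linarith)
      exact mul_le_mul_of_nonneg_left hinv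
        (mul_nonneg (by linarith : (0:ℝ) ≤ y) hq0)
    · have h1 := (hqy.const_mul y).mul_const 2
      simpa using h1
  -- dominated convergence for the Ioi 1 integral
  have hI : Tendsto (fun n => ∫ y in Set.Ioi (1:ℝ), (MString.psi (Sn n) lam y ^ 2)⁻¹)
      atTop (nhds 1) := by
    have hDCT := MeasureTheory.tendsto_integral_of_dominated_convergence
      (μ := volume.restrict (Set.Ioi (1:ℝ)))
      (F := fun n y => (MString.psi (Sn n) lam y ^ 2)⁻¹)
      (f := fun y => (y ^ 2)⁻¹)
      (fun y => (y ^ 2)⁻¹)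
      (fun n => (Sn n).psi_aesm_inv_sq hlam0)
      MString.integrableOn_inv_sq
      ?_ ?_
    · rwa [MString.integral_inv_sq] at hDCT
    · intro n
      refine ae_restrict_of_forall_mem measurableSet_Ioi fun y hy => ?_
      rw [Real.norm_eq_abs, abs_of_nonneg (by positivity)]
      exact (Sn n).psi_inv_sq_le hlam0 (lt_trans one_pos hy)
    · refine ae_restrict_of_forall_mem measurableSet_Ioi fun y hy => ?_
      have hyt := hpsiy y hy
      have hy0 : y ^ 2 ≠ 0 := pow_ne_zero 2 (ne_of_gt (lt_trans one_pos hy))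
      exact ((hyt.pow 2).inv₀ hy0)
  -- g tends to 1
  have hg1 : Tendsto (fun n => MString.g (Sn n) lam 1) atTop (nhds 1) := by
    have := hpsi1.mul hI
    rw [mul_one] at this
    exact this
  -- phi tends to 1
  have hphi : Tendsto (fun n => MString.phi (Sn n) d lam 1) atTop (nhds 1) := by
    have hsum : Tendsto (fun n => ∑ k ∈ Finset.Icc 1 d, lam ^ k * MString.G (Sn n) k 1)
        atTop (nhds 0) := by
      rw [show (0:ℝ) = ∑ k ∈ Finset.Icc 1 d, (0:ℝ) by simp]
      refine tendsto_finset_sum _ fun k hk => ?_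
      have hk1 : 1 ≤ k := (Finset.mem_Icc.mp hk).1
      refine squeeze_zero_norm (a := fun n => lam ^ k * F1 n ^ k) (fun n => ?_) ?_
      · rw [Real.norm_eq_abs, abs_mul, abs_pow, abs_of_nonneg hlam0]
        exact mul_le_mul_of_nonneg_left ((Sn n).G_one_bound hk1)
          (pow_nonneg hlam0 k)
      · have h1 : Tendsto (fun n => F1 n ^ k) atTop (nhds 0) := by
          have := hint.pow k
          rwa [zero_pow (by omega : k ≠ 0)] at this
        have := h1.const_mul (lam ^ k)
        rwa [mul_zero] at this
    have htail : Tendsto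
        (fun n => ∑' k : ℕ, lam ^ (d + k + 1) * MString.smIter (Sn n) (k + 1) (MString.G (Sn n) d) 1)
        atTop (nhds 0) := by
      refine squeeze_zero_norm'
        (a := fun n => lam ^ (d+1) * (MString.intGdm (Sn n) d).toReal * 2) ?_ ?_
      · filter_upwards [hqev] with n hn
        set T : ℕ → ℝ := fun k =>
          lam ^ (d + k + 1) * MString.smIter (Sn n) (k + 1) (MString.G (Sn n) d) 1 with hT
        set An := (MString.intGdm (Sn n) d).toReal with hAn
        have hAn0 : 0 ≤ An := ENNReal.toReal_nonneg
        have hq0 : 0 ≤ lam * F1 n := mul_nonneg hlam0 (hF1nn n)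
        have hq2 : lam * F1 n < 1 := lt_of_le_of_lt hn (by norm_num)
        have hbdk : ∀ k : ℕ, |T k| ≤ lam ^ (d+1) * An * (lam * F1 n) ^ k := by
          intro k
          rw [hT]
          simp only
          rw [abs_mul, abs_pow, abs_of_nonneg hlam0]
          have h1 := (Sn n).tail_term_bound hd (hGfin n) k
          calc lam ^ (d + k + 1) * |MString.smIter (Sn n) (k + 1) (MString.G (Sn n) d) 1|
              ≤ lam ^ (d + k + 1) * (An * F1 n ^ k) :=
                mul_le_mul_of_nonneg_left h1 (pow_nonneg hlam0 _)
            _ = lam ^ (d+1) * An * (lam * F1 n) ^ k := by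
                rw [mul_pow, show d + k + 1 = (d + 1) + k by ring, pow_add]
                ring
        have hgeo : Summable (fun k : ℕ => lam ^ (d+1) * An * (lam * F1 n) ^ k) :=
          (summable_geometric_of_lt_one hq0 hq2).mul_left _
        have habs : Summable (fun k : ℕ => |T k|) :=
          Summable.of_nonneg_of_le (fun k => abs_nonneg _) hbdk hgeo
        rw [Real.norm_eq_abs]
        have hnorm : |∑' k : ℕ, T k| ≤ ∑' k : ℕ, |T k| := by
          refine norm_tsum_le_tsum_norm (f := T) ?_
          exact habs
        refine hnorm.trans ?_
        calc (∑' k : ℕ, |T k|)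
            ≤ ∑' k : ℕ, lam ^ (d+1) * An * (lam * F1 n) ^ k :=
              Summable.tsum_le_tsum hbdk habs hgeo
          _ = lam ^ (d+1) * An * (1 - lam * F1 n)⁻¹ := by
              rw [tsum_mul_left, tsum_geometric_of_lt_one hq0 hq2]
          _ ≤ lam ^ (d+1) * An * 2 := by
              have hinv : (1 - lam * F1 n)⁻¹ ≤ 2 := by
                rw [show (2:ℝ) = (1/2)⁻¹ by norm_num]
                exact inv_anti₀ (by norm_num) (by linarith)
              exact mul_le_mul_of_nonneg_left hinv
                (mul_nonneg (pow_nonneg hlam0 _) hAn0)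
      · have h1 := (hA.const_mul (lam ^ (d+1))).mul_const 2
        simpa using h1
    have hfinal : Tendsto (fun n =>
        1 + (∑ k ∈ Finset.Icc 1 d, lam ^ k * MString.G (Sn n) k 1)
        + ∑' k : ℕ, lam ^ (d + k + 1) * MString.smIter (Sn n) (k + 1) (MString.G (Sn n) d) 1)
        atTop (nhds 1) := by
      have h := (hsum.const_add (1:ℝ)).add htail
      norm_num at h
      exact h
    exact hfinal
  -- conclude
  have hdiff : Tendsto (fun n => MString.phi (Sn n) d lam 1 - MString.g (Sn n) lam 1)
      atTop (nhds 0) := by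
    have := hphi.sub hg1
    simpa using this
  have := hdiff.div hpsi1 one_ne_zero
  unfold MString.c
  rw [zero_div] at this
  exact this
end

section
/- Let α ≥ 2, let K and L be slowly varying at ∞, and let m and j be Borel measures on (0,∞) such that m(x,∞) < ∞ and j(x,∞) < ∞ for every x > 0, ∫_0^1 m(w,∞) dw < ∞, j(1,∞) < ∞, ∫_{(0,1]} x j(dx) < ∞ and ∫_{(0,1]} (∫_0^x m(y,∞) dy) j(dx) < ∞. Assume m(x,∞) ∼ (α−1)^{−1} x^{1/α − 1} K(x) and j(x,∞) ∼ x^{−2/α} L(x) as x → ∞, and that N(γ) → ∞ as γ → ∞. Then lim_{γ→∞} K(γ)² L(γ) / N(γ) = 0. -/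
open MeasureTheory Filter Topology Set
open scoped ENNReal NNReal

def SlowlyVarying (ℓ : ℝ → ℝ) : Prop :=
  ∀ c : ℝ, 0 < c → Tendsto (fun x => ℓ (c * x) / ℓ x) atTop (nhds 1)

noncomputable def mTail (m : Measure ℝ) (x : ℝ) : ℝ := (m (Set.Ioi x)).toReal

noncomputable def NN (m j : Measure ℝ) (γ : ℝ) : ℝ :=
  ∫ x in Set.Ioc (0:ℝ) γ,
    (∫ y in (0:ℝ)..x,
      (∫ z in Set.Ioc y γ, (∫ w in (0:ℝ)..z, mTail m w) ∂m)) ∂j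

lemma aesm_of_antitoneOn {f : ℝ → ℝ} (hf : AntitoneOn f (Set.Ioi 0))
    (μ : Measure ℝ) {s : Set ℝ} (hs : s ⊆ Set.Ioi 0) (hsm : MeasurableSet s) :
    AEStronglyMeasurable f (μ.restrict s) := by
  have h1 : Antitone (fun t : ℝ => f (Real.exp t)) := fun a b hab =>
    hf (Set.mem_Ioi.2 (Real.exp_pos a)) (Set.mem_Ioi.2 (Real.exp_pos b)) (Real.exp_le_exp.2 hab)
  have h2 : Measurable fun y : ℝ => f (Real.exp (Real.log y)) :=
    h1.measurable.comp Real.measurable_log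
  refine h2.aestronglyMeasurable.congr ?_
  filter_upwards [ae_restrict_mem hsm] with y hy
  rw [Real.exp_log (hs hy)]

lemma aesm_of_monotoneOn {f : ℝ → ℝ} (hf : MonotoneOn f (Set.Ioi 0))
    (μ : Measure ℝ) {s : Set ℝ} (hs : s ⊆ Set.Ioi 0) (hsm : MeasurableSet s) :
    AEStronglyMeasurable f (μ.restrict s) := by
  have h1 : Monotone (fun t : ℝ => f (Real.exp t)) := fun a b hab =>
    hf (Set.mem_Ioi.2 (Real.exp_pos a)) (Set.mem_Ioi.2 (Real.exp_pos b)) (Real.exp_le_exp.2 hab)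
  have h2 : Measurable fun y : ℝ => f (Real.exp (Real.log y)) :=
    h1.measurable.comp Real.measurable_log
  refine h2.aestronglyMeasurable.congr ?_
  filter_upwards [ae_restrict_mem hsm] with y hy
  rw [Real.exp_log (hs hy)]

section Basic
variable {m : MeasureTheory.Measure ℝ}

lemma mTail_nonneg (m : Measure ℝ) (x : ℝ) : 0 ≤ mTail m x := ENNReal.toReal_nonneg

lemma mTail_anti (hm : ∀ x : ℝ, 0 < x → m (Set.Ioi x) < ⊤) :
    AntitoneOn (mTail m) (Set.Ioi 0) := by
  intro x hx y _ hxy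
  exact ENNReal.toReal_mono (hm x hx).ne (measure_mono (Set.Ioi_subset_Ioi hxy))

lemma mTail_slice (hm : ∀ x : ℝ, 0 < x → m (Set.Ioi x) < ⊤)
    {a b : ℝ} (ha : 0 < a) (hab : a ≤ b) :
    (m (Set.Ioc a b)).toReal = mTail m a - mTail m b := by
  have hb : 0 < b := ha.trans_le hab
  have hsplit : Set.Ioi a = Set.Ioc a b ∪ Set.Ioi b := (Set.Ioc_union_Ioi_eq_Ioi hab).symm
  have hdisj : Disjoint (Set.Ioc a b) (Set.Ioi b) := by
    rw [Set.disjoint_left]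
    rintro x ⟨_, hx2⟩ hx3
    exact absurd hx3 (not_lt.2 hx2)
  have hmeq : m (Set.Ioi a) = m (Set.Ioc a b) + m (Set.Ioi b) := by
    rw [hsplit, measure_union hdisj measurableSet_Ioi]
  have hfin1 : m (Set.Ioc a b) ≠ ⊤ := by
    refine ne_top_of_le_ne_top (hm a ha).ne (measure_mono Set.Ioc_subset_Ioi_self)
  have : mTail m a = (m (Set.Ioc a b)).toReal + mTail m b := by
    rw [mTail, hmeq, ENNReal.toReal_add hfin1 (hm b hb).ne]; rfl
  linarith

lemma mTail_intOn (hm : ∀ x : ℝ, 0 < x → m (Set.Ioi x) < ⊤)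
    (hmint : MeasureTheory.IntegrableOn (mTail m) (Set.Ioc (0:ℝ) 1) MeasureTheory.volume)
    (T : ℝ) : IntegrableOn (mTail m) (Set.Ioc (0:ℝ) T) MeasureTheory.volume := by
  rcases le_or_gt T 1 with h | h
  · exact hmint.mono_set (Set.Ioc_subset_Ioc_right h)
  · have hu : Set.Ioc (0:ℝ) T = Set.Ioc 0 1 ∪ Set.Ioc 1 T :=
      (Set.Ioc_union_Ioc_eq_Ioc (by norm_num) h.le).symm
    rw [hu]
    refine hmint.union ?_
    have hmeas : AEStronglyMeasurable (mTail m) (volume.restrict (Set.Ioc (1:ℝ) T)) :=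
      aesm_of_antitoneOn (mTail_anti hm) volume
        (fun x hx => lt_trans one_pos hx.1) measurableSet_Ioc
    refine Integrable.mono' (g := fun _ => mTail m 1) ?_ hmeas ?_
    · exact integrableOn_const (by simp [Real.volume_Ioc])
    · filter_upwards [ae_restrict_mem measurableSet_Ioc] with y hy
      rw [Real.norm_eq_abs, abs_of_nonneg (mTail_nonneg m y)]
      exact mTail_anti hm (Set.mem_Ioi.2 one_pos) (Set.mem_Ioi.2 (lt_trans one_pos hy.1)) hy.1.le

end Basic

noncomputable def Cf (m : Measure ℝ) (z : ℝ) : ℝ := ∫ w in (0:ℝ)..z, mTail m w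
noncomputable def Bf (m : Measure ℝ) (γ y : ℝ) : ℝ :=
  ∫ z in Set.Ioc y γ, (∫ w in (0:ℝ)..z, mTail m w) ∂m
noncomputable def Af (m : Measure ℝ) (γ x : ℝ) : ℝ := ∫ y in Set.Ioc (0:ℝ) x, Bf m γ y

section CBA
variable {m : MeasureTheory.Measure ℝ}
  (hm : ∀ x : ℝ, 0 < x → m (Set.Ioi x) < ⊤)
  (hmint : MeasureTheory.IntegrableOn (mTail m) (Set.Ioc (0:ℝ) 1) MeasureTheory.volume)
include hm hmint

lemma Cf_eq {z : ℝ} (hz : 0 ≤ z) : Cf m z = ∫ w in Set.Ioc (0:ℝ) z, mTail m w := by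
  rw [Cf, intervalIntegral.integral_of_le hz]

omit hm hmint in
lemma Cf_nonneg {z : ℝ} (hz : 0 ≤ z) : 0 ≤ Cf m z := by
  rw [Cf, intervalIntegral.integral_of_le hz]
  exact setIntegral_nonneg measurableSet_Ioc (fun y _ => mTail_nonneg m y)

lemma Cf_mono : MonotoneOn (Cf m) (Set.Ici (0:ℝ)) := by
  intro x hx y hy hxy
  rw [Cf_eq hm hmint hx, Cf_eq hm hmint hy]
  refine setIntegral_mono_set (mTail_intOn hm hmint y) ?_
    ((Set.Ioc_subset_Ioc_right hxy).eventuallyLE)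
  filter_upwards with w using mTail_nonneg m w

lemma Cf_lb {z : ℝ} (hz : 0 < z) : z / 2 * mTail m z ≤ Cf m z := by
  rw [Cf_eq hm hmint hz.le]
  have h1 : ∫ w in Set.Ioc (z/2) z, mTail m w ≤ ∫ w in Set.Ioc (0:ℝ) z, mTail m w := by
    refine setIntegral_mono_set (mTail_intOn hm hmint z) ?_
      ((Set.Ioc_subset_Ioc_left (by linarith)).eventuallyLE)
    filter_upwards with w using mTail_nonneg m w
  have h2 : mTail m z * (volume (Set.Ioc (z/2) z)).toReal ≤ ∫ w in Set.Ioc (z/2) z, mTail m w := by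
    refine setIntegral_ge_of_const_le_real measurableSet_Ioc ?_ ?_
      ((mTail_intOn hm hmint z).mono_set (Set.Ioc_subset_Ioc_left (by linarith)))
    · simp [Real.volume_Ioc]
    · intro w hw
      exact mTail_anti hm (Set.mem_Ioi.2 (by linarith [hw.1])) (Set.mem_Ioi.2 hz) hw.2
  have h3 : (volume (Set.Ioc (z/2) z)).toReal = z / 2 := by
    rw [Real.volume_Ioc, ENNReal.toReal_ofReal (by linarith)]; ring
  rw [h3] at h2
  linarith

omit hm hmint in
lemma Bf_nonneg {γ y : ℝ} (hy : 0 < y) : 0 ≤ Bf m γ y := by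
  refine setIntegral_nonneg measurableSet_Ioc (fun z hz => ?_)
  exact Cf_nonneg (le_of_lt (hy.trans hz.1))

lemma Cf_intOn_m {γ y : ℝ} (hy : 0 < y) : IntegrableOn (Cf m) (Set.Ioc y γ) m := by
  rcases le_or_gt γ y with h | h
  · rw [Set.Ioc_eq_empty (not_lt.2 h)]; exact integrableOn_empty
  · have hmeas : AEStronglyMeasurable (Cf m) (m.restrict (Set.Ioc y γ)) :=
      aesm_of_monotoneOn (Cf_mono hm hmint |>.mono (Set.Ioi_subset_Ici le_rfl))
        m (fun x hx => hy.trans hx.1) measurableSet_Ioc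
    refine Integrable.mono' (g := fun _ => Cf m γ) ?_ hmeas ?_
    · refine integrableOn_const (ne_of_lt ?_)
      exact lt_of_le_of_lt (measure_mono Set.Ioc_subset_Ioi_self) (hm y hy)
    · filter_upwards [ae_restrict_mem measurableSet_Ioc] with z hz
      rw [Real.norm_eq_abs, abs_of_nonneg (Cf_nonneg (le_of_lt (hy.trans hz.1)))]
      exact Cf_mono hm hmint (Set.mem_Ici.2 (le_of_lt (hy.trans hz.1)))
        (Set.mem_Ici.2 ((hy.trans hz.1).le.trans hz.2)) hz.2

lemma Bf_anti (γ : ℝ) : AntitoneOn (Bf m γ) (Set.Ioi 0) := by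
  intro y₁ hy₁ y₂ _ h12
  have : Bf m γ y₂ ≤ Bf m γ y₁ := by
    refine setIntegral_mono_set (Cf_intOn_m hm hmint hy₁) ?_
      ((Set.Ioc_subset_Ioc_left h12).eventuallyLE)
    filter_upwards [ae_restrict_mem measurableSet_Ioc] with z hz
      using Cf_nonneg (le_of_lt (hy₁.trans hz.1))
  exact this

lemma Bf_le {γ y : ℝ} (hγ : 0 ≤ γ) (hy : 0 < y) : Bf m γ y ≤ Cf m γ * mTail m y := by
  rcases le_or_gt γ y with h | h
  · rw [Bf, Set.Ioc_eq_empty (not_lt.2 h), Measure.restrict_empty, integral_zero_measure]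
    exact mul_nonneg (Cf_nonneg hγ) (mTail_nonneg m y)
  · have h1 : Bf m γ y ≤ ∫ _ in Set.Ioc y γ, Cf m γ ∂m := by
      refine setIntegral_mono_on (Cf_intOn_m hm hmint hy)
        (integrableOn_const (lt_of_le_of_lt (measure_mono Set.Ioc_subset_Ioi_self) (hm y hy)).ne)
        measurableSet_Ioc (fun z hz => ?_)
      exact Cf_mono hm hmint (Set.mem_Ici.2 (le_of_lt (hy.trans hz.1))) (Set.mem_Ici.2 hγ) hz.2
    rw [setIntegral_const] at h1
    have h2 : (m (Set.Ioc y γ)).toReal ≤ mTail m y :=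
      ENNReal.toReal_mono (hm y hy).ne (measure_mono Set.Ioc_subset_Ioi_self)
    calc Bf m γ y ≤ (m (Set.Ioc y γ)).toReal • Cf m γ := h1
      _ = Cf m γ * (m (Set.Ioc y γ)).toReal := by rw [smul_eq_mul]; ring
      _ ≤ Cf m γ * mTail m y := mul_le_mul_of_nonneg_left h2 (Cf_nonneg hγ)

lemma Bf_lb {γ y a b : ℝ} (hy : 0 < y) (hya : y ≤ a) (hab : a ≤ b) (hbγ : b ≤ γ) :
    Cf m a * (mTail m a - mTail m b) ≤ Bf m γ y := by
  have ha : 0 < a := hy.trans_le hya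
  have h1 : ∫ z in Set.Ioc a b, Cf m z ∂m ≤ Bf m γ y := by
    refine setIntegral_mono_set (Cf_intOn_m hm hmint hy) ?_
      ((Set.Ioc_subset_Ioc hya hbγ).eventuallyLE)
    filter_upwards [ae_restrict_mem measurableSet_Ioc] with z hz
      using Cf_nonneg (le_of_lt (hy.trans hz.1))
  have h2 : Cf m a * (m (Set.Ioc a b)).toReal ≤ ∫ z in Set.Ioc a b, Cf m z ∂m := by
    refine setIntegral_ge_of_const_le_real measurableSet_Ioc
      (ne_top_of_le_ne_top (hm a ha).ne (measure_mono Set.Ioc_subset_Ioi_self))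
      (fun z hz => Cf_mono hm hmint (Set.mem_Ici.2 ha.le)
        (Set.mem_Ici.2 (ha.le.trans hz.1.le)) hz.1.le)
      ((Cf_intOn_m hm hmint ha).mono_set (Set.Ioc_subset_Ioc_left le_rfl))
    all_goals {}
  rw [mTail_slice hm ha hab] at h2
  exact h2.trans h1

end CBA

section Asec
variable {m j : MeasureTheory.Measure ℝ}
  (hm : ∀ x : ℝ, 0 < x → m (Set.Ioi x) < ⊤)
  (hmint : MeasureTheory.IntegrableOn (mTail m) (Set.Ioc (0:ℝ) 1) MeasureTheory.volume)
include hm hmint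

lemma Bf_intOn {γ : ℝ} (hγ : 0 ≤ γ) (x : ℝ) :
    IntegrableOn (Bf m γ) (Set.Ioc (0:ℝ) x) MeasureTheory.volume := by
  have hmeas : AEStronglyMeasurable (Bf m γ) (volume.restrict (Set.Ioc (0:ℝ) x)) :=
    aesm_of_antitoneOn (Bf_anti hm hmint γ) volume (fun y hy => hy.1) measurableSet_Ioc
  refine Integrable.mono' (g := fun y => Cf m γ * mTail m y) ?_ hmeas ?_
  · exact ((mTail_intOn hm hmint x).const_mul (Cf m γ))
  · filter_upwards [ae_restrict_mem measurableSet_Ioc] with y hy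
    rw [Real.norm_eq_abs, abs_of_nonneg (Bf_nonneg hy.1)]
    exact Bf_le hm hmint hγ hy.1

omit hm hmint in
lemma Af_nonneg (γ x : ℝ) : 0 ≤ Af m γ x :=
  setIntegral_nonneg measurableSet_Ioc (fun y hy => Bf_nonneg hy.1)

lemma Af_mono {γ : ℝ} (hγ : 0 ≤ γ) : Monotone (Af m γ) := by
  intro x₁ x₂ h12
  refine setIntegral_mono_set (Bf_intOn hm hmint hγ x₂) ?_
    ((Set.Ioc_subset_Ioc_right h12).eventuallyLE)
  filter_upwards [ae_restrict_mem measurableSet_Ioc] with y hy using Bf_nonneg hy.1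

lemma Af_le {γ x : ℝ} (hγ : 0 ≤ γ) (hx : 0 ≤ x) : Af m γ x ≤ Cf m γ * Cf m x := by
  have h1 : Af m γ x ≤ ∫ y in Set.Ioc (0:ℝ) x, Cf m γ * mTail m y := by
    refine setIntegral_mono_on (Bf_intOn hm hmint hγ x)
      ((mTail_intOn hm hmint x).const_mul (Cf m γ)) measurableSet_Ioc (fun y hy => ?_)
    exact Bf_le hm hmint hγ hy.1
  rw [integral_const_mul] at h1
  rwa [Cf_eq hm hmint hx]

lemma Af_lb {γ u v b x : ℝ} (hu : 0 < u) (huv : u ≤ v) (hvb : v ≤ b) (hbγ : b ≤ γ)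
    (hvx : v ≤ x) :
    (v - u) * (Cf m v * (mTail m v - mTail m b)) ≤ Af m γ x := by
  have hγ : 0 ≤ γ := le_trans (le_trans (hu.le.trans huv) hvb) hbγ
  have h1 : ∫ y in Set.Ioc u v, Bf m γ y ≤ Af m γ x := by
    refine setIntegral_mono_set (Bf_intOn hm hmint hγ x) ?_
      ((Set.Ioc_subset_Ioc hu.le hvx).eventuallyLE)
    filter_upwards [ae_restrict_mem measurableSet_Ioc] with y hy using Bf_nonneg hy.1
  have h2 : (Cf m v * (mTail m v - mTail m b)) * (volume (Set.Ioc u v)).toReal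
      ≤ ∫ y in Set.Ioc u v, Bf m γ y := by
    refine setIntegral_ge_of_const_le_real measurableSet_Ioc (by simp [Real.volume_Ioc])
      (fun y hy => Bf_lb hm hmint (hu.trans hy.1) (hy.2.trans le_rfl) hvb hbγ)
      ((Bf_intOn hm hmint hγ x).mono_set (Set.Ioc_subset_Ioc hu.le hvx))
  have h3 : (volume (Set.Ioc u v)).toReal = v - u := by
    rw [Real.volume_Ioc, ENNReal.toReal_ofReal (by linarith)]
  rw [h3] at h2
  calc (v - u) * (Cf m v * (mTail m v - mTail m b))
      = (Cf m v * (mTail m v - mTail m b)) * (v - u) := by ring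
    _ ≤ ∫ y in Set.Ioc u v, Bf m γ y := h2
    _ ≤ Af m γ x := h1

variable (hj : ∀ x : ℝ, 0 < x → j (Set.Ioi x) < ⊤)
  (hjmint : ∫⁻ x in Set.Ioc (0:ℝ) 1,
      ENNReal.ofReal (∫ y in (0:ℝ)..x, mTail m y) ∂j < ⊤)
include hj hjmint

lemma Cf_intOn_j (γ : ℝ) : IntegrableOn (Cf m) (Set.Ioc (0:ℝ) γ) j := by
  have hone : IntegrableOn (Cf m) (Set.Ioc (0:ℝ) 1) j := by
    have hmeas : AEStronglyMeasurable (Cf m) (j.restrict (Set.Ioc (0:ℝ) 1)) :=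
      aesm_of_monotoneOn (Cf_mono hm hmint |>.mono (Set.Ioi_subset_Ici le_rfl)) j
        (fun x hx => hx.1) measurableSet_Ioc
    refine ⟨hmeas, ?_⟩
    rw [hasFiniteIntegral_iff_ofReal ?_]
    · exact hjmint
    · filter_upwards [ae_restrict_mem measurableSet_Ioc] with x hx using Cf_nonneg hx.1.le
  rcases le_or_gt γ 1 with h | h
  · exact hone.mono_set (Set.Ioc_subset_Ioc_right h)
  · have hu : Set.Ioc (0:ℝ) γ = Set.Ioc 0 1 ∪ Set.Ioc 1 γ :=
      (Set.Ioc_union_Ioc_eq_Ioc (by norm_num) h.le).symm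
    rw [hu]
    refine hone.union ?_
    have hmeas : AEStronglyMeasurable (Cf m) (j.restrict (Set.Ioc (1:ℝ) γ)) :=
      aesm_of_monotoneOn (Cf_mono hm hmint |>.mono (Set.Ioi_subset_Ici le_rfl)) j
        (fun x hx => lt_trans one_pos hx.1) measurableSet_Ioc
    refine Integrable.mono' (g := fun _ => Cf m γ) ?_ hmeas ?_
    · refine integrableOn_const (ne_of_lt ?_)
      exact lt_of_le_of_lt (measure_mono Set.Ioc_subset_Ioi_self) (hj 1 one_pos)
    · filter_upwards [ae_restrict_mem measurableSet_Ioc] with x hx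
      rw [Real.norm_eq_abs, abs_of_nonneg (Cf_nonneg (le_of_lt (lt_trans one_pos hx.1)))]
      exact Cf_mono hm hmint (Set.mem_Ici.2 (le_of_lt (lt_trans one_pos hx.1)))
        (Set.mem_Ici.2 (le_of_lt (lt_trans one_pos (hx.1.trans_le hx.2)))) hx.2

lemma Af_intOn_j {γ : ℝ} (hγ : 0 ≤ γ) : IntegrableOn (Af m γ) (Set.Ioc (0:ℝ) γ) j := by
  have hmeas : AEStronglyMeasurable (Af m γ) (j.restrict (Set.Ioc (0:ℝ) γ)) :=
    ((Af_mono hm hmint hγ).measurable).aestronglyMeasurable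
  refine Integrable.mono' (g := fun x => Cf m γ * Cf m x) ?_ hmeas ?_
  · exact (Cf_intOn_j hm hmint hj hjmint γ).const_mul (Cf m γ)
  · filter_upwards [ae_restrict_mem measurableSet_Ioc] with x hx
    rw [Real.norm_eq_abs, abs_of_nonneg (Af_nonneg γ x)]
    exact Af_le hm hmint hγ hx.1.le

end Asec

section Asymp
open Real

lemma ratio_comp {f ℓ : ℝ → ℝ} {c p : ℝ} (hc : c ≠ 0)
    (hl : Tendsto (fun x => f x / (c * x ^ p * ℓ x)) atTop (nhds 1))
    (hsv : SlowlyVarying ℓ) (hℓpos : ∀ x : ℝ, 0 < x → 0 < ℓ x)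
    {a : ℝ} (ha : 0 < a) :
    Tendsto (fun γ => f (a * γ) / (γ ^ p * ℓ γ)) atTop (nhds (c * a ^ p)) := by
  have hcomp : Tendsto (fun γ : ℝ => a * γ) atTop atTop :=
    Tendsto.const_mul_atTop ha tendsto_id
  have h1 : Tendsto (fun γ => f (a * γ) / (c * (a * γ) ^ p * ℓ (a * γ))) atTop (nhds 1) :=
    hl.comp hcomp
  have h2 := hsv a ha
  have h3 : Tendsto (fun γ => (f (a * γ) / (c * (a * γ) ^ p * ℓ (a * γ)))
      * (ℓ (a * γ) / ℓ γ) * (c * a ^ p)) atTop (nhds (1 * 1 * (c * a ^ p))) :=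
    (h1.mul h2).mul_const _
  rw [show (1:ℝ) * 1 * (c * a ^ p) = c * a ^ p by ring] at h3
  refine h3.congr' ?_
  filter_upwards [eventually_gt_atTop (0:ℝ)] with γ hγ
  have hℓ1 : ℓ (a * γ) ≠ 0 := (hℓpos _ (mul_pos ha hγ)).ne'
  have hℓ2 : ℓ γ ≠ 0 := (hℓpos _ hγ).ne'
  have hγp : (γ:ℝ) ^ p ≠ 0 := (Real.rpow_pos_of_pos hγ p).ne'
  have hap : (a:ℝ) ^ p ≠ 0 := (Real.rpow_pos_of_pos ha p).ne'
  rw [Real.mul_rpow ha.le hγ.le]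
  field_simp

lemma ratio_drop {f ℓ : ℝ → ℝ} {c p : ℝ} (hc : c ≠ 0)
    (hl : Tendsto (fun x => f x / (c * x ^ p * ℓ x)) atTop (nhds 1))
    (hsv : SlowlyVarying ℓ) (hℓpos : ∀ x : ℝ, 0 < x → 0 < ℓ x)
    {a b : ℝ} (ha : 0 < a) (hb : 0 < b) :
    Tendsto (fun γ => (f (a * γ) - f (b * γ)) / (γ ^ p * ℓ γ)) atTop
      (nhds (c * a ^ p - c * b ^ p)) := by
  have := (ratio_comp hc hl hsv hℓpos ha).sub (ratio_comp hc hl hsv hℓpos hb)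
  exact this.congr (fun γ => (sub_div _ _ _).symm)

lemma ev_lb {g ℓ : ℝ → ℝ} {p κ : ℝ} (hκ : 0 < κ)
    (h : Tendsto (fun γ => g γ / (γ ^ p * ℓ γ)) atTop (nhds κ))
    (hℓpos : ∀ x : ℝ, 0 < x → 0 < ℓ x) :
    ∀ᶠ γ in atTop, κ / 2 * (γ ^ p * ℓ γ) ≤ g γ := by
  have h2 : ∀ᶠ γ in atTop, κ / 2 < g γ / (γ ^ p * ℓ γ) :=
    h.eventually_const_lt (half_lt_self hκ)
  filter_upwards [h2, eventually_gt_atTop (0:ℝ)] with γ hr hγ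
  have hpos : 0 < γ ^ p * ℓ γ := mul_pos (Real.rpow_pos_of_pos hγ p) (hℓpos γ hγ)
  exact (le_div_iff₀ hpos).mp hr.le

end Asymp

lemma rpow_cancel {x p q : ℝ} (hx : 0 < x) (hpq : 2 + 2*p + q = 0) :
    x * x * (x ^ p * x ^ p * x ^ q) = 1 := by
  rw [show (x * x * (x ^ p * x ^ p * x ^ q))
      = x ^ (1:ℝ) * (x ^ (1:ℝ) * (x ^ p * (x ^ p * x ^ q))) by rw [Real.rpow_one]; ring,
    ← Real.rpow_add hx, ← Real.rpow_add hx, ← Real.rpow_add hx, ← Real.rpow_add hx,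
    show (1:ℝ) + (1 + (p + (p + q))) = 0 by linarith, Real.rpow_zero]

lemma P_const {p q cα u : ℝ} (hpq : 2 + 2*p + q = 0) (hu : 0 < u) :
    u * (u * ((cα * (2*u) ^ p) / 2)) * ((cα * (2*u) ^ p - cα * (4*u) ^ p) / 2)
      * ((1 * (4*u) ^ q - 1 * (8*u) ^ q) / 2)
    = ((cα * (2:ℝ) ^ p) / 2) * ((cα * (2:ℝ) ^ p - cα * (4:ℝ) ^ p) / 2)
      * ((1 * (4:ℝ) ^ q - 1 * (8:ℝ) ^ q) / 2) := by
  have hcan := rpow_cancel hu hpq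
  rw [Real.mul_rpow (by norm_num : (0:ℝ) ≤ 2) hu.le,
      Real.mul_rpow (by norm_num : (0:ℝ) ≤ 4) hu.le,
      Real.mul_rpow (by norm_num : (0:ℝ) ≤ 4) hu.le,
      Real.mul_rpow (by norm_num : (0:ℝ) ≤ 8) hu.le]
  linear_combination (((cα * (2:ℝ) ^ p) / 2) * ((cα * (2:ℝ) ^ p - cα * (4:ℝ) ^ p) / 2)
      * ((1 * (4:ℝ) ^ q - 1 * (8:ℝ) ^ q) / 2)) * hcan

set_option maxHeartbeats 1000000 in
lemma block_ev {K L : ℝ → ℝ} {m j : MeasureTheory.Measure ℝ} {p q cα : ℝ}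
    (hKpos : ∀ x : ℝ, 0 < x → 0 < K x) (hLpos : ∀ x : ℝ, 0 < x → 0 < L x)
    (hKsv : SlowlyVarying K) (hLsv : SlowlyVarying L)
    (hm : ∀ x : ℝ, 0 < x → m (Set.Ioi x) < ⊤)
    (hj : ∀ x : ℝ, 0 < x → j (Set.Ioi x) < ⊤)
    (hmint : MeasureTheory.IntegrableOn (mTail m) (Set.Ioc (0:ℝ) 1) MeasureTheory.volume)
    (hjmint : ∫⁻ x in Set.Ioc (0:ℝ) 1,
        ENNReal.ofReal (∫ y in (0:ℝ)..x, mTail m y) ∂j < ⊤)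
    (hp : p < 0) (hq : q < 0) (hcα : 0 < cα) (hpq : 2 + 2*p + q = 0)
    (hmasymp : Tendsto (fun x : ℝ => mTail m x / (cα * x ^ p * K x)) atTop (nhds 1))
    (hjasymp : Tendsto (fun x : ℝ => mTail j x / (1 * x ^ q * L x)) atTop (nhds 1))
    {u : ℝ} (hu : 0 < u) (hu8 : 8 * u ≤ 1) :
    ∀ᶠ γ in atTop,
      (u * (u * ((cα * (2*u) ^ p) / 2)) * ((cα * (2*u) ^ p - cα * (4*u) ^ p) / 2)
        * ((1 * (4*u) ^ q - 1 * (8*u) ^ q) / 2)) * ((K γ) ^ 2 * L γ)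
      ≤ ∫ x in Set.Ioc (4*u*γ) (8*u*γ), Af m γ x ∂j := by
  have h2u : (0:ℝ) < 2*u := by linarith
  have h4u : (0:ℝ) < 4*u := by linarith
  have h8u : (0:ℝ) < 8*u := by linarith
  have hκ1 : 0 < cα * (2*u) ^ p := mul_pos hcα (Real.rpow_pos_of_pos h2u p)
  have hκ2 : 0 < cα * (2*u) ^ p - cα * (4*u) ^ p := by
    have := Real.rpow_lt_rpow_of_neg h2u (by linarith : 2*u < 4*u) hp
    nlinarith
  have hκ3 : 0 < 1 * (4*u) ^ q - 1 * (8*u) ^ q := by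
    have := Real.rpow_lt_rpow_of_neg h4u (by linarith : 4*u < 8*u) hq
    nlinarith
  have hE1 := ev_lb hκ1 (ratio_comp hcα.ne' hmasymp hKsv hKpos h2u) hKpos
  have hE2 := ev_lb hκ2 (ratio_drop hcα.ne' hmasymp hKsv hKpos h2u h4u) hKpos
  have hE3 := ev_lb hκ3 (ratio_drop one_ne_zero hjasymp hLsv hLpos h4u h8u) hLpos
  filter_upwards [hE1, hE2, hE3, eventually_gt_atTop (0:ℝ)] with γ h1 h2 h3 hγ
  have hKγ : 0 < K γ := hKpos γ hγ
  have hLγ : 0 < L γ := hLpos γ hγ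
  have huγ : 0 < u * γ := mul_pos hu hγ
  have h2uγ : 0 < 2*u*γ := by nlinarith
  have h4uγ : 0 < 4*u*γ := by nlinarith
  have h8uγ : 0 < 8*u*γ := by nlinarith
  have hbγ : 4*u*γ ≤ γ := by nlinarith
  have h8γ : 8*u*γ ≤ γ := by nlinarith
  have hslice : (j (Set.Ioc (4*u*γ) (8*u*γ))).toReal = mTail j (4*u*γ) - mTail j (8*u*γ) :=
    mTail_slice hj h4uγ (by nlinarith)
  have hcst : ((2*u*γ - u*γ) * (Cf m (2*u*γ) * (mTail m (2*u*γ) - mTail m (4*u*γ))))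
      * (j (Set.Ioc (4*u*γ) (8*u*γ))).toReal
      ≤ ∫ x in Set.Ioc (4*u*γ) (8*u*γ), Af m γ x ∂j := by
    refine setIntegral_ge_of_const_le_real measurableSet_Ioc
      (ne_top_of_le_ne_top (hj _ h4uγ).ne (measure_mono Set.Ioc_subset_Ioi_self))
      (fun x hx => Af_lb hm hmint huγ (by nlinarith) (by nlinarith) hbγ
        (le_trans (by nlinarith) hx.1.le))
      ((Af_intOn_j hm hmint hj hjmint hγ.le).mono_set
        (Set.Ioc_subset_Ioc h4uγ.le h8γ))
  have hCf : (u*γ) * ((cα * (2*u) ^ p) / 2 * (γ ^ p * K γ)) ≤ Cf m (2*u*γ) := by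
    have hz := Cf_lb hm hmint h2uγ
    nlinarith [mTail_nonneg m (2*u*γ)]
  have hCf0 : 0 ≤ Cf m (2*u*γ) := Cf_nonneg h2uγ.le
  have hΔm0 : 0 ≤ mTail m (2*u*γ) - mTail m (4*u*γ) := sub_nonneg.2
    (mTail_anti hm (Set.mem_Ioi.2 h2uγ) (Set.mem_Ioi.2 h4uγ) (by nlinarith))
  have hγp : 0 < (γ:ℝ) ^ p := Real.rpow_pos_of_pos hγ p
  have hγq : 0 < (γ:ℝ) ^ q := Real.rpow_pos_of_pos hγ q
  have hl3 : 0 ≤ (cα * (2*u) ^ p - cα * (4*u) ^ p) / 2 * (γ ^ p * K γ) := by positivity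
  have hl4 : 0 ≤ (1 * (4*u) ^ q - 1 * (8*u) ^ q) / 2 * (γ ^ q * L γ) := by positivity
  have step1 : ((u*γ) * ((cα * (2*u) ^ p) / 2 * (γ ^ p * K γ)))
      * ((cα * (2*u) ^ p - cα * (4*u) ^ p) / 2 * (γ ^ p * K γ))
      ≤ Cf m (2*u*γ) * (mTail m (2*u*γ) - mTail m (4*u*γ)) :=
    mul_le_mul hCf h2 hl3 hCf0
  have step2 := mul_le_mul_of_nonneg_left step1 huγ.le
  have step3 : ((u*γ) * (((u*γ) * ((cα * (2*u) ^ p) / 2 * (γ ^ p * K γ)))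
        * ((cα * (2*u) ^ p - cα * (4*u) ^ p) / 2 * (γ ^ p * K γ))))
      * ((1 * (4*u) ^ q - 1 * (8*u) ^ q) / 2 * (γ ^ q * L γ))
      ≤ ((u*γ) * (Cf m (2*u*γ) * (mTail m (2*u*γ) - mTail m (4*u*γ))))
        * (mTail j (4*u*γ) - mTail j (8*u*γ)) :=
    mul_le_mul step2 h3 hl4 (mul_nonneg huγ.le (mul_nonneg hCf0 hΔm0))
  have hγcan := rpow_cancel hγ hpq
  calc (u * (u * ((cα * (2*u) ^ p) / 2)) * ((cα * (2*u) ^ p - cα * (4*u) ^ p) / 2)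
        * ((1 * (4*u) ^ q - 1 * (8*u) ^ q) / 2)) * ((K γ) ^ 2 * L γ)
      = ((u*γ) * (((u*γ) * ((cα * (2*u) ^ p) / 2 * (γ ^ p * K γ)))
          * ((cα * (2*u) ^ p - cα * (4*u) ^ p) / 2 * (γ ^ p * K γ))))
        * ((1 * (4*u) ^ q - 1 * (8*u) ^ q) / 2 * (γ ^ q * L γ)) := by
        rw [show (u * (u * ((cα * (2*u) ^ p) / 2)) * ((cα * (2*u) ^ p - cα * (4*u) ^ p) / 2)
          * ((1 * (4*u) ^ q - 1 * (8*u) ^ q) / 2)) * ((K γ) ^ 2 * L γ)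
          = (u * (u * ((cα * (2*u) ^ p) / 2)) * ((cα * (2*u) ^ p - cα * (4*u) ^ p) / 2)
          * ((1 * (4*u) ^ q - 1 * (8*u) ^ q) / 2)) * ((K γ) ^ 2 * L γ)
          * (γ * γ * (γ ^ p * γ ^ p * γ ^ q)) by rw [hγcan, mul_one]]
        ring
    _ ≤ ((u*γ) * (Cf m (2*u*γ) * (mTail m (2*u*γ) - mTail m (4*u*γ))))
        * (mTail j (4*u*γ) - mTail j (8*u*γ)) := step3
    _ = ((2*u*γ - u*γ) * (Cf m (2*u*γ) * (mTail m (2*u*γ) - mTail m (4*u*γ))))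
        * (j (Set.Ioc (4*u*γ) (8*u*γ))).toReal := by rw [hslice]; ring
    _ ≤ ∫ x in Set.Ioc (4*u*γ) (8*u*γ), Af m γ x ∂j := hcst

set_option maxHeartbeats 2000000 in
theorem stmt19 (α : ℝ) (hα : 2 ≤ α) (K L : ℝ → ℝ)
    (hKmeas : Measurable K) (hLmeas : Measurable L)
    (hKpos : ∀ x : ℝ, 0 < x → 0 < K x) (hLpos : ∀ x : ℝ, 0 < x → 0 < L x)
    (hKsv : SlowlyVarying K) (hLsv : SlowlyVarying L)
    (m j : Measure ℝ)
    (hmfin : ∀ x : ℝ, 0 < x → m (Set.Ioi x) < ⊤)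
    (hjfin : ∀ x : ℝ, 0 < x → j (Set.Ioi x) < ⊤)
    (hmint : IntegrableOn (mTail m) (Set.Ioc (0:ℝ) 1) MeasureTheory.volume)
    (hjint : ∫⁻ x in Set.Ioc (0:ℝ) 1, ENNReal.ofReal x ∂j < ⊤)
    (hjmint : ∫⁻ x in Set.Ioc (0:ℝ) 1,
        ENNReal.ofReal (∫ y in (0:ℝ)..x, mTail m y) ∂j < ⊤)
    (hmasymp : Tendsto (fun x : ℝ => mTail m x / ((α - 1)⁻¹ * x ^ (1 / α - 1) * K x))
      atTop (nhds 1))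
    (hjasymp : Tendsto (fun x : ℝ => mTail j x / (x ^ (-(2 / α)) * L x))
      atTop (nhds 1))
    (hNinf : Tendsto (NN m j) atTop atTop) :
    Tendsto (fun γ => K γ ^ 2 * L γ / NN m j γ) atTop (nhds 0) := by
  have hα0 : (0:ℝ) < α := by linarith
  have hα1 : (1:ℝ) < α := by linarith
  have hcα : 0 < (α - 1)⁻¹ := inv_pos.2 (by linarith)
  have hp : 1 / α - 1 < 0 := by
    have h1 : 1 / α < 1 := by rw [div_lt_one hα0]; exact hα1
    linarith
  have hq : -(2 / α) < 0 := by
    have h1 : 0 < 2 / α := by positivity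
    linarith
  have hpq : 2 + 2 * (1 / α - 1) + (-(2 / α)) = 0 := by field_simp; ring
  have hjasymp' : Tendsto (fun x : ℝ => mTail j x / (1 * x ^ (-(2 / α)) * L x))
      atTop (nhds 1) := hjasymp.congr (fun x => by rw [one_mul])
  set κ : ℝ := (((α - 1)⁻¹ * (2:ℝ) ^ (1 / α - 1)) / 2)
      * (((α - 1)⁻¹ * (2:ℝ) ^ (1 / α - 1) - (α - 1)⁻¹ * (4:ℝ) ^ (1 / α - 1)) / 2)
      * ((1 * (4:ℝ) ^ (-(2 / α)) - 1 * (8:ℝ) ^ (-(2 / α))) / 2) with hκdef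
  have hκpos : 0 < κ := by
    have h24 : ((4:ℝ)) ^ (1 / α - 1) < (2:ℝ) ^ (1 / α - 1) :=
      Real.rpow_lt_rpow_of_neg (by norm_num) (by norm_num) hp
    have h48 : ((8:ℝ)) ^ (-(2 / α)) < (4:ℝ) ^ (-(2 / α)) :=
      Real.rpow_lt_rpow_of_neg (by norm_num) (by norm_num) hq
    have b1 : 0 < (α - 1)⁻¹ * (2:ℝ) ^ (1 / α - 1) :=
      mul_pos hcα (Real.rpow_pos_of_pos two_pos _)
    rw [hκdef]
    refine mul_pos (mul_pos (by linarith) ?_) ?_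
    · nlinarith
    · nlinarith
  rw [Metric.tendsto_nhds]
  intro ε hε
  obtain ⟨M, hM⟩ := exists_nat_gt (1 / (ε * κ))
  have hMpos : 0 < (M:ℝ) := lt_trans (by positivity) hM
  set u : ℕ → ℝ := fun k => (2:ℝ) ^ (-3 * (k:ℝ) - 3) with hudef
  have hupos : ∀ k, 0 < u k := fun k => Real.rpow_pos_of_pos two_pos _
  have h8rw : ∀ k : ℕ, 8 * u k = (2:ℝ) ^ (-3 * (k:ℝ)) := by
    intro k
    have h8 : (8:ℝ) = (2:ℝ) ^ ((3:ℝ)) := by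
      rw [show ((3:ℝ)) = ((3:ℕ):ℝ) by norm_num, Real.rpow_natCast]; norm_num
    rw [hudef]
    calc 8 * (2:ℝ) ^ (-3 * (k:ℝ) - 3) = (2:ℝ) ^ ((3:ℝ)) * (2:ℝ) ^ (-3 * (k:ℝ) - 3) := by
          rw [← h8]
      _ = (2:ℝ) ^ ((3:ℝ) + (-3 * (k:ℝ) - 3)) := (Real.rpow_add two_pos _ _).symm
      _ = (2:ℝ) ^ (-3 * (k:ℝ)) := by ring_nf
  have h4rw : ∀ k : ℕ, 4 * u k = (2:ℝ) ^ (-3 * (k:ℝ) - 1) := by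
    intro k
    have h4 : (4:ℝ) = (2:ℝ) ^ ((2:ℝ)) := by
      rw [show ((2:ℝ)) = ((2:ℕ):ℝ) by norm_num, Real.rpow_natCast]; norm_num
    rw [hudef]
    calc 4 * (2:ℝ) ^ (-3 * (k:ℝ) - 3) = (2:ℝ) ^ ((2:ℝ)) * (2:ℝ) ^ (-3 * (k:ℝ) - 3) := by
          rw [← h4]
      _ = (2:ℝ) ^ ((2:ℝ) + (-3 * (k:ℝ) - 3)) := (Real.rpow_add two_pos _ _).symm
      _ = (2:ℝ) ^ (-3 * (k:ℝ) - 1) := by ring_nf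
  have hu8 : ∀ k : ℕ, 8 * u k ≤ 1 := by
    intro k
    rw [h8rw k]
    calc (2:ℝ) ^ (-3 * (k:ℝ)) ≤ (2:ℝ) ^ (0:ℝ) :=
          Real.rpow_le_rpow_of_exponent_le one_le_two
            (by nlinarith [Nat.cast_nonneg (α := ℝ) k])
      _ = 1 := Real.rpow_zero 2
  have hblocks : ∀ k ∈ Finset.range M, ∀ᶠ γ in atTop,
      κ * ((K γ) ^ 2 * L γ) ≤ ∫ x in Set.Ioc (4 * u k * γ) (8 * u k * γ), Af m γ x ∂j := by
    intro k _
    have hb := block_ev hKpos hLpos hKsv hLsv hmfin hjfin hmint hjmint hp hq hcα hpq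
      hmasymp hjasymp' (hupos k) (hu8 k)
    refine hb.mono (fun γ h => ?_)
    refine le_trans (le_of_eq ?_) h
    congr 1
    rw [hκdef]
    exact (P_const hpq (hupos k)).symm
  have hev := (Filter.eventually_all_finset (Finset.range M)).2 hblocks
  filter_upwards [hev, eventually_gt_atTop (0:ℝ)] with γ hbl hγ
  have hKγ : 0 < K γ := hKpos γ hγ
  have hLγ : 0 < L γ := hLpos γ hγ
  have hKKL : 0 < (K γ) ^ 2 * L γ := by positivity
  have hNN : NN m j γ = ∫ x in Set.Ioc (0:ℝ) γ, Af m γ x ∂j := by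
    rw [NN]
    refine setIntegral_congr_fun measurableSet_Ioc (fun x hx => ?_)
    rw [intervalIntegral.integral_of_le hx.1.le]
    rfl
  have hkey : ∀ a b : ℕ, a < b → 8 * u b ≤ 4 * u a := by
    intro a b hab
    rw [h8rw b, h4rw a]
    refine Real.rpow_le_rpow_of_exponent_le one_le_two ?_
    have : (a:ℝ) + 1 ≤ (b:ℝ) := by exact_mod_cast Nat.succ_le_of_lt hab
    linarith
  have hdisj : (↑(Finset.range M) : Set ℕ).Pairwise
      (Function.onFun Disjoint (fun k => Set.Ioc (4 * u k * γ) (8 * u k * γ))) := by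
    intro k _ l _ hkl
    rcases hkl.lt_or_gt with h | h
    · refine Set.Ioc_disjoint_Ioc.2 ?_
      refine le_trans (min_le_right _ _) (le_trans ?_ (le_max_left _ _))
      nlinarith [hkey k l h]
    · refine Set.Ioc_disjoint_Ioc.2 ?_
      refine le_trans (min_le_left _ _) (le_trans ?_ (le_max_right _ _))
      nlinarith [hkey l k h]
  have hsub : (⋃ k ∈ Finset.range M, Set.Ioc (4 * u k * γ) (8 * u k * γ)) ⊆ Set.Ioc (0:ℝ) γ := by
    refine Set.iUnion₂_subset (fun k _ => ?_)
    refine Set.Ioc_subset_Ioc ?_ ?_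
    · nlinarith [hupos k]
    · nlinarith [hu8 k, hupos k]
  have hAint := Af_intOn_j hmfin hmint hjfin hjmint hγ.le
  have hintk : ∀ k ∈ Finset.range M,
      IntegrableOn (Af m γ) (Set.Ioc (4 * u k * γ) (8 * u k * γ)) j := by
    intro k hk
    exact hAint.mono_set (fun x hx => hsub (Set.mem_biUnion hk hx))
  have hbiU := integral_biUnion_finset (μ := j) (f := Af m γ) (Finset.range M)
    (fun k _ => measurableSet_Ioc) hdisj hintk
  have hmono : ∫ x in (⋃ k ∈ Finset.range M, Set.Ioc (4 * u k * γ) (8 * u k * γ)),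
      Af m γ x ∂j ≤ ∫ x in Set.Ioc (0:ℝ) γ, Af m γ x ∂j := by
    refine setIntegral_mono_set hAint ?_ hsub.eventuallyLE
    filter_upwards with x using Af_nonneg _ _
  have hsum : (M:ℝ) * (κ * ((K γ) ^ 2 * L γ)) ≤ NN m j γ := by
    rw [hNN]
    calc (M:ℝ) * (κ * ((K γ) ^ 2 * L γ))
        = ∑ _k ∈ Finset.range M, κ * ((K γ) ^ 2 * L γ) := by
          rw [Finset.sum_const, Finset.card_range, nsmul_eq_mul]
      _ ≤ ∑ k ∈ Finset.range M,
            ∫ x in Set.Ioc (4 * u k * γ) (8 * u k * γ), Af m γ x ∂j :=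
          Finset.sum_le_sum (fun k hk => hbl k hk)
      _ = ∫ x in (⋃ k ∈ Finset.range M, Set.Ioc (4 * u k * γ) (8 * u k * γ)),
            Af m γ x ∂j := hbiU.symm
      _ ≤ ∫ x in Set.Ioc (0:ℝ) γ, Af m γ x ∂j := hmono
  have hNpos : 0 < NN m j γ := lt_of_lt_of_le (by positivity) hsum
  rw [Real.dist_eq, sub_zero, abs_of_nonneg (div_nonneg (by positivity) hNpos.le)]
  rw [div_lt_iff₀ hNpos]
  have hstep : (1 / (ε * κ)) * (κ * ((K γ) ^ 2 * L γ)) < (M:ℝ) * (κ * ((K γ) ^ 2 * L γ)) :=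
    mul_lt_mul_of_pos_right hM (by positivity)
  have hexp : (1 / (ε * κ)) * (κ * ((K γ) ^ 2 * L γ)) = ((K γ) ^ 2 * L γ) / ε := by
    field_simp
  have h1 : ((K γ) ^ 2 * L γ) / ε < NN m j γ := by
    rw [← hexp]; exact lt_of_lt_of_le hstep hsum
  rw [div_lt_iff₀ hε] at h1
  linarith
end
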